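/- arXiv:2308.01767 — 4 statements merged into one kernel-verified Lean document; each statement's English description precedes it below -/
import Mathlib

section
/- For every n ≥ 1, the set eNNC_{2n}, partially ordered by refinement (P ≤ Q if and only if every block of P is contained in some block of Q), is a lattice: any two elements have a least upper bound and a greatest lower bound in eNNC_{2n}. -/
/-! Non-exhaustive non-crossing partitions. For `m ≥ 1` we write `[m] = {1, …, m}`,
realised as `Set.Icc 1 m ⊆ ℕ`. -/

/-- `P` is a non-exhaustive non-crossing partition of `[m]`: a collection of pairwise
disjoint nonempty subsets of `[m]` (blocks) such that whenever `i < k < j < l` with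
`i, j` in a block `B` and `k, l` in a block `B'`, then `B = B'`. -/
def IsNNC (m : ℕ) (P : Set (Set ℕ)) : Prop :=
  (∀ B ∈ P, B.Nonempty ∧ B ⊆ Set.Icc 1 m) ∧
  (∀ B ∈ P, ∀ B' ∈ P, B ≠ B' → Disjoint B B') ∧
  (∀ B ∈ P, ∀ B' ∈ P, ∀ i k j l : ℕ, i < k → k < j → j < l →
    i ∈ B → j ∈ B → k ∈ B' → l ∈ B' → B = B')

/-- `P` is an even-exclusive non-exhaustive non-crossing partition of `[m]`: an element
of `NNC_m` having no singleton block `{i}` with `i` even. -/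
def IsENNC (m : ℕ) (P : Set (Set ℕ)) : Prop :=
  IsNNC m P ∧ ∀ i : ℕ, Even i → ({i} : Set ℕ) ∉ P

/-- `P` refines `Q`: every block of `P` is contained in some block of `Q`. -/
def Refines (P Q : Set (Set ℕ)) : Prop :=
  ∀ B ∈ P, ∃ B' ∈ Q, B ⊆ B'

lemma refines_trans {P Q R : Set (Set ℕ)} (h1 : Refines P Q) (h2 : Refines Q R) :
    Refines P R := by
  intro B hB
  obtain ⟨C, hC, hBC⟩ := h1 B hB
  obtain ⟨D, hD, hCD⟩ := h2 C hC
  exact ⟨D, hD, hBC.trans hCD⟩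

/-- The meet of two partitions: nonempty intersections of blocks, with even
singletons removed. -/
def meetSet (P Q : Set (Set ℕ)) : Set (Set ℕ) :=
  {S | S.Nonempty ∧ (∀ i : ℕ, Even i → S ≠ {i}) ∧ ∃ B ∈ P, ∃ B' ∈ Q, S = B ∩ B'}

lemma meetSet_isENNC {m : ℕ} {P Q : Set (Set ℕ)} (hP : IsENNC m P) (hQ : IsENNC m Q) :
    IsENNC m (meetSet P Q) := by
  refine ⟨⟨?_, ?_, ?_⟩, ?_⟩
  · rintro S ⟨hne, -, B, hB, B', hB', rfl⟩
    exact ⟨hne, Set.inter_subset_left.trans (hP.1.1 B hB).2⟩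
  · rintro S ⟨-, -, B, hB, B', hB', rfl⟩ T ⟨-, -, C, hC, C', hC', rfl⟩ hne
    rw [Set.disjoint_left]
    intro x hxS hxT
    have hBC : B = C := by
      by_contra h
      exact (Set.disjoint_left.mp (hP.1.2.1 B hB C hC h)) hxS.1 hxT.1
    have hBC' : B' = C' := by
      by_contra h
      exact (Set.disjoint_left.mp (hQ.1.2.1 B' hB' C' hC' h)) hxS.2 hxT.2
    exact hne (by rw [hBC, hBC'])
  · rintro S ⟨-, -, B, hB, B', hB', rfl⟩ T ⟨-, -, C, hC, C', hC', rfl⟩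
      i k j l h1 h2 h3 hi hj hk hl
    have e1 : B = C := hP.1.2.2 B hB C hC i k j l h1 h2 h3 hi.1 hj.1 hk.1 hl.1
    have e2 : B' = C' := hQ.1.2.2 B' hB' C' hC' i k j l h1 h2 h3 hi.2 hj.2 hk.2 hl.2
    rw [e1, e2]
  · intro i hi hmem
    exact hmem.2.1 i hi rfl

lemma meetSet_refines_left {P Q : Set (Set ℕ)} : Refines (meetSet P Q) P := by
  rintro S ⟨-, -, B, hB, B', hB', rfl⟩
  exact ⟨B, hB, Set.inter_subset_left⟩

lemma meetSet_refines_right {P Q : Set (Set ℕ)} : Refines (meetSet P Q) Q := by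
  rintro S ⟨-, -, B, hB, B', hB', rfl⟩
  exact ⟨B', hB', Set.inter_subset_right⟩

lemma refines_meetSet {m : ℕ} {P Q R : Set (Set ℕ)} (hR : IsENNC m R)
    (h1 : Refines R P) (h2 : Refines R Q) : Refines R (meetSet P Q) := by
  intro B hB
  obtain ⟨C, hC, hBC⟩ := h1 B hB
  obtain ⟨C', hC', hBC'⟩ := h2 B hB
  have hBne : B.Nonempty := (hR.1.1 B hB).1
  have hsub : B ⊆ C ∩ C' := Set.subset_inter hBC hBC'
  refine ⟨C ∩ C', ⟨hBne.mono hsub, ?_, C, hC, C', hC', rfl⟩, hsub⟩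
  intro i hi hEq
  have hBi : B = {i} := by
    have hs : B ⊆ {i} := by rw [← hEq]; exact hsub
    rcases Set.subset_singleton_iff_eq.mp hs with h | h
    · exact absurd h hBne.ne_empty
    · exact h
  exact hR.2 i hi (hBi ▸ hB)

lemma refines_antisymm {m : ℕ} {P Q : Set (Set ℕ)} (hP : IsENNC m P) (hQ : IsENNC m Q)
    (h1 : Refines P Q) (h2 : Refines Q P) : P = Q := by
  have key : ∀ (A B : Set (Set ℕ)), IsENNC m A → IsENNC m B →
      Refines A B → Refines B A → A ⊆ B := by
    intro A B hA hB hab hba S hS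
    obtain ⟨T, hT, hST⟩ := hab S hS
    obtain ⟨U, hU, hTU⟩ := hba T hT
    obtain ⟨x, hx⟩ := (hA.1.1 S hS).1
    have hSU : S = U := by
      by_contra h
      exact Set.disjoint_left.mp (hA.1.2.1 S hS U hU h) hx (hTU (hST hx))
    have hSTeq : S = T := by
      apply Set.Subset.antisymm hST
      rw [hSU]; exact hTU
    rw [hSTeq]; exact hT
  exact Set.Subset.antisymm (key P Q hP hQ h1 h2) (key Q P hQ hP h2 h1)

/-- A finite nonempty set with a transitive relation that is antisymmetric on the set
has a minimal element. -/
lemma exists_minimal_finset {α : Type*} (r : α → α → Prop)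
    (htrans : ∀ a b c, r a b → r b c → r a c) :
    ∀ s : Finset α, s.Nonempty →
      (∀ a ∈ s, ∀ b ∈ s, r a b → r b a → a = b) →
      ∃ a ∈ s, ∀ b ∈ s, r b a → b = a := by
  classical
  intro s
  induction s using Finset.strongInduction with
  | _ s ih =>
    intro hs hanti
    obtain ⟨a, ha⟩ := hs
    by_cases h : ∃ b ∈ s, r b a ∧ b ≠ a
    · obtain ⟨b0, hb0, hrb0, hne0⟩ := h
      set t := s.filter (fun b => r b a ∧ b ≠ a) with ht
      have hsub : t ⊆ s := Finset.filter_subset _ _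
      have hts : t ⊂ s := by
        rw [Finset.ssubset_iff_of_subset hsub]
        exact ⟨a, ha, by simp [ht]⟩
      have htne : t.Nonempty := ⟨b0, by simp [ht, hb0, hrb0, hne0]⟩
      obtain ⟨c, hct, hcmin⟩ := ih t hts htne
        (fun x hx y hy => hanti x (hsub hx) y (hsub hy))
      have hct' := Finset.mem_filter.mp hct
      refine ⟨c, hsub hct, ?_⟩
      intro b hb hrb
      have hrba : r b a := htrans b c a hrb hct'.2.1
      have hbne : b ≠ a := fun heq =>
        hct'.2.2 (hanti c (hsub hct) a ha hct'.2.1 (heq ▸ hrb))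
      exact hcmin b (Finset.mem_filter.mpr ⟨hb, hrba, hbne⟩) hrb
    · push_neg at h
      exact ⟨a, ha, fun b hb hrb => h b hb hrb⟩

/-- part of Theorem 4.12 of the paper: for every `n ≥ 1`, the set
`eNNC_{2n}`, partially ordered by refinement, is a lattice: any two of its elements have
a least upper bound and a greatest lower bound in `eNNC_{2n}`. -/
theorem eNNC_is_lattice (n : ℕ) (hn : 1 ≤ n)
    (P Q : Set (Set ℕ)) (hP : IsENNC (2 * n) P) (hQ : IsENNC (2 * n) Q) :
    (∃ J : Set (Set ℕ), IsENNC (2 * n) J ∧ Refines P J ∧ Refines Q J ∧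
      ∀ R : Set (Set ℕ), IsENNC (2 * n) R → Refines P R → Refines Q R → Refines J R) ∧
    (∃ M : Set (Set ℕ), IsENNC (2 * n) M ∧ Refines M P ∧ Refines M Q ∧
      ∀ R : Set (Set ℕ), IsENNC (2 * n) R → Refines R P → Refines R Q → Refines R M) := by
  classical
  -- The top element: the single block `[2n]`.
  have h1mem : (1 : ℕ) ∈ Set.Icc 1 (2 * n) := Set.mem_Icc.mpr ⟨le_rfl, by omega⟩
  have h2mem : (2 : ℕ) ∈ Set.Icc 1 (2 * n) := Set.mem_Icc.mpr ⟨by omega, by omega⟩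
  set T : Set (Set ℕ) := {Set.Icc 1 (2 * n)} with hTdef
  have hTennc : IsENNC (2 * n) T := by
    refine ⟨⟨?_, ?_, ?_⟩, ?_⟩
    · intro B hB
      rw [Set.mem_singleton_iff] at hB
      subst hB
      exact ⟨⟨1, h1mem⟩, subset_rfl⟩
    · intro B hB B' hB' hne
      rw [Set.mem_singleton_iff] at hB hB'
      exact absurd (hB.trans hB'.symm) hne
    · intro B hB B' hB' i k j l _ _ _ _ _ _ _
      rw [Set.mem_singleton_iff] at hB hB'
      rw [hB, hB']
    · intro i _ hmem
      rw [Set.mem_singleton_iff] at hmem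
      have e1 : (1 : ℕ) ∈ ({i} : Set ℕ) := by rw [hmem]; exact h1mem
      have e2 : (2 : ℕ) ∈ ({i} : Set ℕ) := by rw [hmem]; exact h2mem
      rw [Set.mem_singleton_iff] at e1 e2
      omega
  have refT : ∀ R : Set (Set ℕ), IsENNC (2 * n) R → Refines R T := by
    intro R hR B hB
    exact ⟨Set.Icc 1 (2 * n), rfl, (hR.1.1 B hB).2⟩
  -- The set of common upper bounds is finite and nonempty.
  set S : Set (Set (Set ℕ)) :=
    {R | IsENNC (2 * n) R ∧ Refines P R ∧ Refines Q R} with hSdef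
  have hSfin : S.Finite := by
    apply Set.Finite.subset ((Set.finite_Icc 1 (2 * n)).powerset.powerset)
    intro R hR
    rw [Set.mem_powerset_iff]
    intro B hB
    rw [Set.mem_powerset_iff]
    exact (hR.1.1.1 B hB).2
  have hTS : T ∈ S := ⟨hTennc, refT P hP, refT Q hQ⟩
  have htne : hSfin.toFinset.Nonempty := ⟨T, hSfin.mem_toFinset.mpr hTS⟩
  obtain ⟨J, hJt, hJmin⟩ := exists_minimal_finset Refines
    (fun _ _ _ h1 h2 => refines_trans h1 h2) hSfin.toFinset htne
    (fun a ha b hb h1 h2 =>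
      refines_antisymm (hSfin.mem_toFinset.mp ha).1 (hSfin.mem_toFinset.mp hb).1 h1 h2)
  have hJS : J ∈ S := hSfin.mem_toFinset.mp hJt
  constructor
  · -- Join: a minimal common upper bound is the least one.
    refine ⟨J, hJS.1, hJS.2.1, hJS.2.2, ?_⟩
    intro R hR hPR hQR
    have hMS : meetSet J R ∈ S :=
      ⟨meetSet_isENNC hJS.1 hR,
       refines_meetSet hP hJS.2.1 hPR, refines_meetSet hQ hJS.2.2 hQR⟩
    have hMJ : meetSet J R = J :=
      hJmin _ (hSfin.mem_toFinset.mpr hMS) meetSet_refines_left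
    have h := meetSet_refines_right (P := J) (Q := R)
    rwa [hMJ] at h
  · -- Meet: explicit construction.
    exact ⟨meetSet P Q, meetSet_isENNC hP hQ, meetSet_refines_left, meetSet_refines_right,
      fun R hR hr1 hr2 => refines_meetSet hR hr1 hr2⟩
end

section
/- Let n ≥ 2. Every finite set S of arcs of M̄_n which is connected, has complete orbit and is minimal has homological length at most 2n−2. (Equivalently, via the correspondence between such sets of arcs and minimal strong generators of the Paquette–Yıldırım category C̄_n: no minimal strong generator of C̄_n has homological length greater than 2n−2, whence the Orlov spectrum of C̄_n is contained in {1,…,2n−2}.) -/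
/-! Combinatorial model of the Paquette–Yıldırım completed cluster category `C̄ₙ`.

The set of marked points `M̄ₙ` consists of the marked points `(k, i)` (the `k`-th marked
point of the `i`-th segment, for `i : Fin n`) together with the accumulation points
(indexed by `Fin n`; `Sum.inr i` is the accumulation point `a_{i+1}` of the paper). -/

/-- The marked points of `M̄ₙ`: `Sum.inl (k, i)` is a marked point of a segment,
`Sum.inr i` is an accumulation point. -/
abbrev MbarPt (n : ℕ) := (ℤ × Fin n) ⊕ Fin n

/-- The injection of `M̄ₙ` into the circle `ℝ/nℤ`, given by representatives in `[0, n)`: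
the accumulation point `i` goes to `i`, and the marked point `(k, i)` goes to
`i + 1/2 + k/(2(|k|+1))`. -/
noncomputable def toCircle {n : ℕ} : MbarPt n → ℝ
  | Sum.inl (k, i) => (i : ℝ) + 1 / 2 + (k : ℝ) / (2 * (|(k : ℝ)| + 1))
  | Sum.inr i => (i : ℝ)

/-- `y` lies strictly between `x` and `z` in the cyclic order on `M̄ₙ` (going
counterclockwise from `x` to `z`), expressed via the representatives in `[0, n)`. -/
def CycSBtw {n : ℕ} (x y z : MbarPt n) : Prop :=
  (toCircle x < toCircle y ∧ toCircle y < toCircle z) ∨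
  (toCircle y < toCircle z ∧ toCircle z < toCircle x) ∨
  (toCircle z < toCircle x ∧ toCircle x < toCircle y)

/-- An arc of `M̄ₙ` is an unordered pair of distinct points of `M̄ₙ` which is not a pair
of consecutive marked points `{(k,i), (k+1,i)}` of a segment. -/
def IsArc {n : ℕ} (p : Sym2 (MbarPt n)) : Prop :=
  ¬ p.IsDiag ∧ ∀ (k : ℤ) (i : Fin n),
    p ≠ s(Sum.inl (k, i), Sum.inl (k + 1, i))

/-- The `m`-fold clockwise rotation of a point: marked points `(k, i)` move to `(k - m, i)`,
accumulation points are fixed. -/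
def rotPt {n : ℕ} (m : ℤ) : MbarPt n → MbarPt n
  | Sum.inl (k, i) => Sum.inl (k - m, i)
  | Sum.inr i => Sum.inr i

/-- The `m`-fold clockwise rotation `ℓ⟦m⟧` of an arc. -/
def rotArc {n : ℕ} (m : ℤ) (p : Sym2 (MbarPt n)) : Sym2 (MbarPt n) :=
  Sym2.map (rotPt m) p

/-- `p` and `q` are rotations of one another. -/
def SameRot {n : ℕ} (p q : Sym2 (MbarPt n)) : Prop :=
  ∃ m : ℤ, p = rotArc m q

/-- The rotation closure `R(S)` of a set of arcs `S`. -/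
def RClos {n : ℕ} (S : Set (Sym2 (MbarPt n))) : Set (Sym2 (MbarPt n)) :=
  {q | ∃ p ∈ S, ∃ m : ℤ, q = rotArc m p}

/-- Two arcs cross if their endpoints alternate in the cyclic order: exactly one
endpoint of one lies strictly between the two endpoints of the other. -/
def Crosses {n : ℕ} (p q : Sym2 (MbarPt n)) : Prop :=
  ∃ x y z w : MbarPt n, p = s(x, y) ∧ q = s(z, w) ∧ CycSBtw x z y ∧ CycSBtw y w x

/-- Adjacency `ℓ ~ ℓ'` of arcs: they cross, or they are distinct and share an endpoint
which is an accumulation point. -/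
def Adj {n : ℕ} (p q : Sym2 (MbarPt n)) : Prop :=
  Crosses p q ∨ (p ≠ q ∧ ∃ i : Fin n, (Sum.inr i : MbarPt n) ∈ p ∧ (Sum.inr i : MbarPt n) ∈ q)

/-- Paths of length `m` in the graph with vertex set `T` and edge relation `Adj`. -/
def AdjChain {n : ℕ} (T : Set (Sym2 (MbarPt n))) : ℕ → Sym2 (MbarPt n) → Sym2 (MbarPt n) → Prop
  | 0, p, q => p = q
  | m + 1, p, q => ∃ r ∈ T, Adj p r ∧ AdjChain T m r q

/-- `S` is connected: the graph with vertex set `R(S)` and edge relation `~` is connected. -/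
def ConnectedArcs {n : ℕ} (S : Set (Sym2 (MbarPt n))) : Prop :=
  ∀ p ∈ RClos S, ∀ q ∈ RClos S, ∃ m : ℕ, AdjChain (RClos S) m p q

/-- `S` has complete orbit: every point of `M̄ₙ` is an endpoint of some arc of `R(S)`. -/
def CompleteOrbit {n : ℕ} (S : Set (Sym2 (MbarPt n))) : Prop :=
  ∀ x : MbarPt n, ∃ p ∈ RClos S, x ∈ p

/-- `S` is minimal: removing any arc of `S` destroys connectedness or completeness of orbit. -/
def MinimalArcSet {n : ℕ} (S : Set (Sym2 (MbarPt n))) : Prop :=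
  ∀ ℓ ∈ S, ¬ (ConnectedArcs (S \ {ℓ}) ∧ CompleteOrbit (S \ {ℓ}))

/-- The homological length of (a connected) `S` is at most `d`: any two vertices of
`R(S)` are joined by a `~`-path of length at most `d`. -/
def HLenLE {n : ℕ} (S : Set (Sym2 (MbarPt n))) (d : ℕ) : Prop :=
  ∀ p ∈ RClos S, ∀ q ∈ RClos S, ∃ m ≤ d, AdjChain (RClos S) m p q

/-- The homological length of (a connected) `S` is exactly `d`: every pair of vertices of
`R(S)` is joined by a path of length `≤ d`, and some pair admits no path of length `< d`. -/
def HLenEq {n : ℕ} (S : Set (Sym2 (MbarPt n))) (d : ℕ) : Prop :=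
  HLenLE S d ∧ ∃ p ∈ RClos S, ∃ q ∈ RClos S, ∀ m < d, ¬ AdjChain (RClos S) m p q

namespace PY

variable {n : ℕ}

/-! ### Layer 0: the linear order underlying `toCircle` -/

private lemma fr_pos (k : ℤ) : (0:ℝ) < 2*(|(k:ℝ)|+1) := by positivity

lemma fr_lt (k : ℤ) : (k:ℝ)/(2*(|(k:ℝ)|+1)) < 1/2 := by
  rw [div_lt_iff₀ (fr_pos k)]
  have h2 : (k:ℝ) ≤ |(k:ℝ)| := le_abs_self _
  nlinarith [abs_nonneg (k:ℝ)]

lemma fr_gt (k : ℤ) : -(1/2) < (k:ℝ)/(2*(|(k:ℝ)|+1)) := by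
  rw [lt_div_iff₀ (fr_pos k)]
  have h2 : -(k:ℝ) ≤ |(k:ℝ)| := neg_le_abs _
  nlinarith [abs_nonneg (k:ℝ)]

lemma fr_mono {k l : ℤ} (h : k < l) : (k:ℝ)/(2*(|(k:ℝ)|+1)) < (l:ℝ)/(2*(|(l:ℝ)|+1)) := by
  rw [div_lt_div_iff₀ (fr_pos k) (fr_pos l)]
  have hkl : (k:ℝ) < l := by exact_mod_cast h
  rcases abs_cases (k:ℝ) with ⟨hk1,hk2⟩|⟨hk1,hk2⟩ <;>
    rcases abs_cases (l:ℝ) with ⟨hl1,hl2⟩|⟨hl1,hl2⟩ <;> rw [hk1, hl1] <;> nlinarith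

lemma tc_m (k : ℤ) (i : Fin n) :
    toCircle (Sum.inl (k,i) : MbarPt n) = (i:ℝ) + 1/2 + (k:ℝ)/(2*(|(k:ℝ)|+1)) := rfl

lemma tc_a (u : Fin n) : toCircle (Sum.inr u : MbarPt n) = (u:ℝ) := rfl

lemma fin_cast_lt {i j : Fin n} : (i:ℝ) < (j:ℝ) ↔ i.1 < j.1 := by
  constructor
  · intro h; by_contra hc; push_neg at hc
    have : (j:ℝ) ≤ (i:ℝ) := by exact_mod_cast hc
    linarith
  · intro h; exact_mod_cast h

lemma fin_cast_le {i j : Fin n} : (i:ℝ) ≤ (j:ℝ) ↔ i.1 ≤ j.1 := by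
  constructor
  · intro h; by_contra hc; push_neg at hc
    have : (j:ℝ) < (i:ℝ) := by exact_mod_cast hc
    linarith
  · intro h; exact_mod_cast h

/-- marked-marked comparison -/
lemma lt_mm {k l : ℤ} {i j : Fin n} :
    toCircle (Sum.inl (k,i) : MbarPt n) < toCircle (Sum.inl (l,j)) ↔
      (i.1 < j.1 ∨ (i = j ∧ k < l)) := by
  rw [tc_m, tc_m]
  constructor
  · intro h
    rcases lt_trichotomy i.1 j.1 with hc|hc|hc
    · exact Or.inl hc
    · have hij : i = j := Fin.ext hc
      subst hij
      refine Or.inr ⟨rfl, ?_⟩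
      by_contra hkl; push_neg at hkl
      rcases eq_or_lt_of_le hkl with he|hl'
      · subst he; linarith
      · have := fr_mono hl'; linarith
    · have : (j:ℝ) < (i:ℝ) := fin_cast_lt.2 hc
      have b1 := fr_gt k; have b2 := fr_lt l
      have : (j:ℝ) + 1 ≤ (i:ℝ) := by
        have : (j.1:ℝ) + 1 ≤ (i.1:ℝ) := by exact_mod_cast hc
        convert this using 2 <;> simp
      linarith
  · rintro (h|⟨rfl,h⟩)
    · have h1 : (i:ℝ) + 1 ≤ (j:ℝ) := by
        have : (i.1:ℝ) + 1 ≤ (j.1:ℝ) := by exact_mod_cast h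
        convert this using 2 <;> simp
      have b1 := fr_lt k; have b2 := fr_gt l
      linarith
    · have := fr_mono h; linarith

/-- acc-marked comparison -/
lemma lt_am {u : Fin n} {k : ℤ} {i : Fin n} :
    toCircle (Sum.inr u : MbarPt n) < toCircle (Sum.inl (k,i)) ↔ u.1 ≤ i.1 := by
  rw [tc_a, tc_m]
  constructor
  · intro h
    by_contra hc; push_neg at hc
    have h1 : (i:ℝ) + 1 ≤ (u:ℝ) := by
      have : (i.1:ℝ) + 1 ≤ (u.1:ℝ) := by exact_mod_cast hc
      convert this using 2 <;> simp
    have b := fr_lt k; linarith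
  · intro h
    have h1 : (u:ℝ) ≤ (i:ℝ) := fin_cast_le.2 h
    have b := fr_gt k; linarith

/-- marked-acc comparison -/
lemma lt_ma {k : ℤ} {i : Fin n} {u : Fin n} :
    toCircle (Sum.inl (k,i) : MbarPt n) < toCircle (Sum.inr u) ↔ i.1 < u.1 := by
  rw [tc_a, tc_m]
  constructor
  · intro h
    by_contra hc; push_neg at hc
    have h1 : (u:ℝ) ≤ (i:ℝ) := fin_cast_le.2 hc
    have b := fr_gt k; linarith
  · intro h
    have h1 : (i:ℝ) + 1 ≤ (u:ℝ) := by
      have : (i.1:ℝ) + 1 ≤ (u.1:ℝ) := by exact_mod_cast h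
      convert this using 2 <;> simp
    have b := fr_lt k; linarith

/-- acc-acc comparison -/
lemma lt_aa {u v : Fin n} :
    toCircle (Sum.inr u : MbarPt n) < toCircle (Sum.inr v) ↔ u.1 < v.1 := by
  rw [tc_a, tc_a]; exact fin_cast_lt

end PY
namespace PY

variable {n : ℕ}

/-! ### Layer 1: slot codes, injectivity, crossing toolkit, rotations -/

/-- slot code: accumulation point `u` ↦ `2u`, marked point of segment `i` ↦ `2i+1`. -/
def sc : MbarPt n → ℕ
  | Sum.inl (_, i) => 2*i.1+1
  | Sum.inr u => 2*u.1

lemma sc_lt_bound (x : MbarPt n) : sc x < 2*n := by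
  cases x with
  | inl p => obtain ⟨k, i⟩ := p; have := i.2; simp only [sc]; omega
  | inr u => have := u.2; simp only [sc]; omega

lemma tc_lt_of_sc {x y : MbarPt n} (h : sc x < sc y) : toCircle x < toCircle y := by
  cases x with
  | inl p =>
    obtain ⟨k, i⟩ := p
    cases y with
    | inl p' => obtain ⟨l, j⟩ := p'
                exact lt_mm.2 (Or.inl (by simp only [sc] at h; omega))
    | inr u => exact lt_ma.2 (by simp only [sc] at h; omega)
  | inr u =>
    cases y with
    | inl p' => obtain ⟨l, j⟩ := p'
                exact lt_am.2 (by simp only [sc] at h; omega)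
    | inr v => exact lt_aa.2 (by simp only [sc] at h; omega)

lemma sc_le_of_tc {x y : MbarPt n} (h : toCircle x < toCircle y) : sc x ≤ sc y := by
  cases x with
  | inl p =>
    obtain ⟨k, i⟩ := p
    cases y with
    | inl p' => obtain ⟨l, j⟩ := p'
                rcases lt_mm.1 h with h'|⟨rfl,_⟩ <;> simp only [sc] <;> omega
    | inr u => have := lt_ma.1 h; simp only [sc]; omega
  | inr u =>
    cases y with
    | inl p' => obtain ⟨l, j⟩ := p'
                have := lt_am.1 h; simp only [sc]; omega
    | inr v => have := lt_aa.1 h; simp only [sc]; omega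

lemma tc_inj {x y : MbarPt n} (h : toCircle x = toCircle y) : x = y := by
  cases x with
  | inl p =>
    obtain ⟨k, i⟩ := p
    cases y with
    | inl p' =>
      obtain ⟨l, j⟩ := p'
      have h1 : ¬ (i.1 < j.1 ∨ (i = j ∧ k < l)) := fun hc => absurd (lt_mm.2 hc) (by rw [h]; exact lt_irrefl _)
      have h2 : ¬ (j.1 < i.1 ∨ (j = i ∧ l < k)) := fun hc => absurd (lt_mm.2 hc) (by rw [h]; exact lt_irrefl _)
      push_neg at h1 h2
      have hij : i = j := Fin.ext (by omega)
      subst hij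
      have := h1.2 rfl; have := h2.2 rfl
      have : k = l := by omega
      subst this; rfl
    | inr u =>
      exfalso
      have h1 : ¬ i.1 < u.1 := fun hc => absurd (lt_ma.2 hc) (by rw [h]; exact lt_irrefl _)
      have h2 : ¬ u.1 ≤ i.1 := fun hc => absurd (lt_am.2 hc) (by rw [h]; exact lt_irrefl _)
      omega
  | inr u =>
    cases y with
    | inl p' =>
      obtain ⟨l, j⟩ := p'
      exfalso
      have h1 : ¬ u.1 ≤ j.1 := fun hc => absurd (lt_am.2 hc) (by rw [h]; exact lt_irrefl _)
      have h2 : ¬ j.1 < u.1 := fun hc => absurd (lt_ma.2 hc) (by rw [h]; exact lt_irrefl _)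
      omega
    | inr v =>
      have h1 : ¬ u.1 < v.1 := fun hc => absurd (lt_aa.2 hc) (by rw [h]; exact lt_irrefl _)
      have h2 : ¬ v.1 < u.1 := fun hc => absurd (lt_aa.2 hc) (by rw [h]; exact lt_irrefl _)
      have : u = v := Fin.ext (by omega)
      rw [this]

lemma tc_trichotomy {x y : MbarPt n} (h : x ≠ y) :
    toCircle x < toCircle y ∨ toCircle y < toCircle x := by
  rcases lt_trichotomy (toCircle x) (toCircle y) with h'|h'|h'
  · exact Or.inl h'
  · exact absurd (tc_inj h') h
  · exact Or.inr h'

/-! crossing toolkit -/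

lemma crosses_of {x y z w : MbarPt n} (h1 : toCircle x < toCircle z)
    (h2 : toCircle z < toCircle y)
    (h3 : toCircle w < toCircle x ∨ toCircle y < toCircle w) :
    Crosses s(x,y) s(z,w) := by
  refine ⟨x,y,z,w, rfl, rfl, Or.inl ⟨h1,h2⟩, ?_⟩
  rcases h3 with h|h
  · exact Or.inr (Or.inl ⟨h, h1.trans h2⟩)
  · exact Or.inr (Or.inr ⟨h1.trans h2, h⟩)

lemma crosses_elim {x y : MbarPt n} {q : Sym2 (MbarPt n)}
    (hxy : toCircle x < toCircle y) (h : Crosses s(x,y) q) :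
    ∃ z w, q = s(z,w) ∧ toCircle x < toCircle z ∧ toCircle z < toCircle y ∧
      (toCircle w < toCircle x ∨ toCircle y < toCircle w) := by
  obtain ⟨x',y',z,w,hp,hq,c1,c2⟩ := h
  unfold CycSBtw at c1 c2
  rw [Sym2.eq_iff] at hp
  rcases hp with ⟨hx,hy⟩|⟨hx,hy⟩
  · subst hx; subst hy
    refine ⟨z, w, hq, ?_, ?_, ?_⟩
    · rcases c1 with ⟨a,b⟩|⟨a,b⟩|⟨a,b⟩ <;> linarith
    · rcases c1 with ⟨a,b⟩|⟨a,b⟩|⟨a,b⟩ <;> linarith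
    · rcases c2 with ⟨a,b⟩|⟨a,b⟩|⟨a,b⟩
      · linarith
      · exact Or.inl a
      · exact Or.inr b
  · subst hx; subst hy
    refine ⟨w, z, by rw [hq, Sym2.eq_swap], ?_, ?_, ?_⟩
    · rcases c2 with ⟨a,b⟩|⟨a,b⟩|⟨a,b⟩ <;> linarith
    · rcases c2 with ⟨a,b⟩|⟨a,b⟩|⟨a,b⟩ <;> linarith
    · rcases c1 with ⟨a,b⟩|⟨a,b⟩|⟨a,b⟩
      · linarith
      · exact Or.inl a
      · exact Or.inr b

lemma crosses_symm {p q : Sym2 (MbarPt n)} (h : Crosses p q) : Crosses q p := by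
  obtain ⟨x,y,z,w,hp,hq,c1,c2⟩ := h
  subst hp; subst hq
  have h' : Crosses s(x,y) s(z,w) := ⟨x,y,z,w,rfl,rfl,c1,c2⟩
  rcases lt_trichotomy (toCircle x) (toCircle y) with hxy|hxy|hxy
  · obtain ⟨z',w',hq,h1,h2,h3⟩ := crosses_elim hxy h'
    rw [hq]
    rcases h3 with h3|h3
    · have : Crosses s(w',z') s(x,y) :=
        crosses_of h3 h1 (Or.inr h2)
      rwa [Sym2.eq_swap (a := w')] at this
    · have : Crosses s(z',w') s(y,x) :=
        crosses_of h2 h3 (Or.inl h1)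
      rwa [Sym2.eq_swap (a := y)] at this
  · exfalso
    unfold CycSBtw at c1
    rcases c1 with ⟨a,b⟩|⟨a,b⟩|⟨a,b⟩ <;> linarith
  · rw [Sym2.eq_swap (a := x)] at h'
    obtain ⟨z',w',hq,h1,h2,h3⟩ := crosses_elim hxy h'
    rw [hq]
    rcases h3 with h3|h3
    · have : Crosses s(w',z') s(y,x) :=
        crosses_of h3 h1 (Or.inr h2)
      rwa [Sym2.eq_swap (a := w'), Sym2.eq_swap (a := y)] at this
    · exact crosses_of h2 h3 (Or.inl h1)

lemma adj_symm {p q : Sym2 (MbarPt n)} (h : Adj p q) : Adj q p := by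
  rcases h with h|⟨hne,u,h1,h2⟩
  · exact Or.inl (crosses_symm h)
  · exact Or.inr ⟨hne.symm, u, h2, h1⟩

/-! rotations -/

lemma rotArc_mk (m : ℤ) (a b : MbarPt n) :
    rotArc m s(a,b) = s(rotPt m a, rotPt m b) := rfl

lemma rotPt_acc (m : ℤ) (u : Fin n) : rotPt m (Sum.inr u : MbarPt n) = Sum.inr u := rfl

lemma rotPt_m (m k : ℤ) (i : Fin n) :
    rotPt m (Sum.inl (k,i) : MbarPt n) = Sum.inl (k-m, i) := rfl

lemma rotPt_comp (m m' : ℤ) (x : MbarPt n) : rotPt m (rotPt m' x) = rotPt (m+m') x := by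
  cases x with
  | inl p => obtain ⟨k,i⟩ := p; simp only [rotPt, Sum.inl.injEq, Prod.mk.injEq]
             exact ⟨by omega, trivial⟩
  | inr u => rfl

lemma rotPt_zero (x : MbarPt n) : rotPt 0 x = x := by
  cases x with
  | inl p => obtain ⟨k,i⟩ := p; simp [rotPt]
  | inr u => rfl

lemma rotArc_comp (m m' : ℤ) (p : Sym2 (MbarPt n)) :
    rotArc m (rotArc m' p) = rotArc (m+m') p := by
  induction p using Sym2.ind with
  | _ a b => simp only [rotArc_mk, rotArc, Sym2.map_pair_eq, rotPt_comp]

lemma rotArc_zero (p : Sym2 (MbarPt n)) : rotArc 0 p = p := by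
  induction p using Sym2.ind with
  | _ a b => simp only [rotArc, Sym2.map_pair_eq, rotPt_zero]

lemma rotPt_inj (m : ℤ) : Function.Injective (rotPt (n := n) m) := by
  intro x y h
  cases x with
  | inl p => obtain ⟨k,i⟩ := p
             cases y with
             | inl p' => obtain ⟨l,j⟩ := p'
                         simp only [rotPt, Sum.inl.injEq, Prod.mk.injEq] at h
                         obtain ⟨h1, h2⟩ := h
                         simp only [Sum.inl.injEq, Prod.mk.injEq]
                         exact ⟨by omega, h2⟩
             | inr u => simp [rotPt] at h
  | inr u => cases y with
             | inl p' => obtain ⟨l,j⟩ := p'; simp [rotPt] at h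
             | inr v => exact h

lemma sc_rotPt (m : ℤ) (x : MbarPt n) : sc (rotPt m x) = sc x := by
  cases x with
  | inl p => obtain ⟨k,i⟩ := p; rfl
  | inr u => rfl

end PY
namespace PY

variable {n : ℕ}

/-! ### Layer 2: families of rotations, slots -/

/-- The rotation family of an arc. -/
def Fam (ℓ : Sym2 (MbarPt n)) : Set (Sym2 (MbarPt n)) := {q | ∃ m : ℤ, q = rotArc m ℓ}

lemma Fam_self (ℓ : Sym2 (MbarPt n)) : ℓ ∈ Fam ℓ := ⟨0, (rotArc_zero ℓ).symm⟩

lemma rot_mem_Fam {ℓ q : Sym2 (MbarPt n)} (h : q ∈ Fam ℓ) (m : ℤ) : rotArc m q ∈ Fam ℓ := by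
  obtain ⟨m', rfl⟩ := h
  exact ⟨m + m', rotArc_comp m m' ℓ⟩

lemma mem_RClos_iff {S : Set (Sym2 (MbarPt n))} {q : Sym2 (MbarPt n)} :
    q ∈ RClos S ↔ ∃ ℓ ∈ S, q ∈ Fam ℓ := Iff.rfl

lemma Fam_trans {ℓ1 ℓ2 q : Sym2 (MbarPt n)} (h1 : q ∈ Fam ℓ1) (h2 : q ∈ Fam ℓ2) :
    ℓ2 ∈ Fam ℓ1 := by
  obtain ⟨m, rfl⟩ := h1
  obtain ⟨m', hm'⟩ := h2
  have : rotArc (-m') (rotArc m ℓ1) = rotArc (-m') (rotArc m' ℓ2) := by rw [hm']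
  rw [rotArc_comp, rotArc_comp, neg_add_cancel, rotArc_zero] at this
  exact ⟨-m' + m, this.symm⟩

lemma Fam_symm {ℓ1 ℓ2 : Sym2 (MbarPt n)} (h : ℓ2 ∈ Fam ℓ1) : ℓ1 ∈ Fam ℓ2 := by
  obtain ⟨m, rfl⟩ := h
  exact ⟨-m, by rw [rotArc_comp, neg_add_cancel, rotArc_zero]⟩

lemma Fam_congr {ℓ1 ℓ2 q : Sym2 (MbarPt n)} (h : ℓ2 ∈ Fam ℓ1) (hq : q ∈ Fam ℓ2) :
    q ∈ Fam ℓ1 := by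
  obtain ⟨m, rfl⟩ := h
  obtain ⟨m', rfl⟩ := hq
  exact ⟨m' + m, (rotArc_comp m' m ℓ1)⟩

lemma isArc_rot {ℓ : Sym2 (MbarPt n)} (h : IsArc ℓ) (m : ℤ) : IsArc (rotArc m ℓ) := by
  induction ℓ using Sym2.ind with
  | _ a b =>
    constructor
    · rw [rotArc_mk, Sym2.mk_isDiag_iff]
      intro hc
      exact h.1 (Sym2.mk_isDiag_iff.2 (rotPt_inj m hc))
    · intro k i hc
      have : rotArc (-m) (rotArc m s(a,b)) = rotArc (-m) s(Sum.inl (k,i), Sum.inl (k+1,i)) := by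
        rw [hc]
      rw [rotArc_comp, neg_add_cancel, rotArc_zero, rotArc_mk] at this
      simp only [rotPt] at this
      refine h.2 (k - -m) i ?_
      rw [this]
      have he : k + 1 - -m = k - -m + 1 := by ring
      rw [he]

lemma isArc_of_Fam {ℓ q : Sym2 (MbarPt n)} (h : IsArc ℓ) (hq : q ∈ Fam ℓ) : IsArc q := by
  obtain ⟨m, rfl⟩ := hq; exact isArc_rot h m

lemma ordered_rep {p : Sym2 (MbarPt n)} (h : ¬ p.IsDiag) :
    ∃ a b, p = s(a,b) ∧ toCircle a < toCircle b := by
  induction p using Sym2.ind with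
  | _ a b =>
    have hne : a ≠ b := fun hc => h (Sym2.mk_isDiag_iff.2 hc)
    rcases tc_trichotomy hne with h'|h'
    · exact ⟨a, b, rfl, h'⟩
    · exact ⟨b, a, Sym2.eq_swap, h'⟩

/-- the lower slot of an arc -/
def slo (p : Sym2 (MbarPt n)) : ℕ :=
  Sym2.lift ⟨fun a b => min (sc a) (sc b), fun a b => min_comm _ _⟩ p

/-- the upper slot of an arc -/
def shi (p : Sym2 (MbarPt n)) : ℕ :=
  Sym2.lift ⟨fun a b => max (sc a) (sc b), fun a b => max_comm _ _⟩ p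

lemma slo_mk (a b : MbarPt n) : slo s(a,b) = min (sc a) (sc b) := rfl
lemma shi_mk (a b : MbarPt n) : shi s(a,b) = max (sc a) (sc b) := rfl

lemma slo_rot (m : ℤ) (p : Sym2 (MbarPt n)) : slo (rotArc m p) = slo p := by
  induction p using Sym2.ind with
  | _ a b => rw [rotArc_mk, slo_mk, slo_mk, sc_rotPt, sc_rotPt]

lemma shi_rot (m : ℤ) (p : Sym2 (MbarPt n)) : shi (rotArc m p) = shi p := by
  induction p using Sym2.ind with
  | _ a b => rw [rotArc_mk, shi_mk, shi_mk, sc_rotPt, sc_rotPt]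

lemma slo_Fam {ℓ q : Sym2 (MbarPt n)} (h : q ∈ Fam ℓ) : slo q = slo ℓ := by
  obtain ⟨m, rfl⟩ := h; exact slo_rot m ℓ

lemma shi_Fam {ℓ q : Sym2 (MbarPt n)} (h : q ∈ Fam ℓ) : shi q = shi ℓ := by
  obtain ⟨m, rfl⟩ := h; exact shi_rot m ℓ

lemma slo_ordered {a b : MbarPt n} (h : toCircle a < toCircle b) :
    slo s(a,b) = sc a ∧ shi s(a,b) = sc b := by
  have := sc_le_of_tc h
  rw [slo_mk, shi_mk]
  omega

lemma acc_mem_rot {u : Fin n} {ℓ : Sym2 (MbarPt n)} (h : (Sum.inr u : MbarPt n) ∈ ℓ) (m : ℤ) :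
    (Sum.inr u : MbarPt n) ∈ rotArc m ℓ := by
  induction ℓ using Sym2.ind with
  | _ a b =>
    rw [Sym2.mem_iff] at h
    rw [rotArc_mk, Sym2.mem_iff]
    rcases h with rfl|rfl
    · exact Or.inl rfl
    · exact Or.inr rfl

lemma acc_mem_of_mem_rot {u : Fin n} {ℓ q : Sym2 (MbarPt n)} (hq : q ∈ Fam ℓ)
    (h : (Sum.inr u : MbarPt n) ∈ q) : (Sum.inr u : MbarPt n) ∈ ℓ := by
  obtain ⟨m, rfl⟩ := hq
  induction ℓ using Sym2.ind with
  | _ a b =>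
    rw [rotArc_mk, Sym2.mem_iff] at h
    rw [Sym2.mem_iff]
    rcases h with h|h
    · left; cases a with
      | inl p => obtain ⟨k,i⟩ := p; simp [rotPt] at h
      | inr v => exact h
    · right; cases b with
      | inl p => obtain ⟨k,i⟩ := p; simp [rotPt] at h
      | inr v => exact h

end PY
namespace PY

variable {n : ℕ}

/-! ### Layer 3a: membership normal forms, basic step lemmas -/

lemma lt_mm_same {k l : ℤ} {i : Fin n} :
    toCircle (Sum.inl (k,i) : MbarPt n) < toCircle (Sum.inl (l,i)) ↔ k < l := by
  rw [lt_mm]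
  constructor
  · rintro (h|⟨_,h⟩)
    · omega
    · exact h
  · intro h; exact Or.inr ⟨rfl, h⟩

lemma adj_share {p q : Sym2 (MbarPt n)} (hne : p ≠ q) (u : Fin n)
    (h1 : (Sum.inr u : MbarPt n) ∈ p) (h2 : (Sum.inr u : MbarPt n) ∈ q) : Adj p q :=
  Or.inr ⟨hne, u, h1, h2⟩

lemma pencil_mem2 (c t : ℤ) (s : Fin n) (u : Fin n) :
    s(Sum.inl (t,s), Sum.inr u) ∈ Fam s(Sum.inl (c,s), (Sum.inr u : MbarPt n)) := by
  refine ⟨c - t, ?_⟩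
  rw [rotArc_mk, rotPt_acc]
  have h1 : rotPt (c - t) (Sum.inl (c, s) : MbarPt n) = Sum.inl (t, s) := by
    simp only [rotPt, Sum.inl.injEq, Prod.mk.injEq]; exact ⟨by omega, trivial⟩
  rw [h1]

lemma mm_mem2 (c : ℤ) (i : Fin n) (d : ℤ) (j : Fin n) {t t' : ℤ} (h : t' - t = d - c) :
    s(Sum.inl (t, i), Sum.inl (t', j)) ∈ Fam s(Sum.inl (c,i), (Sum.inl (d,j) : MbarPt n)) := by
  refine ⟨c - t, ?_⟩
  rw [rotArc_mk]
  have h1 : rotPt (c - t) (Sum.inl (c, i) : MbarPt n) = Sum.inl (t, i) := by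
    simp only [rotPt, Sum.inl.injEq, Prod.mk.injEq]; exact ⟨by omega, trivial⟩
  have h2 : rotPt (c - t) (Sum.inl (d, j) : MbarPt n) = Sum.inl (t', j) := by
    simp only [rotPt, Sum.inl.injEq, Prod.mk.injEq]; exact ⟨by omega, trivial⟩
  rw [h1, h2]

lemma Fam_aa_elim {u v : Fin n} {x : Sym2 (MbarPt n)}
    (h : x ∈ Fam s(Sum.inr u, (Sum.inr v : MbarPt n))) : x = s(Sum.inr u, Sum.inr v) := by
  obtain ⟨m, rfl⟩ := h
  rw [rotArc_mk, rotPt_acc, rotPt_acc]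

lemma Fam_pencil_elim {u : Fin n} {c : ℤ} {s : Fin n} {x : Sym2 (MbarPt n)}
    (h : x ∈ Fam s(Sum.inr u, (Sum.inl (c,s) : MbarPt n))) :
    ∃ t, x = s(Sum.inr u, Sum.inl (t, s)) := by
  obtain ⟨m, rfl⟩ := h
  exact ⟨c - m, by rw [rotArc_mk, rotPt_acc, rotPt_m]⟩

lemma Fam_mm_elim {c : ℤ} {i : Fin n} {d : ℤ} {j : Fin n} {x : Sym2 (MbarPt n)}
    (h : x ∈ Fam s(Sum.inl (c,i), (Sum.inl (d,j) : MbarPt n))) :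
    ∃ t t', t' - t = d - c ∧ x = s(Sum.inl (t,i), Sum.inl (t', j)) := by
  obtain ⟨m, rfl⟩ := h
  exact ⟨c - m, d - m, by omega, by rw [rotArc_mk, rotPt_m, rotPt_m]⟩

/-- canonical shapes for an arc with distinct slots -/
lemma shape_cases' {ℓ : Sym2 (MbarPt n)} (hd : ¬ ℓ.IsDiag) (hs : slo ℓ ≠ shi ℓ) :
    (∃ u v : Fin n, u.1 < v.1 ∧ ℓ = s(Sum.inr u, Sum.inr v)) ∨
    (∃ (u : Fin n) (c : ℤ) (s : Fin n), ℓ = s(Sum.inr u, Sum.inl (c, s))) ∨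
    (∃ (c : ℤ) (i : Fin n) (d : ℤ) (j : Fin n), i.1 < j.1 ∧
      ℓ = s(Sum.inl (c,i), Sum.inl (d,j))) := by
  induction ℓ using Sym2.ind with
  | _ a b =>
    rw [slo_mk, shi_mk] at hs
    have hab : sc a ≠ sc b := by omega
    cases a with
    | inl p =>
      obtain ⟨c, i⟩ := p
      cases b with
      | inl p' =>
        obtain ⟨d, j⟩ := p'
        simp only [sc] at hab
        rcases Nat.lt_or_ge i.1 j.1 with h'|h'
        · exact Or.inr (Or.inr ⟨c, i, d, j, h', rfl⟩)
        · exact Or.inr (Or.inr ⟨d, j, c, i, by omega, Sym2.eq_swap⟩)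
      | inr u => exact Or.inr (Or.inl ⟨u, c, i, Sym2.eq_swap⟩)
    | inr u =>
      cases b with
      | inl p' => obtain ⟨d, j⟩ := p'
                  exact Or.inr (Or.inl ⟨u, d, j, rfl⟩)
      | inr v =>
        simp only [sc] at hab
        rcases Nat.lt_or_ge u.1 v.1 with h'|h'
        · exact Or.inl ⟨u, v, h', rfl⟩
        · exact Or.inl ⟨v, u, by omega, Sym2.eq_swap⟩

/-- within one family: internal diameter at most 1 (for non-window arcs) -/
lemma internal_step {ℓ x y : Sym2 (MbarPt n)} (harc : IsArc ℓ) (hs : slo ℓ ≠ shi ℓ)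
    (hx : x ∈ Fam ℓ) (hy : y ∈ Fam ℓ) : x = y ∨ Adj x y := by
  rcases shape_cases' harc.1 hs with ⟨u,v,_,rfl⟩|⟨u,c,s,rfl⟩|⟨c,i,d,j,hij,rfl⟩
  · left; rw [Fam_aa_elim hx, Fam_aa_elim hy]
  · obtain ⟨t, rfl⟩ := Fam_pencil_elim hx
    obtain ⟨t', rfl⟩ := Fam_pencil_elim hy
    by_cases h : t = t'
    · left; rw [h]
    · right
      refine adj_share ?_ u (Sym2.mem_mk_left _ _) (Sym2.mem_mk_left _ _)
      intro hc
      rw [Sym2.eq_iff] at hc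
      rcases hc with ⟨_,hc2⟩|⟨hc1,_⟩
      · simp only [Sum.inl.injEq, Prod.mk.injEq] at hc2
        exact h hc2.1
      · exact absurd hc1 (by simp)
  · obtain ⟨t1, t1', he1, rfl⟩ := Fam_mm_elim hx
    obtain ⟨t2, t2', he2, rfl⟩ := Fam_mm_elim hy
    by_cases h : t1 = t2
    · left
      have h1 : t1' = t2' := by omega
      rw [h, h1]
    · right
      have hij' : toCircle (Sum.inl (t1,i) : MbarPt n) < toCircle (Sum.inl (t1', j)) :=
        lt_mm.2 (Or.inl hij)
      rcases Int.lt_or_lt_of_ne h with hlt|hlt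
      · -- t1 < t2 : the endpoint (t2', j) of y is inside? no: t2 > t1 : (t2,i) > (t1,i); check:
        -- z := (t2,i) inside (t1 < t2, slot i < j), w := (t2',j) with t1' < t2' outside above
        exact Or.inl (crosses_of (lt_mm_same.2 hlt) (lt_mm.2 (Or.inl hij))
          (Or.inr (lt_mm_same.2 (by omega))))
      · -- t2 < t1 : z := (t2', j) inside, w := (t2, i) below
        have : Crosses s(Sum.inl (t1,i), Sum.inl (t1',j))
            s(Sum.inl (t2',j), (Sum.inl (t2,i) : MbarPt n)) :=
          crosses_of (lt_mm.2 (Or.inl hij)) (lt_mm_same.2 (by omega))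
            (Or.inl (lt_mm_same.2 hlt))
        rw [Sym2.eq_swap (a := (Sum.inl (t2',j) : MbarPt n))] at this
        exact Or.inl this

/-- step across a shared accumulation point -/
lemma step_share_acc {ℓ1 ℓ2 x : Sym2 (MbarPt n)} {u : Fin n}
    (h1 : (Sum.inr u : MbarPt n) ∈ ℓ1) (h2 : (Sum.inr u : MbarPt n) ∈ ℓ2)
    (hx : x ∈ Fam ℓ1) (hne : ℓ2 ∉ Fam ℓ1) :
    ∃ y ∈ Fam ℓ2, Adj x y := by
  refine ⟨ℓ2, Fam_self _, adj_share ?_ u ?_ h2⟩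
  · intro hc; rw [hc] at hx; exact hne (Fam_symm (Fam_trans (Fam_self ℓ2) hx))
  · obtain ⟨m, rfl⟩ := hx; exact acc_mem_rot h1 m

/-- interleaving slot pairs: every member crosses every member -/
lemma step_itl {x y : Sym2 (MbarPt n)} (hdx : ¬x.IsDiag) (hdy : ¬y.IsDiag)
    (h : (slo x < slo y ∧ slo y < shi x ∧ shi x < shi y) ∨
         (slo y < slo x ∧ slo x < shi y ∧ shi y < shi x)) : Adj x y := by
  obtain ⟨x1, x2, rfl, hx12⟩ := ordered_rep hdx
  obtain ⟨y1, y2, rfl, hy12⟩ := ordered_rep hdy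
  obtain ⟨hsx1, hsx2⟩ := slo_ordered hx12
  obtain ⟨hsy1, hsy2⟩ := slo_ordered hy12
  rw [hsx1, hsx2, hsy1, hsy2] at h
  rcases h with ⟨a,b,c⟩|⟨a,b,c⟩
  · exact Or.inl (crosses_of (tc_lt_of_sc a) (tc_lt_of_sc b) (Or.inr (tc_lt_of_sc c)))
  · have : Crosses s(x1,x2) s(y2,y1) :=
      crosses_of (tc_lt_of_sc b) (tc_lt_of_sc c) (Or.inl (tc_lt_of_sc a))
    rw [Sym2.eq_swap (a := y2)] at this
    exact Or.inl this

end PY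
namespace PY

variable {n : ℕ}

/-! ### Layer 3b: the shared-segment step lemma -/

lemma next_inside {α : ℤ} {s : Fin n} {e : MbarPt n}
    (harc : IsArc s(Sum.inl (α,s), e))
    (h : toCircle (Sum.inl (α,s) : MbarPt n) < toCircle e) :
    toCircle (Sum.inl (α+1,s) : MbarPt n) < toCircle e := by
  cases e with
  | inl p =>
    obtain ⟨β, s'⟩ := p
    rcases lt_mm.1 h with h'|⟨rfl, h'⟩
    · exact lt_mm.2 (Or.inl h')
    · refine lt_mm.2 (Or.inr ⟨rfl, ?_⟩)
      have hne := harc.2 α s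
      by_contra hc
      push_neg at hc
      have : β = α + 1 := by omega
      subst this
      exact hne rfl
  | inr u => exact lt_ma.2 (lt_ma.1 h)

lemma prev_inside {α : ℤ} {s : Fin n} {e : MbarPt n}
    (harc : IsArc s(Sum.inl (α,s), e))
    (h : toCircle e < toCircle (Sum.inl (α,s) : MbarPt n)) :
    toCircle e < toCircle (Sum.inl (α-1,s) : MbarPt n) := by
  cases e with
  | inl p =>
    obtain ⟨β, s'⟩ := p
    rcases lt_mm.1 h with h'|⟨heq, h'⟩
    · exact lt_mm.2 (Or.inl h')
    · have heq2 : s = s' := heq.symm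
      subst heq2
      refine lt_mm.2 (Or.inr ⟨rfl, ?_⟩)
      have hne := harc.2 (α-1) s
      by_contra hc
      push_neg at hc
      have : β = α - 1 := by omega
      subst this
      have hα : (Sum.inl (α, s) : MbarPt n) = Sum.inl (α-1+1, s) := by
        simp only [Sum.inl.injEq, Prod.mk.injEq]; exact ⟨by omega, trivial⟩
      exact hne (by rw [Sym2.eq_iff]; exact Or.inr ⟨hα, rfl⟩)
  | inr u => exact lt_am.2 (lt_am.1 h)

lemma seg_rot_mem (c t : ℤ) (s : Fin n) (ξ : MbarPt n) :
    s(Sum.inl (t,s), rotPt (c-t) ξ) ∈ Fam s(Sum.inl (c,s), ξ) := by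
  refine ⟨c - t, ?_⟩
  rw [rotArc_mk, rotPt_m]
  have h1 : c - (c - t) = t := by omega
  rw [h1]

/-- **V5***: if `x` has an endpoint in segment `s` and `ℓ2` is a non-window arc with an
endpoint in segment `s`, then some member of the family of `ℓ2` is adjacent to `x`. -/
lemma step_share_seg {x ℓ2 : Sym2 (MbarPt n)} {s : Fin n} {α : ℤ} {e : MbarPt n}
    (hx : x = s(Sum.inl (α, s), e)) (harc : IsArc x)
    {c : ℤ} {ξ : MbarPt n} (hl2 : ℓ2 = s(Sum.inl (c, s), ξ)) (hξ : sc ξ ≠ 2*s.1+1) :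
    ∃ y ∈ Fam ℓ2, Adj x y := by
  subst hx; subst hl2
  have hPe : (Sum.inl (α, s) : MbarPt n) ≠ e := fun hc => harc.1 (Sym2.mk_isDiag_iff.2 hc)
  have hsx1 : sc (Sum.inl (α,s) : MbarPt n) = 2*s.1+1 := rfl
  by_cases hs2 : sc ξ = sc e
  · -- ξ in the same slot as the other endpoint of x
    cases ξ with
    | inr u =>
      -- then e is the accumulation point u itself: share it
      cases e with
      | inl p => obtain ⟨γ, s''⟩ := p; exfalso; simp only [sc] at hs2; omega
      | inr u' =>
        have : u = u' := Fin.ext (by simp only [sc] at hs2; omega)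
        subst this
        by_cases hxl : s(Sum.inl (α,s), (Sum.inr u : MbarPt n)) = s(Sum.inl (c,s), Sum.inr u)
        · refine ⟨rotArc 1 s(Sum.inl (c,s), Sum.inr u), ⟨1, rfl⟩, adj_share ?_ u
            (Sym2.mem_mk_right _ _) (acc_mem_rot (Sym2.mem_mk_right _ _) 1)⟩
          rw [hxl, rotArc_mk, rotPt_m, rotPt_acc]
          intro hc
          rw [Sym2.eq_iff] at hc
          rcases hc with ⟨hc1,_⟩|⟨hc1,_⟩
          · simp only [Sum.inl.injEq, Prod.mk.injEq] at hc1; omega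
          · exact absurd hc1 (by simp)
        · exact ⟨s(Sum.inl (c,s), Sum.inr u), Fam_self _,
            adj_share hxl u (Sym2.mem_mk_right _ _) (Sym2.mem_mk_right _ _)⟩
    | inl p =>
      obtain ⟨e', s'⟩ := p
      -- e is a marked point in segment s' as well
      cases e with
      | inr u' => exfalso; simp only [sc] at hs2; omega
      | inl q =>
        obtain ⟨γ, s''⟩ := q
        have hss : s' = s'' := Fin.ext (by simp only [sc] at hs2; omega)
        subst hss
        have hss' : s'.1 ≠ s.1 := by simp only [sc] at hξ; omega
        rcases tc_trichotomy hPe with hor|hor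
        · -- x = ((α,s),(γ,s')) with s < s' ; choose t large
          have hlt : s.1 < s'.1 := by
            have := sc_le_of_tc hor; simp only [sc] at this; omega
          set t := max (α+1) (γ - e' + c + 1) with ht
          have ht1 : α + 1 ≤ t := le_max_left _ _
          have ht2 : γ - e' + c + 1 ≤ t := le_max_right _ _
          refine ⟨s(Sum.inl (t,s), rotPt (c-t) (Sum.inl (e',s'))), seg_rot_mem .., Or.inl ?_⟩
          rw [rotPt_m]
          exact crosses_of (lt_mm_same.2 (by omega)) (lt_mm.2 (Or.inl hlt))
            (Or.inr (lt_mm_same.2 (by omega)))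
        · -- x = ((γ,s'),(α,s)) with s' < s ; choose t small
          have hlt : s'.1 < s.1 := by
            have := sc_le_of_tc hor; simp only [sc] at this; omega
          set t := min (α-1) (γ - e' + c - 1) with ht
          have ht1 : t ≤ α - 1 := min_le_left _ _
          have ht2 : t ≤ γ - e' + c - 1 := min_le_right _ _
          refine ⟨s(Sum.inl (t,s), rotPt (c-t) (Sum.inl (e',s'))), seg_rot_mem .., Or.inl ?_⟩
          rw [rotPt_m, Sym2.eq_swap (a := (Sum.inl (α,s) : MbarPt n))]
          exact crosses_of (lt_mm.2 (Or.inl hlt)) (lt_mm_same.2 (by omega))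
            (Or.inl (lt_mm_same.2 (by omega)))
  · -- generic: the slot of ξ differs from both endpoint slots of x
    rcases tc_trichotomy hPe with hor|hor
    · -- seg-s endpoint of x on the left
      have hsle : 2*s.1+1 ≤ sc e := by rw [← hsx1]; exact sc_le_of_tc hor
      rcases Nat.lt_trichotomy (sc ξ) (2*s.1+1) with htri|htri|htri
      · -- ξ below : enter just inside on the right of α
        refine ⟨s(Sum.inl (α+1,s), rotPt (c-(α+1)) ξ), seg_rot_mem .., Or.inl ?_⟩
        exact crosses_of (lt_mm_same.2 (by omega)) (next_inside harc hor)
          (Or.inl (tc_lt_of_sc (by rw [sc_rotPt, hsx1]; omega)))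
      · exact absurd htri hξ
      · rcases Nat.lt_trichotomy (sc ξ) (sc e) with h2|h2|h2
        · -- ξ strictly inside slot-wise
          refine ⟨s(Sum.inl (α-1,s), rotPt (c-(α-1)) ξ), seg_rot_mem .., Or.inl ?_⟩
          rw [Sym2.eq_swap (a := (Sum.inl (α-1,s) : MbarPt n))]
          exact crosses_of (tc_lt_of_sc (by rw [sc_rotPt, hsx1]; omega))
            (tc_lt_of_sc (by rw [sc_rotPt]; omega))
            (Or.inl (lt_mm_same.2 (by omega)))
        · exact absurd h2 hs2
        · -- ξ above
          refine ⟨s(Sum.inl (α+1,s), rotPt (c-(α+1)) ξ), seg_rot_mem .., Or.inl ?_⟩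
          exact crosses_of (lt_mm_same.2 (by omega)) (next_inside harc hor)
            (Or.inr (tc_lt_of_sc (by rw [sc_rotPt]; omega)))
    · -- seg-s endpoint of x on the right
      have hsle : sc e ≤ 2*s.1+1 := by rw [← hsx1]; exact sc_le_of_tc hor
      rcases Nat.lt_trichotomy (sc ξ) (sc e) with htri|htri|htri
      · -- ξ below e : enter just inside left of α
        refine ⟨s(Sum.inl (α-1,s), rotPt (c-(α-1)) ξ), seg_rot_mem .., Or.inl ?_⟩
        rw [Sym2.eq_swap (a := (Sum.inl (α,s) : MbarPt n))]
        exact crosses_of (prev_inside harc hor) (lt_mm_same.2 (by omega))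
          (Or.inl (tc_lt_of_sc (by rw [sc_rotPt]; omega)))
      · exact absurd htri hs2
      · rcases Nat.lt_trichotomy (sc ξ) (2*s.1+1) with h2|h2|h2
        · -- ξ strictly inside slot-wise
          refine ⟨s(Sum.inl (α+1,s), rotPt (c-(α+1)) ξ), seg_rot_mem .., Or.inl ?_⟩
          rw [Sym2.eq_swap (a := (Sum.inl (α,s) : MbarPt n)),
            Sym2.eq_swap (a := (Sum.inl (α+1,s) : MbarPt n))]
          exact crosses_of (tc_lt_of_sc (by rw [sc_rotPt]; omega))
            (tc_lt_of_sc (by rw [sc_rotPt, hsx1]; omega))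
            (Or.inr (lt_mm_same.2 (by omega)))
        · exact absurd h2 hξ
        · -- ξ above
          refine ⟨s(Sum.inl (α-1,s), rotPt (c-(α-1)) ξ), seg_rot_mem .., Or.inl ?_⟩
          rw [Sym2.eq_swap (a := (Sum.inl (α,s) : MbarPt n))]
          exact crosses_of (prev_inside harc hor) (lt_mm_same.2 (by omega))
            (Or.inr (tc_lt_of_sc (by rw [sc_rotPt, hsx1]; omega)))

end PY
namespace PY

variable {n : ℕ}

/-! ### Layer 4: consequences of minimality -/

lemma mem_rep {z : MbarPt n} {p : Sym2 (MbarPt n)} (h : z ∈ p) : ∃ e, p = s(z, e) := by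
  induction p using Sym2.ind with
  | _ a b =>
    rw [Sym2.mem_iff] at h
    rcases h with rfl|rfl
    · exact ⟨b, rfl⟩
    · exact ⟨a, Sym2.eq_swap⟩

lemma sc_eq_seg {z : MbarPt n} {s : Fin n} (h : sc z = 2*s.1+1) :
    ∃ t, z = Sum.inl (t, s) := by
  cases z with
  | inl p =>
    obtain ⟨k, i⟩ := p
    have : i = s := Fin.ext (by simp only [sc] at h; omega)
    subst this
    exact ⟨k, rfl⟩
  | inr u => exfalso; simp only [sc] at h; omega

lemma seg_mem_of_Fam {ℓ q : Sym2 (MbarPt n)} (hq : q ∈ Fam ℓ) {t : ℤ} {s : Fin n}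
    (h : (Sum.inl (t,s) : MbarPt n) ∈ q) : ∃ t', (Sum.inl (t',s) : MbarPt n) ∈ ℓ := by
  obtain ⟨m, rfl⟩ := hq
  induction ℓ using Sym2.ind with
  | _ a b =>
    rw [rotArc_mk, Sym2.mem_iff] at h
    rcases h with h|h
    · cases a with
      | inl p => obtain ⟨k,i⟩ := p
                 rw [rotPt_m] at h
                 injection h with h'
                 injection h' with h1 h2
                 subst h2
                 exact ⟨k, Sym2.mem_mk_left _ _⟩
      | inr u => exact absurd h (by simp [rotPt_acc])
    · cases b with
      | inl p => obtain ⟨k,i⟩ := p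
                 rw [rotPt_m] at h
                 injection h with h'
                 injection h' with h1 h2
                 subst h2
                 exact ⟨k, Sym2.mem_mk_right _ _⟩
      | inr u => exact absurd h (by simp [rotPt_acc])

/-- all endpoints in segment `s` -/
def InSeg (s : Fin n) (p : Sym2 (MbarPt n)) : Prop :=
  ∀ z ∈ p, ∃ t : ℤ, z = Sum.inl (t, s)

lemma InSeg_rot {s : Fin n} {p : Sym2 (MbarPt n)} (h : InSeg s p) (m : ℤ) :
    InSeg s (rotArc m p) := by
  induction p using Sym2.ind with
  | _ a b =>
    intro z hz
    rw [rotArc_mk, Sym2.mem_iff] at hz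
    rcases hz with rfl|rfl
    · obtain ⟨t, rfl⟩ := h a (Sym2.mem_mk_left _ _)
      exact ⟨t - m, by rw [rotPt_m]⟩
    · obtain ⟨t, rfl⟩ := h b (Sym2.mem_mk_right _ _)
      exact ⟨t - m, by rw [rotPt_m]⟩

lemma no_dup {S : Finset (Sym2 (MbarPt n))}
    (hconn : ConnectedArcs (↑S : Set (Sym2 (MbarPt n))))
    (horb : CompleteOrbit (↑S : Set (Sym2 (MbarPt n))))
    (hmin : MinimalArcSet (↑S : Set (Sym2 (MbarPt n)))) :
    ∀ ℓ ∈ S, ∀ ℓ' ∈ S, ℓ ≠ ℓ' → ℓ' ∉ Fam ℓ := by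
  intro ℓ hℓ ℓ' hℓ' hne hmem
  have heq : RClos ((↑S : Set (Sym2 (MbarPt n))) \ {ℓ'}) = RClos (↑S : Set (Sym2 (MbarPt n))) := by
    apply Set.Subset.antisymm
    · rintro q ⟨a, ha, m, rfl⟩
      exact ⟨a, ha.1, m, rfl⟩
    · rintro q ⟨a, ha, m, rfl⟩
      by_cases hc : a = ℓ'
      · subst hc
        obtain ⟨m2, rfl⟩ := hmem
        exact ⟨ℓ, ⟨Finset.mem_coe.2 hℓ, fun hc' => hne (Set.mem_singleton_iff.1 hc')⟩,
          m + m2, rotArc_comp m m2 ℓ⟩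
      · exact ⟨a, ⟨ha, fun hc' => hc (Set.mem_singleton_iff.1 hc')⟩, m, rfl⟩
  exact hmin ℓ' (Finset.mem_coe.2 hℓ')
    ⟨by unfold ConnectedArcs; rw [heq]; exact hconn,
     by unfold CompleteOrbit; rw [heq]; exact horb⟩

lemma RClos_isArc {S : Finset (Sym2 (MbarPt n))} (harc : ∀ p ∈ S, IsArc p)
    {q : Sym2 (MbarPt n)} (h : q ∈ RClos (↑S : Set (Sym2 (MbarPt n)))) : IsArc q := by
  obtain ⟨a, haS, m, rfl⟩ := h
  exact isArc_rot (harc a (Finset.mem_coe.1 haS)) m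

lemma no_window {S : Finset (Sym2 (MbarPt n))} (hn0 : 0 < n)
    (harc : ∀ p ∈ S, IsArc p)
    (hconn : ConnectedArcs (↑S : Set (Sym2 (MbarPt n))))
    (horb : CompleteOrbit (↑S : Set (Sym2 (MbarPt n))))
    (hmin : MinimalArcSet (↑S : Set (Sym2 (MbarPt n)))) :
    ∀ ℓ ∈ S, slo ℓ ≠ shi ℓ := by
  intro ℓ hℓ hslo
  obtain ⟨x1, x2, hrep, hord⟩ := ordered_rep (harc ℓ hℓ).1
  have hsc12 : sc x1 = sc x2 := by
    have h1 := slo_ordered hord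
    rw [← hrep] at h1
    omega
  cases x1 with
  | inr u =>
    cases x2 with
    | inr v => have h1 := lt_aa.1 hord; simp only [sc] at hsc12; omega
    | inl p => obtain ⟨β, j⟩ := p; simp only [sc] at hsc12; omega
  | inl p =>
    obtain ⟨α, i⟩ := p
    cases x2 with
    | inr v => simp only [sc] at hsc12; omega
    | inl p2 =>
      obtain ⟨β, j⟩ := p2
      have hij : i = j := Fin.ext (by simp only [sc] at hsc12; omega)
      subst hij
      have hαβ : α < β := lt_mm_same.1 hord
      -- Step 1: some arc of S has an endpoint in segment i and one outside (NW)
      have NW : ∃ ℓ2 ∈ S, ∃ (c : ℤ) (ξ : MbarPt n),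
          ℓ2 = s(Sum.inl (c, i), ξ) ∧ sc ξ ≠ 2*i.1+1 := by
        by_contra hall
        push_neg at hall
        have claim1 : ∀ q ∈ RClos (↑S : Set (Sym2 (MbarPt n))),
            (∃ t : ℤ, (Sum.inl (t,i) : MbarPt n) ∈ q) → InSeg i q := by
          rintro q ⟨a, haS, m, rfl⟩ ⟨t, ht⟩
          obtain ⟨t', ht'⟩ := seg_mem_of_Fam ⟨m, rfl⟩ ht
          obtain ⟨e, he⟩ := mem_rep ht'
          have hsce := hall a (Finset.mem_coe.1 haS) t' e he
          obtain ⟨t2, rfl⟩ := sc_eq_seg hsce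
          apply InSeg_rot
          rw [he]
          intro z hz
          rw [Sym2.mem_iff] at hz
          rcases hz with rfl|rfl
          · exact ⟨t', rfl⟩
          · exact ⟨t2, rfl⟩
        have claim2 : ∀ m (r q' : Sym2 (MbarPt n)),
            r ∈ RClos (↑S : Set (Sym2 (MbarPt n))) → InSeg i r →
            AdjChain (RClos (↑S : Set (Sym2 (MbarPt n)))) m r q' → InSeg i q' := by
          intro m
          induction m with
          | zero => intro r q' _ hr hchain; rw [← hchain]; exact hr
          | succ m ih =>
            rintro r q' hrT hr ⟨r1, hr1T, hadj, rest⟩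
            refine ih r1 q' hr1T ?_ rest
            rcases hadj with hcr|⟨_, u, hu, _⟩
            · obtain ⟨z1, z2, hrep2, hord2⟩ := ordered_rep (RClos_isArc harc hrT).1
              obtain ⟨t1, hz1⟩ := hr z1 (by rw [hrep2]; exact Sym2.mem_mk_left _ _)
              obtain ⟨t2, hz2⟩ := hr z2 (by rw [hrep2]; exact Sym2.mem_mk_right _ _)
              subst hz1; subst hz2
              rw [hrep2] at hcr
              obtain ⟨z, w, hq, hin1, hin2, _⟩ := crosses_elim hord2 hcr
              have h1 := sc_le_of_tc hin1
              have h2 := sc_le_of_tc hin2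
              have hscz : sc z = 2*i.1+1 := by
                have e1 : sc (Sum.inl (t1,i) : MbarPt n) = 2*i.1+1 := rfl
                have e2 : sc (Sum.inl (t2,i) : MbarPt n) = 2*i.1+1 := rfl
                omega
              obtain ⟨tz, rfl⟩ := sc_eq_seg hscz
              exact claim1 r1 hr1T ⟨tz, by rw [hq]; exact Sym2.mem_mk_left _ _⟩
            · obtain ⟨t, ht⟩ := hr _ hu
              exact absurd ht (by simp)
        obtain ⟨p0, hp0T, hp0m⟩ := horb (Sum.inr ⟨0, hn0⟩)
        have hlT : ℓ ∈ RClos (↑S : Set (Sym2 (MbarPt n))) :=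
          ⟨ℓ, Finset.mem_coe.2 hℓ, 0, (rotArc_zero ℓ).symm⟩
        obtain ⟨m, hchain⟩ := hconn ℓ hlT p0 hp0T
        have hIn : InSeg i p0 := by
          refine claim2 m ℓ p0 hlT ?_ hchain
          rw [hrep]
          intro z hz
          rw [Sym2.mem_iff] at hz
          rcases hz with rfl|rfl
          · exact ⟨α, rfl⟩
          · exact ⟨β, rfl⟩
        obtain ⟨t, ht⟩ := hIn _ hp0m
        exact absurd ht (by simp)
      obtain ⟨ℓ2, hℓ2S, c, ξ, hℓ2rep, hξ⟩ := NW
      have hdup := no_dup hconn horb hmin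
      have hl2arc := harc ℓ2 hℓ2S
      have hl2slots : slo ℓ2 ≠ shi ℓ2 := by
        rw [hℓ2rep, slo_mk, shi_mk]
        have hsc : sc (Sum.inl (c,i) : MbarPt n) = 2*i.1+1 := rfl
        omega
      have hFamW : ∀ w ∈ Fam ℓ, ∃ t t', t < t' ∧ w = s(Sum.inl (t,i), Sum.inl (t',i)) := by
        intro w hw
        rw [hrep] at hw
        obtain ⟨t, t', hdiff, rfl⟩ := Fam_mm_elim hw
        exact ⟨t, t', by omega, rfl⟩
      have htouch : ∀ z w, w ∈ Fam ℓ → Adj z w →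
          ∃ (t : ℤ) (e : MbarPt n), z = s(Sum.inl (t,i), e) := by
        intro z w hw hadj
        obtain ⟨t, t', hlt, rfl⟩ := hFamW w hw
        rcases hadj with hcr|⟨_, u, _, hu⟩
        · have hcr' := crosses_symm hcr
          have hord' : toCircle (Sum.inl (t,i) : MbarPt n) < toCircle (Sum.inl (t',i)) :=
            lt_mm_same.2 hlt
          obtain ⟨z1, w1, hzrep, hin1, hin2, _⟩ := crosses_elim hord' hcr'
          have h1 := sc_le_of_tc hin1
          have h2 := sc_le_of_tc hin2
          have hscz : sc z1 = 2*i.1+1 := by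
            have e1 : sc (Sum.inl (t,i) : MbarPt n) = 2*i.1+1 := rfl
            have e2 : sc (Sum.inl (t',i) : MbarPt n) = 2*i.1+1 := rfl
            omega
          obtain ⟨tz, rfl⟩ := sc_eq_seg hscz
          exact ⟨tz, w1, hzrep⟩
        · rw [Sym2.mem_iff] at hu
          rcases hu with h|h <;> exact absurd h (by simp)
      have hdisj : ∀ y ∈ Fam ℓ2, y ∉ Fam ℓ := by
        intro y hy hy'
        obtain ⟨t, t', _, hrep2⟩ := hFamW y hy'
        obtain ⟨m, rfl⟩ := hy
        rw [hℓ2rep, rotArc_mk, rotPt_m] at hrep2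
        rw [Sym2.eq_iff] at hrep2
        rcases hrep2 with ⟨_, h2⟩|⟨_, h2⟩ <;>
        · have hh : sc (rotPt m ξ) = 2*i.1+1 := by rw [h2]; rfl
          rw [sc_rotPt] at hh
          exact hξ hh
      have hl2ne : ℓ2 ≠ ℓ := by
        intro hc
        exact hdisj ℓ2 (Fam_self ℓ2) (by rw [hc]; exact Fam_self ℓ)
      have hT'sub : ∀ q ∈ RClos (↑S : Set (Sym2 (MbarPt n))), q ∉ Fam ℓ →
          q ∈ RClos ((↑S : Set (Sym2 (MbarPt n))) \ {ℓ}) := by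
        rintro q ⟨a, haS, m, rfl⟩ hq
        refine ⟨a, ⟨haS, fun hc => hq ?_⟩, m, rfl⟩
        rw [Set.mem_singleton_iff] at hc
        subst hc
        exact ⟨m, rfl⟩
      have hT'char : ∀ q ∈ RClos ((↑S : Set (Sym2 (MbarPt n))) \ {ℓ}),
          q ∈ RClos (↑S : Set (Sym2 (MbarPt n))) ∧ q ∉ Fam ℓ := by
        rintro q ⟨a, ⟨haS, hane⟩, m, rfl⟩
        refine ⟨⟨a, haS, m, rfl⟩, fun hq => ?_⟩
        have haF : a ∈ Fam ℓ := Fam_trans hq ⟨m, rfl⟩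
        have hane' : ℓ ≠ a := fun hc => hane (Set.mem_singleton_iff.2 hc.symm)
        exact hdup ℓ hℓ a (Finset.mem_coe.1 haS) hane' haF
      have hFam2T' : ∀ y ∈ Fam ℓ2, y ∈ RClos ((↑S : Set (Sym2 (MbarPt n))) \ {ℓ}) := by
        rintro y ⟨m, rfl⟩
        exact ⟨ℓ2, ⟨Finset.mem_coe.2 hℓ2S, fun hc => hl2ne (Set.mem_singleton_iff.1 hc)⟩, m, rfl⟩
      have hstep : ∀ z ∈ RClos (↑S : Set (Sym2 (MbarPt n))),
          (∃ (t : ℤ) (e : MbarPt n), z = s(Sum.inl (t,i), e)) →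
          ∃ y ∈ Fam ℓ2, Adj z y := by
        rintro z hzT ⟨t, e, hz⟩
        exact step_share_seg hz (RClos_isArc harc hzT) hℓ2rep hξ
      have hexit : ∀ m2 (r2 q' : Sym2 (MbarPt n)), r2 ∈ Fam ℓ → q' ∉ Fam ℓ →
          AdjChain (RClos (↑S : Set (Sym2 (MbarPt n)))) m2 r2 q' →
          ∃ m3 r3, m3 ≤ m2 ∧ r3 ∈ RClos (↑S : Set (Sym2 (MbarPt n))) ∧ r3 ∉ Fam ℓ ∧
            (∃ (t : ℤ) (e : MbarPt n), r3 = s(Sum.inl (t,i), e)) ∧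
            AdjChain (RClos (↑S : Set (Sym2 (MbarPt n)))) m3 r3 q' := by
        intro m2
        induction m2 with
        | zero => intro r2 q' hr2 hq' hchain; exact absurd (hchain ▸ hr2) hq'
        | succ m2 ih =>
          rintro r2 q' hr2 hq' ⟨r', hr'T, hadj, rest⟩
          by_cases hc : r' ∈ Fam ℓ
          · obtain ⟨m3, r3, hle, h1, h2, h3, h4⟩ := ih r' q' hc hq' rest
            exact ⟨m3, r3, by omega, h1, h2, h3, h4⟩
          · exact ⟨m2, r', Nat.le_succ _, hr'T, hc, htouch r' r2 hr2 (adj_symm hadj), rest⟩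
      have main : ∀ m, ∀ (p q : Sym2 (MbarPt n)),
          p ∈ RClos ((↑S : Set (Sym2 (MbarPt n))) \ {ℓ}) →
          q ∈ RClos ((↑S : Set (Sym2 (MbarPt n))) \ {ℓ}) →
          AdjChain (RClos (↑S : Set (Sym2 (MbarPt n)))) m p q →
          ∃ m', AdjChain (RClos ((↑S : Set (Sym2 (MbarPt n))) \ {ℓ})) m' p q := by
        intro m
        induction m using Nat.strong_induction_on with
        | _ m ih =>
          rcases m with _|m
          · intro p q _ _ h; exact ⟨0, h⟩
          · rintro p q hpT' hqT' ⟨r, hrT, hadj, rest⟩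
            by_cases hc : r ∈ Fam ℓ
            · obtain ⟨tp, ep, hpz⟩ := htouch p r hc hadj
              obtain ⟨m3, r3, hle, hr3T, hr3F, hr3t, hr3chain⟩ :=
                hexit m r q hc (hT'char q hqT').2 rest
              obtain ⟨m', hchain'⟩ := ih m3 (by omega) r3 q (hT'sub r3 hr3T hr3F) hqT' hr3chain
              obtain ⟨yp, hypF, hypA⟩ := hstep p (hT'char p hpT').1 ⟨tp, ep, hpz⟩
              obtain ⟨yr, hyrF, hyrA⟩ := hstep r3 hr3T hr3t
              have hyrT' := hFam2T' yr hyrF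
              have hypT' := hFam2T' yp hypF
              have hchain2 : AdjChain (RClos ((↑S : Set (Sym2 (MbarPt n))) \ {ℓ})) (m'+1) yr q :=
                ⟨r3, hT'sub r3 hr3T hr3F, adj_symm hyrA, hchain'⟩
              rcases internal_step hl2arc hl2slots hypF hyrF with heq|hadj2
              · rw [← heq] at hchain2
                exact ⟨m'+2, ⟨yp, hypT', hypA, hchain2⟩⟩
              · exact ⟨m'+3, ⟨yp, hypT', hypA, yr, hyrT', hadj2, hchain2⟩⟩
            · obtain ⟨m', hchain'⟩ := ih m (by omega) r q (hT'sub r hrT hc) hqT' rest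
              exact ⟨m'+1, ⟨r, hT'sub r hrT hc, hadj, hchain'⟩⟩
      have horb' : CompleteOrbit ((↑S : Set (Sym2 (MbarPt n))) \ {ℓ}) := by
        intro x
        obtain ⟨p, hpT, hpx⟩ := horb x
        obtain ⟨a, haS, m, rfl⟩ := hpT
        by_cases hc : a = ℓ
        · subst hc
          obtain ⟨t, t', _, hw⟩ := hFamW _ ⟨m, rfl⟩
          rw [hw, Sym2.mem_iff] at hpx
          rcases hpx with rfl|rfl
          · exact ⟨s(Sum.inl (t,i), rotPt (c-t) ξ),
              hFam2T' _ (by rw [hℓ2rep]; exact seg_rot_mem c t i ξ), Sym2.mem_mk_left _ _⟩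
          · exact ⟨s(Sum.inl (t',i), rotPt (c-t') ξ),
              hFam2T' _ (by rw [hℓ2rep]; exact seg_rot_mem c t' i ξ), Sym2.mem_mk_left _ _⟩
        · exact ⟨rotArc m a, ⟨a, ⟨haS, fun h => hc (Set.mem_singleton_iff.1 h)⟩, m, rfl⟩, hpx⟩
      have hconn' : ConnectedArcs ((↑S : Set (Sym2 (MbarPt n))) \ {ℓ}) := by
        intro p hp q hq
        obtain ⟨m, hchain⟩ := hconn p (hT'char p hp).1 q (hT'char q hq).1
        exact main m p q hp hq hchain
      exact hmin ℓ (Finset.mem_coe.2 hℓ) ⟨hconn', horb'⟩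

end PY
namespace PY

variable {n : ℕ}

/-! ### Layer 5a: slot relations between families, step lemmas, chain helpers -/

def ShareSlot (p q : Sym2 (MbarPt n)) : Prop :=
  slo p = slo q ∨ slo p = shi q ∨ shi p = slo q ∨ shi p = shi q

def ItlSlot (p q : Sym2 (MbarPt n)) : Prop :=
  (slo p < slo q ∧ slo q < shi p ∧ shi p < shi q) ∨
  (slo q < slo p ∧ slo p < shi q ∧ shi q < shi p)

def SIrel (p q : Sym2 (MbarPt n)) : Prop := ShareSlot p q ∨ ItlSlot p q

lemma SIrel_symm {p q : Sym2 (MbarPt n)} (h : SIrel p q) : SIrel q p := by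
  unfold SIrel ShareSlot ItlSlot at h ⊢; omega

lemma sc_mem_slots {z : MbarPt n} {p : Sym2 (MbarPt n)} (h : z ∈ p) :
    sc z = slo p ∨ sc z = shi p := by
  induction p using Sym2.ind with
  | _ a b =>
    rw [Sym2.mem_iff] at h
    rw [slo_mk, shi_mk]
    rcases h with rfl|rfl <;> omega

lemma slo_le_shi (p : Sym2 (MbarPt n)) : slo p ≤ shi p := by
  induction p using Sym2.ind with
  | _ a b => rw [slo_mk, shi_mk]; omega

lemma shi_lt_2n (p : Sym2 (MbarPt n)) : shi p < 2*n := by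
  induction p using Sym2.ind with
  | _ a b =>
    rw [shi_mk]
    have := sc_lt_bound a; have := sc_lt_bound b
    omega

/-- members adjacent implies the families are slot-related -/
lemma adj_SIrel {ℓ1 ℓ2 x y : Sym2 (MbarPt n)} (h1 : IsArc x)
    (hx : x ∈ Fam ℓ1) (hy : y ∈ Fam ℓ2) (hadj : Adj x y) : SIrel ℓ1 ℓ2 := by
  have e1 : slo x = slo ℓ1 := slo_Fam hx
  have e2 : shi x = shi ℓ1 := shi_Fam hx
  have e3 : slo y = slo ℓ2 := slo_Fam hy
  have e4 : shi y = shi ℓ2 := shi_Fam hy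
  suffices h : SIrel x y by
    unfold SIrel ShareSlot ItlSlot at h ⊢; omega
  rcases hadj with hcr|⟨_, u, hu1, hu2⟩
  · obtain ⟨x1, x2, rfl, hord⟩ := ordered_rep h1.1
    obtain ⟨z, w, rfl, hin1, hin2, hout⟩ := crosses_elim hord hcr
    obtain ⟨a1, a2⟩ := slo_ordered hord
    have hz1 := sc_le_of_tc hin1
    have hz2 := sc_le_of_tc hin2
    rcases hout with hw|hw
    · have hw' := sc_le_of_tc hw
      unfold SIrel ShareSlot ItlSlot
      rw [slo_mk (a := z), shi_mk (a := z)]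
      omega
    · have hw' := sc_le_of_tc hw
      unfold SIrel ShareSlot ItlSlot
      rw [slo_mk (a := z), shi_mk (a := z)]
      omega
  · have m1 := sc_mem_slots hu1
    have m2 := sc_mem_slots hu2
    left; unfold ShareSlot; omega

lemma seg_mem_Fam {ℓ x : Sym2 (MbarPt n)} (hx : x ∈ Fam ℓ) {k : ℤ} {s : Fin n}
    (h : (Sum.inl (k,s) : MbarPt n) ∈ ℓ) : ∃ t, (Sum.inl (t,s) : MbarPt n) ∈ x := by
  obtain ⟨m, rfl⟩ := hx
  induction ℓ using Sym2.ind with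
  | _ a b =>
    rw [Sym2.mem_iff] at h
    rw [rotArc_mk]
    rcases h with rfl|rfl
    · exact ⟨k - m, by rw [rotPt_m]; exact Sym2.mem_mk_left _ _⟩
    · exact ⟨k - m, by rw [rotPt_m]; exact Sym2.mem_mk_right _ _⟩

/-- from a slot-sharing pair, extract endpoints with the same slot code -/
lemma share_endpoints {ℓ1 ℓ2 : Sym2 (MbarPt n)} (h1 : ¬ℓ1.IsDiag) (h2 : ¬ℓ2.IsDiag)
    (hsh : ShareSlot ℓ1 ℓ2) :
    ∃ e1 ∈ ℓ1, ∃ e2 ∈ ℓ2, sc e1 = sc e2 := by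
  obtain ⟨a1, b1, hr1, ho1⟩ := ordered_rep h1
  obtain ⟨a2, b2, hr2, ho2⟩ := ordered_rep h2
  obtain ⟨c1, c2⟩ := slo_ordered ho1
  obtain ⟨c3, c4⟩ := slo_ordered ho2
  rw [← hr1] at c1 c2
  rw [← hr2] at c3 c4
  have ma1 : a1 ∈ ℓ1 := by rw [hr1]; exact Sym2.mem_mk_left _ _
  have mb1 : b1 ∈ ℓ1 := by rw [hr1]; exact Sym2.mem_mk_right _ _
  have ma2 : a2 ∈ ℓ2 := by rw [hr2]; exact Sym2.mem_mk_left _ _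
  have mb2 : b2 ∈ ℓ2 := by rw [hr2]; exact Sym2.mem_mk_right _ _
  rcases hsh with h|h|h|h
  · exact ⟨a1, ma1, a2, ma2, by omega⟩
  · exact ⟨a1, ma1, b2, mb2, by omega⟩
  · exact ⟨b1, mb1, a2, ma2, by omega⟩
  · exact ⟨b1, mb1, b2, mb2, by omega⟩

/-- the universal step lemma along a slot-related pair of families -/
lemma step_edge {ℓ1 ℓ2 : Sym2 (MbarPt n)} (h1 : IsArc ℓ1) (h2 : IsArc ℓ2)
    (hw2 : slo ℓ2 ≠ shi ℓ2) (hnf : ℓ2 ∉ Fam ℓ1)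
    (hrel : SIrel ℓ1 ℓ2) {x : Sym2 (MbarPt n)} (hx : x ∈ Fam ℓ1) :
    ∃ y ∈ Fam ℓ2, Adj x y := by
  rcases hrel with hsh|hitl
  · obtain ⟨e1, he1, e2, he2, hsc⟩ := share_endpoints h1.1 h2.1 hsh
    cases e1 with
    | inr u =>
      cases e2 with
      | inl p => obtain ⟨c, s⟩ := p; exfalso; simp only [sc] at hsc; omega
      | inr v =>
        have huv : u = v := Fin.ext (by simp only [sc] at hsc; omega)
        subst huv
        exact step_share_acc he1 he2 hx hnf
    | inl p =>
      obtain ⟨k, s⟩ := p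
      cases e2 with
      | inr v => exfalso; simp only [sc] at hsc; omega
      | inl p2 =>
        obtain ⟨c, s'⟩ := p2
        have hss : s = s' := Fin.ext (by simp only [sc] at hsc; omega)
        subst hss
        obtain ⟨t, ht⟩ := seg_mem_Fam hx he1
        obtain ⟨e, he⟩ := mem_rep ht
        obtain ⟨ξ, hξrep⟩ := mem_rep he2
        have hξ : sc ξ ≠ 2*s.1+1 := by
          have := hw2
          rw [hξrep, slo_mk, shi_mk] at this
          have hsc2 : sc (Sum.inl (c,s) : MbarPt n) = 2*s.1+1 := rfl
          omega
        exact step_share_seg he (isArc_of_Fam h1 hx) hξrep hξ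
  · refine ⟨ℓ2, Fam_self _, step_itl (isArc_of_Fam h1 hx).1 h2.1 ?_⟩
    have e1 : slo x = slo ℓ1 := slo_Fam hx
    have e2 : shi x = shi ℓ1 := shi_Fam hx
    unfold ItlSlot at hitl
    omega

/-- rigid edges: every member is adjacent to every member -/
lemma step_rigid {ℓ1 ℓ2 : Sym2 (MbarPt n)} (h1 : IsArc ℓ1) (h2 : IsArc ℓ2)
    (hnf : ℓ2 ∉ Fam ℓ1)
    (hrig : (∃ u : Fin n, (Sum.inr u : MbarPt n) ∈ ℓ1 ∧ (Sum.inr u : MbarPt n) ∈ ℓ2) ∨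
      ItlSlot ℓ1 ℓ2)
    {x y : Sym2 (MbarPt n)} (hx : x ∈ Fam ℓ1) (hy : y ∈ Fam ℓ2) : Adj x y := by
  have hxy : x ≠ y := by
    intro hc
    subst hc
    exact hnf (Fam_symm (Fam_trans hy hx))
  rcases hrig with ⟨u, hu1, hu2⟩|hitl
  · refine adj_share hxy u ?_ ?_
    · obtain ⟨m, rfl⟩ := hx; exact acc_mem_rot hu1 m
    · obtain ⟨m, rfl⟩ := hy; exact acc_mem_rot hu2 m
  · refine step_itl (isArc_of_Fam h1 hx).1 (isArc_of_Fam h2 hy).1 ?_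
    have e1 : slo x = slo ℓ1 := slo_Fam hx
    have e2 : shi x = shi ℓ1 := shi_Fam hx
    have e3 : slo y = slo ℓ2 := slo_Fam hy
    have e4 : shi y = shi ℓ2 := shi_Fam hy
    unfold ItlSlot at hitl
    omega

/-- non-rigid slot-related pairs share a segment slot -/
lemma nonrigid_seg {ℓ1 ℓ2 : Sym2 (MbarPt n)} (h1 : ¬ℓ1.IsDiag) (h2 : ¬ℓ2.IsDiag)
    (hrel : SIrel ℓ1 ℓ2)
    (hnr : ¬((∃ u : Fin n, (Sum.inr u : MbarPt n) ∈ ℓ1 ∧ (Sum.inr u : MbarPt n) ∈ ℓ2) ∨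
      ItlSlot ℓ1 ℓ2)) :
    ∃ s : Fin n, (∃ k, (Sum.inl (k,s) : MbarPt n) ∈ ℓ1) ∧
      (∃ c, (Sum.inl (c,s) : MbarPt n) ∈ ℓ2) := by
  push_neg at hnr
  obtain ⟨hnacc, hnitl⟩ := hnr
  rcases hrel with hsh|hitl
  · obtain ⟨e1, he1, e2, he2, hsc⟩ := share_endpoints h1 h2 hsh
    cases e1 with
    | inr u =>
      cases e2 with
      | inl p => obtain ⟨c, s⟩ := p; exfalso; simp only [sc] at hsc; omega
      | inr v =>
        have huv : u = v := Fin.ext (by simp only [sc] at hsc; omega)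
        subst huv
        exact absurd he2 (hnacc u he1)
    | inl p =>
      obtain ⟨k, s⟩ := p
      cases e2 with
      | inr v => exfalso; simp only [sc] at hsc; omega
      | inl p2 =>
        obtain ⟨c, s'⟩ := p2
        have hss : s = s' := Fin.ext (by simp only [sc] at hsc; omega)
        subst hss
        exact ⟨s, ⟨k, he1⟩, ⟨c, he2⟩⟩
  · exact absurd hitl hnitl

lemma chain_snoc {T : Set (Sym2 (MbarPt n))} {m : ℕ} {p x y : Sym2 (MbarPt n)}
    (hc : AdjChain T m p x) (hy : y ∈ T) (ha : Adj x y) : AdjChain T (m+1) p y := by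
  induction m generalizing p with
  | zero => exact ⟨y, hy, hc ▸ ha, rfl⟩
  | succ m ih =>
    obtain ⟨r, hrT, hpr, rest⟩ := hc
    exact ⟨r, hrT, hpr, ih rest⟩

lemma chain_append {T : Set (Sym2 (MbarPt n))} {m1 m2 : ℕ} {p x q : Sym2 (MbarPt n)}
    (hc1 : AdjChain T m1 p x) (hc2 : AdjChain T m2 x q) : AdjChain T (m1+m2) p q := by
  induction m1 generalizing p with
  | zero =>
    have : (0:ℕ) + m2 = m2 := by omega
    rw [this, hc1]
    exact hc2
  | succ m1 ih =>
    obtain ⟨r, hrT, hpr, rest⟩ := hc1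
    have : m1 + 1 + m2 = (m1 + m2) + 1 := by omega
    rw [this]
    exact ⟨r, hrT, hpr, ih rest⟩

lemma Fam_sub_RClos {S : Finset (Sym2 (MbarPt n))} {ℓ : Sym2 (MbarPt n)} (h : ℓ ∈ S) :
    Fam ℓ ⊆ RClos (↑S : Set (Sym2 (MbarPt n))) := by
  rintro q ⟨m, rfl⟩
  exact ⟨ℓ, Finset.mem_coe.2 h, m, rfl⟩

end PY
namespace PY

variable {n : ℕ}

/-! ### Layer 5b: paths in the family graph, shortest paths, counting -/

def IsGPath (S : Finset (Sym2 (MbarPt n))) (f : ℕ → Sym2 (MbarPt n)) (d : ℕ)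
    (a b : Sym2 (MbarPt n)) : Prop :=
  f 0 = a ∧ f d = b ∧ (∀ t, t ≤ d → f t ∈ S) ∧
    ∀ t, t < d → f t ≠ f (t+1) ∧ SIrel (f t) (f (t+1))

lemma exists_gpath {S : Finset (Sym2 (MbarPt n))}
    (harc : ∀ p ∈ S, IsArc p)
    (hfam : ∀ ℓ ∈ S, ∀ ℓ' ∈ S, ℓ ≠ ℓ' → ℓ' ∉ Fam ℓ) :
    ∀ (m : ℕ) (p q ℓp ℓq : Sym2 (MbarPt n)), ℓp ∈ S → ℓq ∈ S → p ∈ Fam ℓp → q ∈ Fam ℓq →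
    AdjChain (RClos (↑S : Set (Sym2 (MbarPt n)))) m p q →
    ∃ d f, IsGPath S f d ℓp ℓq := by
  intro m
  induction m with
  | zero =>
    intro p q ℓp ℓq hp hq hfp hfq hch
    have hpq : p = q := hch
    have : ℓp = ℓq := by
      by_contra hne
      exact hfam ℓp hp ℓq hq hne (Fam_trans (hpq ▸ hfp) hfq)
    subst this
    exact ⟨0, fun _ => ℓp, rfl, rfl, fun t _ => hp, fun t ht => absurd ht (by omega)⟩
  | succ m ih =>
    rintro p q ℓp ℓq hp hq hfp hfq ⟨r, hrT, hadj, rest⟩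
    obtain ⟨ℓr, hℓrS, mr, hr⟩ := hrT
    have hfr : r ∈ Fam ℓr := ⟨mr, hr⟩
    have hℓrS' : ℓr ∈ S := Finset.mem_coe.1 hℓrS
    obtain ⟨d, f, hf0, hfd, hmem, hedge⟩ := ih r q ℓr ℓq hℓrS' hq hfr hfq rest
    by_cases hc : ℓp = ℓr
    · exact ⟨d, f, by rw [hf0, hc], hfd, hmem, hedge⟩
    · refine ⟨d+1, fun t => if t = 0 then ℓp else f (t-1), by simp, ?_, ?_, ?_⟩
      · simp only [if_neg (by omega : ¬ d+1 = 0)]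
        simpa using hfd
      · intro t ht
        by_cases h0 : t = 0
        · subst h0; simpa using hp
        · simp only [if_neg h0]; exact hmem (t-1) (by omega)
      · intro t ht
        by_cases h0 : t = 0
        · subst h0
          simp only [if_pos rfl, if_neg (by omega : ¬(0+1:ℕ) = 0)]
          have e : (0+1-1 : ℕ) = 0 := rfl
          rw [e, hf0]
          exact ⟨hc, adj_SIrel (isArc_of_Fam (harc ℓp hp) hfp) hfp hfr hadj⟩
        · simp only [if_neg h0, if_neg (by omega : ¬ t+1 = 0)]
          have e : t+1-1 = (t-1)+1 := by omega
          rw [e]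
          exact hedge (t-1) (by omega)

lemma trunc_gpath {S : Finset (Sym2 (MbarPt n))} {f : ℕ → Sym2 (MbarPt n)} {d : ℕ}
    {a b : Sym2 (MbarPt n)} (hf : IsGPath S f d a b) {t : ℕ} (ht : t ≤ d) (hb : f t = b) :
    IsGPath S f t a b :=
  ⟨hf.1, hb, fun u hu => hf.2.2.1 u (by omega), fun u hu => hf.2.2.2 u (by omega)⟩

lemma splice_gpath {S : Finset (Sym2 (MbarPt n))} {f : ℕ → Sym2 (MbarPt n)} {d : ℕ}
    {a b : Sym2 (MbarPt n)} (hf : IsGPath S f d a b) {t j : ℕ}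
    (htj : t + 1 ≤ j) (hjd : j ≤ d) (hne : f t ≠ f j) (hsi : SIrel (f t) (f j)) :
    ∃ g, IsGPath S g (d - (j - t - 1)) a b := by
  obtain ⟨h0, hd, hmem, hedge⟩ := hf
  set k := j - t - 1 with hk
  refine ⟨fun u => if u ≤ t then f u else f (u + k), ?_, ?_, ?_, ?_⟩
  · simp only [if_pos (Nat.zero_le t)]; exact h0
  · have h1 : ¬ d - k ≤ t := by omega
    simp only [if_neg h1]
    have h2 : d - k + k = d := by omega
    rw [h2]; exact hd
  · intro u hu
    by_cases hc : u ≤ t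
    · simp only [if_pos hc]; exact hmem u (by omega)
    · simp only [if_neg hc]; exact hmem (u+k) (by omega)
  · intro u hu
    rcases Nat.lt_trichotomy u t with h|h|h
    · simp only [if_pos (by omega : u ≤ t), if_pos (by omega : u+1 ≤ t)]
      exact hedge u (by omega)
    · subst h
      simp only [if_pos (le_refl u), if_neg (by omega : ¬ u+1 ≤ u)]
      have e : u + 1 + k = j := by omega
      rw [e]
      exact ⟨hne, hsi⟩
    · simp only [if_neg (by omega : ¬ u ≤ t), if_neg (by omega : ¬ u+1 ≤ t)]
      have e : u + 1 + k = (u + k) + 1 := by omega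
      rw [e]
      exact hedge (u+k) (by omega)

lemma shortest_gpath {S : Finset (Sym2 (MbarPt n))} {a b : Sym2 (MbarPt n)}
    (hex : ∃ d f, IsGPath S f d a b) :
    ∃ d f, IsGPath S f d a b ∧
      (∀ t t', t' ≤ d → t + 2 ≤ t' → ¬ SIrel (f t) (f t')) ∧
      (∀ t t', t < t' → t' ≤ d → f t ≠ f t') := by
  classical
  obtain ⟨d0, hd0⟩ := hex
  have hP : ∃ d, ∃ f, IsGPath S f d a b := ⟨d0, hd0⟩
  obtain ⟨f, hf⟩ := Nat.find_spec hP
  set d := Nat.find hP with hdd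
  have hmin : ∀ d' , d' < d → ¬ ∃ f, IsGPath S f d' a b := fun d' h => Nat.find_min hP h
  have hdist : ∀ t t', t < t' → t' ≤ d → f t ≠ f t' := by
    intro t t' h1 h2 heq
    by_cases hc : t' = d
    · subst hc
      exact hmin t h1 ⟨f, trunc_gpath hf (by omega) (heq.symm ▸ hf.2.1)⟩
    · have hedge := hf.2.2.2 t' (by omega)
      have hne2 : f t ≠ f (t'+1) := by rw [heq]; exact hedge.1
      have hsi2 : SIrel (f t) (f (t'+1)) := by rw [heq]; exact hedge.2
      obtain ⟨g, hg⟩ := splice_gpath hf (by omega : t+1 ≤ t'+1) (by omega) hne2 hsi2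
      exact hmin (d - (t'+1 - t - 1)) (by omega) ⟨g, hg⟩
  have hnoSI : ∀ t t', t' ≤ d → t + 2 ≤ t' → ¬ SIrel (f t) (f t') := by
    intro t t' h1 h2 hsi
    have hne := hdist t t' (by omega) h1
    obtain ⟨g, hg⟩ := splice_gpath hf (by omega : t+1 ≤ t') h1 hne hsi
    exact hmin (d - (t' - t - 1)) (by omega) ⟨g, hg⟩
  exact ⟨d, f, hf, hnoSI, hdist⟩

lemma gpath_len_le {S : Finset (Sym2 (MbarPt n))} (hn : 2 ≤ n)
    (hwin : ∀ ℓ ∈ S, slo ℓ ≠ shi ℓ) {f : ℕ → Sym2 (MbarPt n)} {d : ℕ}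
    {a b : Sym2 (MbarPt n)}
    (hf : IsGPath S f d a b)
    (hno : ∀ t t', t' ≤ d → t + 2 ≤ t' → ¬ SIrel (f t) (f t')) :
    d ≤ 2*n - 2 := by
  obtain ⟨h0, hd, hmem, hedge⟩ := hf
  set E : ℕ → Finset ℕ := fun t => {slo (f t), shi (f t)} with hE
  have hcard : ∀ t, t ≤ d → (E t).card = 2 := by
    intro t ht
    have h1 : slo (f t) ≠ shi (f t) := hwin _ (hmem t ht)
    simp only [hE]
    rw [Finset.card_insert_of_notMem (by simp [h1]), Finset.card_singleton]
  have hsub : ∀ t, E t ⊆ Finset.range (2*n) := by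
    intro t x hx
    simp only [hE, Finset.mem_insert, Finset.mem_singleton] at hx
    have b1 := shi_lt_2n (f t)
    have b2 := slo_le_shi (f t)
    rw [Finset.mem_range]
    omega
  have hdisj : ∀ t t', t' ≤ d → t + 2 ≤ t' → Disjoint (E t) (E t') := by
    intro t t' h1 h2
    have hnsi := hno t t' h1 h2
    rw [Finset.disjoint_left]
    intro x hx hx'
    simp only [hE, Finset.mem_insert, Finset.mem_singleton] at hx hx'
    apply hnsi
    left
    unfold ShareSlot
    omega
  have hd1 : d ≤ 2*n - 1 := by
    by_contra hc
    push_neg at hc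
    have key : ((Finset.range (n+1)).biUnion (fun j => E (2*j))).card = (n+1)*2 := by
      rw [Finset.card_biUnion]
      · rw [Finset.sum_congr rfl
          (fun j hj => hcard (2*j) (by rw [Finset.mem_range] at hj; omega))]
        rw [Finset.sum_const, Finset.card_range, smul_eq_mul]
      · intro i hi j hj hij
        rw [Finset.mem_coe, Finset.mem_range] at hi hj
        rcases Nat.lt_or_ge i j with h|h
        · exact hdisj (2*i) (2*j) (by omega) (by omega)
        · exact (hdisj (2*j) (2*i) (by omega) (by omega)).symm
    have hsub2 : ((Finset.range (n+1)).biUnion (fun j => E (2*j))) ⊆ Finset.range (2*n) :=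
      Finset.biUnion_subset.2 (fun j _ => hsub (2*j))
    have hle := Finset.card_le_card hsub2
    rw [key, Finset.card_range] at hle
    omega
  by_cases hc : d = 2*n - 1
  · exfalso
    have hV : ((Finset.range n).biUnion (fun j => E (2*j+1))) = Finset.range (2*n) := by
      apply Finset.eq_of_subset_of_card_le (Finset.biUnion_subset.2 (fun j _ => hsub (2*j+1)))
      have key : ((Finset.range n).biUnion (fun j => E (2*j+1))).card = n*2 := by
        rw [Finset.card_biUnion]
        · rw [Finset.sum_congr rfl
            (fun j hj => hcard (2*j+1) (by rw [Finset.mem_range] at hj; omega))]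
          rw [Finset.sum_const, Finset.card_range, smul_eq_mul]
        · intro i hi j hj hij
          rw [Finset.mem_coe, Finset.mem_range] at hi hj
          rcases Nat.lt_or_ge i j with h|h
          · exact hdisj (2*i+1) (2*j+1) (by omega) (by omega)
          · exact (hdisj (2*j+1) (2*i+1) (by omega) (by omega)).symm
      rw [key, Finset.card_range]
      omega
    have getE1 : ∀ x ∈ E 0, x ∈ E 1 := by
      intro x hx
      have hx2n : x ∈ Finset.range (2*n) := hsub 0 hx
      rw [← hV] at hx2n
      obtain ⟨j, hj, hmemj⟩ := Finset.mem_biUnion.1 hx2n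
      rw [Finset.mem_range] at hj
      rcases Nat.eq_zero_or_pos j with h|h
      · subst h; simpa using hmemj
      · exfalso
        refine hno 0 (2*j+1) (by omega) (by omega) (Or.inl ?_)
        simp only [hE, Finset.mem_insert, Finset.mem_singleton] at hx hmemj
        unfold ShareSlot
        omega
    have h01 : slo (f 0) = slo (f 1) ∧ shi (f 0) = shi (f 1) := by
      have hA := getE1 (slo (f 0)) (by simp [hE])
      have hB := getE1 (shi (f 0)) (by simp [hE])
      simp only [hE, Finset.mem_insert, Finset.mem_singleton] at hA hB
      have w0 : slo (f 0) ≠ shi (f 0) := hwin _ (hmem 0 (by omega))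
      have w1 : slo (f 1) ≠ shi (f 1) := hwin _ (hmem 1 (by omega))
      have l0 := slo_le_shi (f 0)
      have l1 := slo_le_shi (f 1)
      omega
    have hedge12 := hedge 1 (by omega)
    refine hno 0 2 (by omega) (by omega) ?_
    have hs := hedge12.2
    simp only [show (1+1:ℕ) = 2 from rfl] at hs
    unfold SIrel ShareSlot ItlSlot at hs ⊢
    omega
  · omega

end PY
namespace PY

variable {n : ℕ}

/-! ### Layer 6: the non-rigid length bound and the n = 2 synchronisation -/

lemma nonrigid_len {S : Finset (Sym2 (MbarPt n))} (harc : ∀ p ∈ S, IsArc p)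
    {f : ℕ → Sym2 (MbarPt n)} {d : ℕ} {a b : Sym2 (MbarPt n)}
    (hf : IsGPath S f d a b)
    (hno : ∀ t t', t' ≤ d → t + 2 ≤ t' → ¬ SIrel (f t) (f t'))
    (hnr : ∀ t, t < d → ¬((∃ u : Fin n, (Sum.inr u : MbarPt n) ∈ f t ∧
      (Sum.inr u : MbarPt n) ∈ f (t+1)) ∨ ItlSlot (f t) (f (t+1)))) :
    d ≤ n := by
  obtain ⟨h0, hd, hmem, hedge⟩ := hf
  have hch : ∀ t : Fin d, ∃ s : Fin n, (∃ k, (Sum.inl (k,s) : MbarPt n) ∈ f t.1) ∧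
      (∃ c, (Sum.inl (c,s) : MbarPt n) ∈ f (t.1+1)) := by
    intro t
    exact nonrigid_seg (harc _ (hmem t.1 (by omega))).1 (harc _ (hmem (t.1+1) (by omega))).1
      (hedge t.1 t.2).2 (hnr t.1 t.2)
  choose σ hσ1 hσ2 using hch
  have hinj : Function.Injective σ := by
    intro t t' heq
    by_contra hne
    have hlt : t.1 < t'.1 ∨ t'.1 < t.1 := by
      rcases Nat.lt_trichotomy t.1 t'.1 with h|h|h
      · exact Or.inl h
      · exact absurd (Fin.ext h) hne
      · exact Or.inr h
    rcases hlt with h|h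
    · obtain ⟨k, hk⟩ := hσ1 t
      obtain ⟨c, hc⟩ := hσ2 t'
      refine hno t.1 (t'.1+1) (by omega) (by omega) (Or.inl ?_)
      have m1 := sc_mem_slots hk
      have m2 := sc_mem_slots hc
      rw [heq] at m1
      unfold ShareSlot
      simp only [sc] at m1 m2
      omega
    · obtain ⟨k, hk⟩ := hσ1 t'
      obtain ⟨c, hc⟩ := hσ2 t
      refine hno t'.1 (t.1+1) (by omega) (by omega) (Or.inl ?_)
      have m1 := sc_mem_slots hk
      have m2 := sc_mem_slots hc
      rw [← heq] at m1
      unfold ShareSlot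
      simp only [sc] at m1 m2
      omega
  have hcard := Fintype.card_le_of_injective σ hinj
  simpa using hcard

/-- the `n = 2` synchronisation: a single member of the middle family is adjacent to
given members of both end pencils -/
lemma sync_n2 (hn2 : n = 2) {u u' s0 s1 : Fin n} {k0 c0 k1 c1 : ℤ}
    (hus : u.1 ≠ u'.1) (hss : s0.1 ≠ s1.1)
    {p q : Sym2 (MbarPt n)}
    (hp : p ∈ Fam s(Sum.inl (k0, s0), (Sum.inr u : MbarPt n)))
    (hq : q ∈ Fam s(Sum.inl (c1, s1), (Sum.inr u' : MbarPt n))) :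
    ∃ y ∈ Fam s(Sum.inl (c0, s0), (Sum.inl (k1, s1) : MbarPt n)), Adj p y ∧ Adj y q := by
  obtain ⟨m, rfl⟩ := hp
  obtain ⟨m', rfl⟩ := hq
  rw [rotArc_mk, rotPt_m, rotPt_acc, rotArc_mk, rotPt_m, rotPt_acc]
  set tp := k0 - m with htp
  set tq := c1 - m' with htq
  set c := k1 - c0 with hc
  have hu2 : u.1 < 2 := by omega
  have hu'2 : u'.1 < 2 := by omega
  have hs02 : s0.1 < 2 := by omega
  have hs12 : s1.1 < 2 := by omega
  have hmemy : ∀ r : ℤ, s(Sum.inl (r, s0), (Sum.inl (r + c, s1) : MbarPt n)) ∈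
      Fam s(Sum.inl (c0, s0), (Sum.inl (k1, s1) : MbarPt n)) := by
    intro r
    exact mm_mem2 c0 s0 k1 s1 (by omega)
  rcases (by omega : u.1 = 0 ∧ s0.1 = 0 ∨ u.1 = 0 ∧ s0.1 = 1 ∨ u.1 = 1 ∧ s0.1 = 0 ∨
      u.1 = 1 ∧ s0.1 = 1) with ⟨hu, hs0⟩|⟨hu, hs0⟩|⟨hu, hs0⟩|⟨hu, hs0⟩
  · -- case A : u = 0, s0 = 0, s1 = 1, u' = 1
    set r := min (tp - 1) (tq - c - 1) with hr
    have hr1 : r ≤ tp - 1 := min_le_left _ _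
    have hr2 : r ≤ tq - c - 1 := min_le_right _ _
    refine ⟨s(Sum.inl (r, s0), Sum.inl (r + c, s1)), hmemy r, ?_, ?_⟩
    · have cross1 : Crosses s(Sum.inr u, (Sum.inl (tp, s0) : MbarPt n))
          s(Sum.inl (r, s0), Sum.inl (r + c, s1)) :=
        crosses_of (lt_am.2 (by omega)) (lt_mm_same.2 (by omega))
          (Or.inr (lt_mm.2 (Or.inl (by omega))))
      rw [Sym2.eq_swap (a := (Sum.inr u : MbarPt n))] at cross1
      exact Or.inl cross1
    · have cross2 : Crosses s(Sum.inl (r, s0), (Sum.inl (r + c, s1) : MbarPt n))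
          s(Sum.inr u', Sum.inl (tq, s1)) :=
        crosses_of (lt_ma.2 (by omega)) (lt_am.2 (by omega))
          (Or.inr (lt_mm_same.2 (by omega)))
      rw [Sym2.eq_swap (a := (Sum.inr u' : MbarPt n))] at cross2
      exact Or.inl cross2
  · -- case B : u = 0, s0 = 1, s1 = 0, u' = 1
    set r := max (tp + 1) (tq - c + 1) with hr
    have hr1 : tp + 1 ≤ r := le_max_left _ _
    have hr2 : tq - c + 1 ≤ r := le_max_right _ _
    refine ⟨s(Sum.inl (r, s0), Sum.inl (r + c, s1)), hmemy r, ?_, ?_⟩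
    · have cross1 : Crosses s(Sum.inr u, (Sum.inl (tp, s0) : MbarPt n))
          s(Sum.inl (r + c, s1), Sum.inl (r, s0)) :=
        crosses_of (lt_am.2 (by omega)) (lt_mm.2 (Or.inl (by omega)))
          (Or.inr (lt_mm_same.2 (by omega)))
      rw [Sym2.eq_swap (a := (Sum.inr u : MbarPt n)),
        Sym2.eq_swap (a := (Sum.inl (r + c, s1) : MbarPt n))] at cross1
      exact Or.inl cross1
    · have cross2 : Crosses s(Sum.inl (tq, s1), (Sum.inr u' : MbarPt n))
          s(Sum.inl (r + c, s1), Sum.inl (r, s0)) :=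
        crosses_of (lt_mm_same.2 (by omega)) (lt_ma.2 (by omega))
          (Or.inr (lt_am.2 (by omega)))
      rw [Sym2.eq_swap (a := (Sum.inl (r + c, s1) : MbarPt n))] at cross2
      exact Or.inl (crosses_symm cross2)
  · -- case C : u = 1, s0 = 0, s1 = 1, u' = 0
    set r := max (tp + 1) (tq - c + 1) with hr
    have hr1 : tp + 1 ≤ r := le_max_left _ _
    have hr2 : tq - c + 1 ≤ r := le_max_right _ _
    refine ⟨s(Sum.inl (r, s0), Sum.inl (r + c, s1)), hmemy r, ?_, ?_⟩
    · exact Or.inl (crosses_of (lt_mm_same.2 (by omega)) (lt_ma.2 (by omega))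
        (Or.inr (lt_am.2 (by omega))))
    · have cross2 : Crosses s(Sum.inr u', (Sum.inl (tq, s1) : MbarPt n))
          s(Sum.inl (r, s0), Sum.inl (r + c, s1)) :=
        crosses_of (lt_am.2 (by omega)) (lt_mm.2 (Or.inl (by omega)))
          (Or.inr (lt_mm_same.2 (by omega)))
      rw [Sym2.eq_swap (a := (Sum.inr u' : MbarPt n))] at cross2
      exact Or.inl (crosses_symm cross2)
  · -- case D : u = 1, s0 = 1, s1 = 0, u' = 0
    set r := min (tp - 1) (tq - c - 1) with hr
    have hr1 : r ≤ tp - 1 := min_le_left _ _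
    have hr2 : r ≤ tq - c - 1 := min_le_right _ _
    refine ⟨s(Sum.inl (r, s0), Sum.inl (r + c, s1)), hmemy r, ?_, ?_⟩
    · have cross1 : Crosses s(Sum.inr u, (Sum.inl (tp, s0) : MbarPt n))
          s(Sum.inl (r, s0), Sum.inl (r + c, s1)) :=
        crosses_of (lt_am.2 (by omega)) (lt_mm_same.2 (by omega))
          (Or.inl (lt_ma.2 (by omega)))
      rw [Sym2.eq_swap (a := (Sum.inr u : MbarPt n))] at cross1
      exact Or.inl cross1
    · have cross2 : Crosses s(Sum.inr u', (Sum.inl (tq, s1) : MbarPt n))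
          s(Sum.inl (r + c, s1), Sum.inl (r, s0)) :=
        crosses_of (lt_am.2 (by omega)) (lt_mm_same.2 (by omega))
          (Or.inr (lt_mm.2 (Or.inl (by omega))))
      rw [Sym2.eq_swap (a := (Sum.inr u' : MbarPt n)),
        Sym2.eq_swap (a := (Sum.inl (r + c, s1) : MbarPt n))] at cross2
      exact Or.inl (crosses_symm cross2)

end PY
/-- Theorem 5.15 of the paper: for `n ≥ 2`, every finite set `S` of arcs
of `M̄ₙ` which is connected, has complete orbit and is minimal has homological length at
most `2n - 2`. Equivalently, no minimal strong generator of the Paquette–Yıldırım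
category `C̄ₙ` has homological length greater than `2n - 2`, whence the Orlov spectrum of
`C̄ₙ` is contained in `{1, …, 2n - 2}`. -/
theorem homological_length_le_of_minimal_generator (n : ℕ) (hn : 2 ≤ n)
    (S : Finset (Sym2 (MbarPt n)))
    (harc : ∀ p ∈ S, IsArc p)
    (hconn : ConnectedArcs (↑S : Set (Sym2 (MbarPt n))))
    (horb : CompleteOrbit (↑S : Set (Sym2 (MbarPt n))))
    (hmin : MinimalArcSet (↑S : Set (Sym2 (MbarPt n)))) :
    HLenLE (↑S : Set (Sym2 (MbarPt n))) (2 * n - 2) := by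
  classical
  intro p hp q hq
  have hn0 : 0 < n := by omega
  have hdup := PY.no_dup hconn horb hmin
  have hwin := PY.no_window hn0 harc hconn horb hmin
  obtain ⟨ℓp, hℓpS, mp, hpr⟩ := hp
  obtain ⟨ℓq, hℓqS, mq, hqr⟩ := hq
  have hp' : p ∈ RClos (↑S : Set (Sym2 (MbarPt n))) := ⟨ℓp, hℓpS, mp, hpr⟩
  have hq' : q ∈ RClos (↑S : Set (Sym2 (MbarPt n))) := ⟨ℓq, hℓqS, mq, hqr⟩
  have hfp : p ∈ PY.Fam ℓp := ⟨mp, hpr⟩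
  have hfq : q ∈ PY.Fam ℓq := ⟨mq, hqr⟩
  have hℓpS' : ℓp ∈ S := Finset.mem_coe.1 hℓpS
  have hℓqS' : ℓq ∈ S := Finset.mem_coe.1 hℓqS
  obtain ⟨m0, hch⟩ := hconn p hp' q hq'
  obtain ⟨d, f, hgp, hno, hdist⟩ := PY.shortest_gpath
    (PY.exists_gpath harc hdup m0 p q ℓp ℓq hℓpS' hℓqS' hfp hfq hch)
  have hdle := PY.gpath_len_le hn hwin hgp hno
  obtain ⟨hf0, hfd, hmemS, hedges⟩ := hgp
  rw [← hf0] at hfp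
  rw [← hfd] at hfq
  -- forward chains: for each t ≤ d, a member of Fam (f t) within t steps of p
  have hfwd : ∀ t, t ≤ d → ∃ x ∈ PY.Fam (f t),
      AdjChain (RClos (↑S : Set (Sym2 (MbarPt n)))) t p x := by
    intro t
    induction t with
    | zero => intro _; exact ⟨p, hfp, rfl⟩
    | succ t ih =>
      intro ht
      obtain ⟨x, hxF, hxc⟩ := ih (by omega)
      have hedge := hedges t (by omega)
      have hnf : f (t+1) ∉ PY.Fam (f t) := fun hc =>
        hdup (f t) (hmemS t (by omega)) (f (t+1)) (hmemS (t+1) ht) hedge.1 hc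
      obtain ⟨y, hyF, hxy⟩ := PY.step_edge (harc _ (hmemS t (by omega)))
        (harc _ (hmemS (t+1) ht)) (hwin _ (hmemS (t+1) ht)) hnf hedge.2 hxF
      exact ⟨y, hyF, PY.chain_snoc hxc (PY.Fam_sub_RClos (hmemS (t+1) ht) hyF) hxy⟩
  -- backward chains: for each t ≤ d, a member of Fam (f (d-t)) within t steps of q
  have hbwd : ∀ t, t ≤ d → ∃ y ∈ PY.Fam (f (d - t)),
      AdjChain (RClos (↑S : Set (Sym2 (MbarPt n)))) t y q := by
    intro t
    induction t with
    | zero =>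
      intro _
      refine ⟨q, ?_, rfl⟩
      have e : d - 0 = d := by omega
      rw [e]
      exact hfq
    | succ t ih =>
      intro ht
      obtain ⟨y, hyF, hyc⟩ := ih (by omega)
      have he1 : d - t - 1 + 1 = d - t := by omega
      have hedge := hedges (d - t - 1) (by omega)
      rw [he1] at hedge
      have hnf : f (d-t-1) ∉ PY.Fam (f (d-t)) := fun hc =>
        hdup _ (hmemS (d-t) (by omega)) _ (hmemS (d-t-1) (by omega)) (Ne.symm hedge.1) hc
      obtain ⟨y', hy'F, hyy'⟩ := PY.step_edge (harc _ (hmemS (d-t) (by omega)))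
        (harc _ (hmemS (d-t-1) (by omega))) (hwin _ (hmemS (d-t-1) (by omega))) hnf
        (PY.SIrel_symm hedge.2) hyF
      have e2 : d - (t+1) = d - t - 1 := by omega
      rw [e2]
      exact ⟨y', hy'F, ⟨y, PY.Fam_sub_RClos (hmemS (d-t) (by omega)) hyF,
        PY.adj_symm hyy', hyc⟩⟩
  by_cases hd23 : d + 1 ≤ 2*n - 2
  · -- easy case: forward chain plus one internal step
    obtain ⟨x, hxF, hxc⟩ := hfwd d (le_refl d)
    rcases PY.internal_step (harc _ (hmemS d (le_refl d))) (hwin _ (hmemS d (le_refl d)))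
        hxF hfq with heq|hadj
    · exact ⟨d, by omega, heq ▸ hxc⟩
    · exact ⟨d+1, hd23, PY.chain_snoc hxc hq' hadj⟩
  · -- then d = 2n-2 exactly
    have hdeq : d = 2*n - 2 := by omega
    by_cases hrig : ∃ t0, t0 < d ∧ ((∃ u : Fin n, (Sum.inr u : MbarPt n) ∈ f t0 ∧
        (Sum.inr u : MbarPt n) ∈ f (t0+1)) ∨ PY.ItlSlot (f t0) (f (t0+1)))
    · -- a rigid edge: meet in the middle, total length d
      obtain ⟨t0, ht0, hr⟩ := hrig
      obtain ⟨x, hxF, hxc⟩ := hfwd t0 (by omega)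
      obtain ⟨y', hy'F, hy'c⟩ := hbwd (d - (t0+1)) (by omega)
      have e3 : d - (d - (t0+1)) = t0+1 := by omega
      rw [e3] at hy'F
      have hnf : f (t0+1) ∉ PY.Fam (f t0) := fun hc =>
        hdup (f t0) (hmemS t0 (by omega)) (f (t0+1)) (hmemS (t0+1) (by omega))
          (hedges t0 ht0).1 hc
      have hadjxy : Adj x y' := PY.step_rigid (harc _ (hmemS t0 (by omega)))
        (harc _ (hmemS (t0+1) (by omega))) hnf hr hxF hy'F
      have hch1 : AdjChain (RClos (↑S : Set (Sym2 (MbarPt n)))) (t0+1) p y' :=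
        PY.chain_snoc hxc (PY.Fam_sub_RClos (hmemS (t0+1) (by omega)) hy'F) hadjxy
      refine ⟨(t0+1) + (d - (t0+1)), by omega, PY.chain_append hch1 hy'c⟩
    · -- no rigid edge: d ≤ n, so n = 2 and d = 2; synchronise through the middle family
      push_neg at hrig
      have hnr : ∀ t, t < d → ¬((∃ u : Fin n, (Sum.inr u : MbarPt n) ∈ f t ∧
          (Sum.inr u : MbarPt n) ∈ f (t+1)) ∨ PY.ItlSlot (f t) (f (t+1))) := by
        intro t ht
        have h := hrig t ht
        rintro (⟨u, h1, h2⟩|h3)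
        · exact h.1 u h1 h2
        · exact h.2 h3
      have hdn : d ≤ n := PY.nonrigid_len harc ⟨hf0, hfd, hmemS, hedges⟩ hno hnr
      have hn2 : n = 2 := by omega
      have hd2 : d = 2 := by omega
      -- shapes of f 0, f 1, f 2
      have hedge0 := hedges 0 (by omega)
      have hedge1 := hedges 1 (by omega)
      obtain ⟨s0, ⟨k0, hk0⟩, ⟨c0, hc0⟩⟩ := PY.nonrigid_seg (harc _ (hmemS 0 (by omega))).1
        (harc _ (hmemS 1 (by omega))).1 hedge0.2 (by simpa using hnr 0 (by omega))
      obtain ⟨s1, ⟨k1, hk1⟩, ⟨c1, hc1⟩⟩ := PY.nonrigid_seg (harc _ (hmemS 1 (by omega))).1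
        (harc _ (hmemS 2 (by omega))).1
        (by simpa using hedge1.2) (by simpa using hnr 1 (by omega))
      have hno02 := hno 0 2 (by omega) (by omega)
      have hss : s0.1 ≠ s1.1 := by
        intro heq
        refine hno02 (Or.inl ?_)
        have m1 := PY.sc_mem_slots hk0
        have m2 := PY.sc_mem_slots hc1
        unfold PY.ShareSlot
        simp only [PY.sc] at m1 m2
        omega
      -- f 1 = s(inl(c0,s0), inl(k1,s1))
      obtain ⟨e1, he1⟩ := PY.mem_rep hc0
      have hf1 : f 1 = s(Sum.inl (c0, s0), (Sum.inl (k1, s1) : MbarPt n)) := by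
        rw [he1] at hk1
        rw [Sym2.mem_iff] at hk1
        rcases hk1 with h|h
        · exfalso
          have := congrArg PY.sc h
          simp only [PY.sc] at this
          omega
        · rw [he1, ← h]
      -- f 0 = s(inl(k0,s0), inr u)
      obtain ⟨e0, he0⟩ := PY.mem_rep hk0
      obtain ⟨u, hu⟩ : ∃ u : Fin n, e0 = Sum.inr u := by
        cases e0 with
        | inr u => exact ⟨u, rfl⟩
        | inl pr =>
          obtain ⟨b, s⟩ := pr
          exfalso
          have hs2 : s.1 < 2 := by omega
          have hs0lt : s0.1 < 2 := by omega
          have hs1lt : s1.1 < 2 := by omega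
          rcases (by omega : s.1 = s0.1 ∨ s.1 = s1.1) with h|h
          · -- f 0 would be a window
            refine hwin (f 0) (hmemS 0 (by omega)) ?_
            rw [he0, PY.slo_mk, PY.shi_mk]
            simp only [PY.sc]
            omega
          · -- f 0 and f 2 would share segment s1
            refine hno02 (Or.inl ?_)
            have m1 := PY.sc_mem_slots (he0 ▸ (Sym2.mem_mk_right (Sum.inl (k0, s0) : MbarPt n)
              (Sum.inl (b, s) : MbarPt n)))
            have m2 := PY.sc_mem_slots hc1
            unfold PY.ShareSlot
            simp only [PY.sc] at m1 m2
            omega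
      rw [hu] at he0
      -- f 2 = s(inl(c1,s1), inr u')
      obtain ⟨e2, he2⟩ := PY.mem_rep hc1
      obtain ⟨u', hu'⟩ : ∃ u' : Fin n, e2 = Sum.inr u' := by
        cases e2 with
        | inr u' => exact ⟨u', rfl⟩
        | inl pr =>
          obtain ⟨b, s⟩ := pr
          exfalso
          have hs2 : s.1 < 2 := by omega
          have hs0lt : s0.1 < 2 := by omega
          have hs1lt : s1.1 < 2 := by omega
          rcases (by omega : s.1 = s1.1 ∨ s.1 = s0.1) with h|h
          · refine hwin (f 2) (hmemS 2 (by omega)) ?_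
            rw [he2, PY.slo_mk, PY.shi_mk]
            simp only [PY.sc]
            omega
          · refine hno02 (Or.inl ?_)
            have m1 := PY.sc_mem_slots hk0
            have m2 := PY.sc_mem_slots (he2 ▸ (Sym2.mem_mk_right (Sum.inl (c1, s1) : MbarPt n)
              (Sum.inl (b, s) : MbarPt n)))
            unfold PY.ShareSlot
            simp only [PY.sc] at m1 m2
            omega
      rw [hu'] at he2
      have hus : u.1 ≠ u'.1 := by
        intro heq
        refine hno02 (Or.inl ?_)
        have m1 := PY.sc_mem_slots (he0 ▸ (Sym2.mem_mk_right (Sum.inl (k0, s0) : MbarPt n)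
          (Sum.inr u : MbarPt n)))
        have m2 := PY.sc_mem_slots (he2 ▸ (Sym2.mem_mk_right (Sum.inl (c1, s1) : MbarPt n)
          (Sum.inr u' : MbarPt n)))
        unfold PY.ShareSlot
        simp only [PY.sc] at m1 m2
        omega
      -- members
      have hfp0 : p ∈ PY.Fam s(Sum.inl (k0, s0), (Sum.inr u : MbarPt n)) := he0 ▸ hfp
      have hfq2 : q ∈ PY.Fam s(Sum.inl (c1, s1), (Sum.inr u' : MbarPt n)) := by
        rw [← he2, ← hd2]
        exact hfq
      obtain ⟨y, hyF, hpy, hyq⟩ := PY.sync_n2 hn2 hus hss hfp0 hfq2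
      have hyT : y ∈ RClos (↑S : Set (Sym2 (MbarPt n))) :=
        PY.Fam_sub_RClos (hmemS 1 (by omega)) (hf1 ▸ hyF)
      exact ⟨2, by omega, ⟨y, hyT, hpy, ⟨q, hq', hyq, rfl⟩⟩⟩
end

section
/- Let n ≥ 1 and let d be an integer with 1 ≤ d ≤ 2n−2. Then there exists a finite set S of arcs of M̄_n which is connected, has complete orbit, and has homological length exactly d. (Equivalently: the Paquette–Yıldırım category C̄_n possesses a classical generator of homological length d.) -/
namespace PYGen
open Sum

variable {n : ℕ}

/-! ### Generic lemmas about crossing -/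

lemma crosses_of_lt {a b c d : MbarPt n} (h1 : toCircle a < toCircle b)
    (h2 : toCircle b < toCircle c) (h3 : toCircle c < toCircle d) :
    Crosses s(a, c) s(b, d) :=
  ⟨a, c, b, d, rfl, rfl, Or.inl ⟨h1, h2⟩, Or.inr (Or.inr ⟨h1.trans h2, h3⟩)⟩

lemma not_crosses_expl {x y z w : MbarPt n} (hxy : toCircle x ≤ toCircle y)
    (h1 : toCircle y < toCircle z) (h2 : toCircle y < toCircle w) :
    ¬ Crosses s(x, y) s(z, w) := by
  rintro ⟨a, b, c, e, hp, hq, H1, H2⟩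
  rw [Sym2.eq_iff] at hp hq
  unfold CycSBtw at H1 H2
  rcases hp with ⟨rfl, rfl⟩ | ⟨rfl, rfl⟩ <;> rcases hq with ⟨rfl, rfl⟩ | ⟨rfl, rfl⟩ <;>
    rcases H1 with ⟨u1, u2⟩ | ⟨u1, u2⟩ | ⟨u1, u2⟩ <;>
    rcases H2 with ⟨v1, v2⟩ | ⟨v1, v2⟩ | ⟨v1, v2⟩ <;> linarith

lemma not_crosses_nested {x y z w : MbarPt n} (h1 : toCircle x < toCircle z)
    (h2 : toCircle x < toCircle w) (h3 : toCircle z < toCircle y)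
    (h4 : toCircle w < toCircle y) :
    ¬ Crosses s(x, y) s(z, w) := by
  rintro ⟨a, b, c, e, hp, hq, H1, H2⟩
  rw [Sym2.eq_iff] at hp hq
  unfold CycSBtw at H1 H2
  rcases hp with ⟨rfl, rfl⟩ | ⟨rfl, rfl⟩ <;> rcases hq with ⟨rfl, rfl⟩ | ⟨rfl, rfl⟩ <;>
    rcases H1 with ⟨u1, u2⟩ | ⟨u1, u2⟩ | ⟨u1, u2⟩ <;>
    rcases H2 with ⟨v1, v2⟩ | ⟨v1, v2⟩ | ⟨v1, v2⟩ <;> linarith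

lemma crosses_symm {p q : Sym2 (MbarPt n)} (h : Crosses p q) : Crosses q p := by
  obtain ⟨x, y, z, w, hp, hq, H1, H2⟩ := h
  refine ⟨z, w, y, x, hq, by rw [hp, Sym2.eq_swap], ?_, ?_⟩ <;>
  · unfold CycSBtw at *
    rcases H1 with ⟨u1, u2⟩ | ⟨u1, u2⟩ | ⟨u1, u2⟩ <;>
      rcases H2 with ⟨v1, v2⟩ | ⟨v1, v2⟩ | ⟨v1, v2⟩ <;>
      first
        | exact Or.inl ⟨by linarith, by linarith⟩
        | exact Or.inr (Or.inl ⟨by linarith, by linarith⟩)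
        | exact Or.inr (Or.inr ⟨by linarith, by linarith⟩)

lemma adj_symm {p q : Sym2 (MbarPt n)} (h : Adj p q) : Adj q p := by
  rcases h with h | ⟨hne, i, h1, h2⟩
  · exact Or.inl (crosses_symm h)
  · exact Or.inr ⟨hne.symm, i, h2, h1⟩

/-! ### chains -/

lemma adjChain_snoc {T : Set (Sym2 (MbarPt n))} :
    ∀ m {p q r}, AdjChain T m p q → Adj q r → r ∈ T → AdjChain T (m+1) p r := by
  intro m
  induction m with
  | zero => rintro p q r rfl h hr; exact ⟨r, hr, h, rfl⟩
  | succ m ih =>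
    rintro p q r ⟨u, hu, hpu, hch⟩ h hr
    exact ⟨u, hu, hpu, ih hch h hr⟩

lemma adjChain_rev {T : Set (Sym2 (MbarPt n))} :
    ∀ m {p q}, p ∈ T → AdjChain T m p q → AdjChain T m q p := by
  intro m
  induction m with
  | zero => rintro p q _ rfl; rfl
  | succ m ih =>
    rintro p q hp ⟨u, hu, hpu, hch⟩
    exact adjChain_snoc m (ih hu hch) (adj_symm hpu) hp

/-! ### fractional part -/

noncomputable def g (k : ℤ) : ℝ := (k : ℝ) / (2 * (|(k : ℝ)| + 1))

lemma g_abs_lt (k : ℤ) : |g k| < 1/2 := by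
  have h1 : (0:ℝ) < 2 * (|(k:ℝ)| + 1) := by positivity
  rw [g, abs_div, abs_of_pos h1, div_lt_iff₀ h1]
  have := abs_nonneg (k : ℝ)
  nlinarith

lemma g_mono {x y : ℤ} (h : x < y) : g x < g y := by
  have hx : ((x:ℝ)) < (y:ℝ) := by exact_mod_cast h
  have h1 : (0:ℝ) < 2 * (|(x:ℝ)| + 1) := by positivity
  have h2 : (0:ℝ) < 2 * (|(y:ℝ)| + 1) := by positivity
  rw [g, g, div_lt_div_iff₀ h1 h2]
  rcases le_or_gt 0 (x:ℝ) with hx0 | hx0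
  · have hy0 : (0:ℝ) ≤ y := by linarith
    rw [abs_of_nonneg hx0, abs_of_nonneg hy0]; nlinarith
  · rcases le_or_gt 0 (y:ℝ) with hy0 | hy0
    · rw [abs_of_neg hx0, abs_of_nonneg hy0]; nlinarith
    · rw [abs_of_neg hx0, abs_of_neg hy0]; nlinarith

/-! ### the construction -/

section Constr
variable (hn : 0 < n)

def fi (j : ℕ) : Fin n := ⟨j % n, Nat.mod_lt _ hn⟩
def acc (j : ℕ) : MbarPt n := inr (fi hn j)
def mk (x : ℤ) (i : ℕ) : MbarPt n := inl (x, fi hn i)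

lemma tc_acc {j : ℕ} (hj : j < n) : toCircle (acc hn j) = j := by
  simp [toCircle, acc, fi, Nat.mod_eq_of_lt hj]

lemma tc_mk (x : ℤ) {i : ℕ} (hi : i < n) :
    toCircle (mk hn x i) = (i : ℝ) + 1/2 + g x := by
  simp [toCircle, mk, fi, g, Nat.mod_eq_of_lt hi]

lemma tc_mk_gt (x : ℤ) {i : ℕ} (hi : i < n) : (i : ℝ) < toCircle (mk hn x i) := by
  rw [tc_mk hn x hi]
  have := abs_lt.mp (g_abs_lt x)
  linarith [this.1]

lemma tc_mk_lt (x : ℤ) {i : ℕ} (hi : i < n) : toCircle (mk hn x i) < (i : ℝ) + 1 := by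
  rw [tc_mk hn x hi]
  have := abs_lt.mp (g_abs_lt x)
  linarith [this.2]

lemma tc_mk_mono {x y : ℤ} (h : x < y) {i : ℕ} (hi : i < n) :
    toCircle (mk hn x i) < toCircle (mk hn y i) := by
  rw [tc_mk hn x hi, tc_mk hn y hi]
  have := g_mono h; linarith

lemma fi_eq_iff {a b : ℕ} (ha : a < n) (hb : b < n) : fi hn a = fi hn b ↔ a = b := by
  unfold fi
  rw [Fin.mk.injEq, Nat.mod_eq_of_lt ha, Nat.mod_eq_of_lt hb]

lemma mk_ne_acc (x : ℤ) (i j : ℕ) : mk hn x i ≠ acc hn j := by simp [mk, acc]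

/-- the path arcs -/
def Pa (t : ℕ) (x : ℤ) : Sym2 (MbarPt n) :=
  if t % 2 = 0 then s(mk hn x (t/2), acc hn (t/2)) else s(mk hn x (t/2), acc hn (t/2+1))

/-- the segment leaves -/
def SL (i : ℕ) (x : ℤ) : Sym2 (MbarPt n) := s(mk hn x i, acc hn 1)

/-- the limit leaves -/
def LL (j : ℕ) : Sym2 (MbarPt n) := s(acc hn 1, acc hn j)

lemma rot_mk (m x : ℤ) (i : ℕ) : rotPt m (mk hn x i) = mk hn (x - m) i := rfl
lemma rot_acc (m : ℤ) (j : ℕ) : rotPt m (acc hn j) = acc hn j := rfl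

lemma rot_Pa (m : ℤ) (t : ℕ) (x : ℤ) : rotArc m (Pa hn t x) = Pa hn t (x - m) := by
  unfold Pa rotArc
  split_ifs <;> rw [Sym2.map_pair_eq] <;> rfl

lemma rot_SL (m : ℤ) (i : ℕ) (x : ℤ) : rotArc m (SL hn i x) = SL hn i (x - m) := by
  unfold SL rotArc; rw [Sym2.map_pair_eq]; rfl

lemma rot_LL (m : ℤ) (j : ℕ) : rotArc m (LL hn j) = LL hn j := by
  unfold LL rotArc; rw [Sym2.map_pair_eq]; rfl

variable (d : ℕ)

def Sgen : Finset (Sym2 (MbarPt n)) :=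
  (((Finset.range (d+1)).image fun t => Pa hn t 0) ∪
  ((Finset.Ico (d/2+1) n).image fun i => SL hn i 0)) ∪
  ((Finset.Ico ((d+1)/2+1) n).image fun j => LL hn j)

lemma mem_T {q : Sym2 (MbarPt n)} :
    q ∈ RClos (↑(Sgen hn d) : Set (Sym2 (MbarPt n))) ↔
      (∃ t x, t ≤ d ∧ q = Pa hn t x) ∨
      (∃ i x, (d/2+1 ≤ i ∧ i < n) ∧ q = SL hn i x) ∨
      (∃ j, ((d+1)/2+1 ≤ j ∧ j < n) ∧ q = LL hn j) := by
  constructor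
  · rintro ⟨p, hp, m, rfl⟩
    simp only [Finset.coe_union, Finset.coe_image, Set.mem_union, Set.mem_image,
      Finset.mem_coe, Finset.mem_range, Finset.mem_Ico, Sgen] at hp
    rcases hp with (⟨t, ht, rfl⟩ | ⟨i, hi, rfl⟩) | ⟨j, hj, rfl⟩
    · exact Or.inl ⟨t, 0 - m, Nat.lt_succ_iff.mp ht, rot_Pa hn m t 0⟩
    · exact Or.inr (Or.inl ⟨i, 0 - m, hi, rot_SL hn m i 0⟩)
    · exact Or.inr (Or.inr ⟨j, hj, rot_LL hn m j⟩)
  · have hmem : ∀ r : Sym2 (MbarPt n), r ∈ Sgen hn d → ∀ m : ℤ, ∀ q,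
        q = rotArc m r → q ∈ RClos (↑(Sgen hn d) : Set (Sym2 (MbarPt n))) := by
      intro r hr m q hq
      exact ⟨r, by exact_mod_cast hr, m, hq⟩
    rintro (⟨t, x, ht, rfl⟩ | ⟨i, x, hi, rfl⟩ | ⟨j, hj, rfl⟩)
    · refine hmem _ ?_ (-x) _ (by rw [rot_Pa, zero_sub, neg_neg])
      simp only [Sgen, Finset.mem_union, Finset.mem_image, Finset.mem_range]
      exact Or.inl (Or.inl ⟨t, Nat.lt_succ_iff.mpr ht, rfl⟩)
    · refine hmem _ ?_ (-x) _ (by rw [rot_SL, zero_sub, neg_neg])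
      simp only [Sgen, Finset.mem_union, Finset.mem_image, Finset.mem_Ico]
      exact Or.inl (Or.inr ⟨i, hi, rfl⟩)
    · refine hmem _ ?_ 0 _ (by rw [rot_LL])
      simp only [Sgen, Finset.mem_union, Finset.mem_image, Finset.mem_Ico]
      exact Or.inr ⟨j, hj, rfl⟩

/-! ### basic facts about the arcs -/

def accIdx (t : ℕ) : ℕ := if t % 2 = 0 then t/2 else t/2+1

lemma Pa_even {t : ℕ} (h : t % 2 = 0) (x : ℤ) :
    Pa hn t x = s(mk hn x (t/2), acc hn (t/2)) := by simp [Pa, h]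

lemma Pa_odd {t : ℕ} (h : t % 2 = 1) (x : ℤ) :
    Pa hn t x = s(mk hn x (t/2), acc hn (t/2+1)) := by simp [Pa, h]

lemma acc_mem_Pa (t : ℕ) (x : ℤ) : acc hn (accIdx t) ∈ Pa hn t x := by
  rcases Nat.mod_two_eq_zero_or_one t with h | h
  · rw [Pa_even hn h, Sym2.mem_iff]; right; simp [accIdx, h]
  · rw [Pa_odd hn h, Sym2.mem_iff]; right; simp [accIdx, h]

lemma mem_Pa_inr {t : ℕ} {x : ℤ} {a : Fin n} (h : (inr a : MbarPt n) ∈ Pa hn t x) :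
    a = fi hn (accIdx t) := by
  rcases Nat.mod_two_eq_zero_or_one t with ht | ht
  · rw [Pa_even hn ht, Sym2.mem_iff] at h
    rcases h with h | h
    · exact absurd h (by simp [mk])
    · simp only [acc, inr.injEq] at h; simp [h, accIdx, ht]
  · rw [Pa_odd hn ht, Sym2.mem_iff] at h
    rcases h with h | h
    · exact absurd h (by simp [mk])
    · simp only [acc, inr.injEq] at h; simp [h, accIdx, ht]

lemma mem_SL_inr {i : ℕ} {x : ℤ} {a : Fin n} (h : (inr a : MbarPt n) ∈ SL hn i x) :
    a = fi hn 1 := by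
  rw [SL, Sym2.mem_iff] at h
  rcases h with h | h
  · exact absurd h (by simp [mk])
  · simpa [acc] using h

lemma mem_LL_inr {j : ℕ} {a : Fin n} (h : (inr a : MbarPt n) ∈ LL hn j) :
    a = fi hn 1 ∨ a = fi hn j := by
  rw [LL, Sym2.mem_iff] at h
  rcases h with h | h
  · left; simpa [acc] using h
  · right; simpa [acc] using h

lemma acc1_mem_SL (i : ℕ) (x : ℤ) : acc hn 1 ∈ SL hn i x := by
  rw [SL, Sym2.mem_iff]; right; rfl

lemma acc1_mem_LL (j : ℕ) : acc hn 1 ∈ LL hn j := by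
  rw [LL, Sym2.mem_iff]; left; rfl

lemma acc1_mem_Pa1 (x : ℤ) : acc hn 1 ∈ Pa hn 1 x := acc_mem_Pa hn 1 x

lemma acc1_mem_Pa2 (x : ℤ) : acc hn 1 ∈ Pa hn 2 x := acc_mem_Pa hn 2 x

lemma adj_of_accPt (a : ℕ) {p q : Sym2 (MbarPt n)} (hne : p ≠ q) (hp : acc hn a ∈ p)
    (hq : acc hn a ∈ q) : Adj p q := Or.inr ⟨hne, fi hn a, hp, hq⟩

lemma mkacc_eq_iff {x x' : ℤ} {i i' j j' : ℕ} :
    s(mk hn x i, acc hn j) = s(mk hn x' i', acc hn j') ↔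
      (x = x' ∧ fi hn i = fi hn i' ∧ fi hn j = fi hn j') := by
  rw [Sym2.eq_iff]
  constructor
  · rintro (⟨h1, h2⟩ | ⟨h1, h2⟩)
    · simp only [mk, inl.injEq, Prod.mk.injEq] at h1
      simp only [acc, inr.injEq] at h2
      exact ⟨h1.1, h1.2, h2⟩
    · exact absurd h1 (by simp [mk, acc])
  · rintro ⟨rfl, h2, h3⟩
    left
    exact ⟨by simp [mk, h2], by simp [acc, h3]⟩

lemma mkacc_ne_LLshape (x : ℤ) (i j a b : ℕ) :
    s(mk hn x i, acc hn j) ≠ s(acc hn a, acc hn b) := by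
  intro h
  rw [Sym2.eq_iff] at h
  rcases h with ⟨h1, -⟩ | ⟨h1, -⟩ <;> exact (mk_ne_acc hn x i _) h1

lemma isArc_mkacc (x : ℤ) (i j : ℕ) : IsArc s(mk hn x i, acc hn j) := by
  constructor
  · rw [Sym2.mk_isDiag_iff]; exact mk_ne_acc hn x i j
  · intro k i' heq
    rw [Sym2.eq_iff] at heq
    rcases heq with ⟨-, h2⟩ | ⟨-, h2⟩ <;> exact absurd h2 (by simp [acc])

lemma isArc_accacc {a b : ℕ} (ha : a < n) (hb : b < n) (hab : a ≠ b) :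
    IsArc s(acc hn a, acc hn b) := by
  constructor
  · rw [Sym2.mk_isDiag_iff]
    simp only [acc, inr.injEq]
    rw [fi_eq_iff hn ha hb]
    exact hab
  · intro k i' heq
    rw [Sym2.eq_iff] at heq
    rcases heq with ⟨h1, -⟩ | ⟨h1, -⟩ <;> exact absurd h1 (by simp [acc])

/-! ### positive adjacency -/

variable (d : ℕ)

lemma adj_sameorbit (hdn : d + 2 ≤ 2*n) {t : ℕ} (ht : t ≤ d) {x x' : ℤ}
    (hxx : x ≠ x') : Adj (Pa hn t x) (Pa hn t x') := by
  refine Or.inr ⟨?_, fi hn (accIdx t), acc_mem_Pa hn t x, acc_mem_Pa hn t x'⟩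
  rcases Nat.mod_two_eq_zero_or_one t with ht0 | ht0 <;>
    [rw [Pa_even hn ht0, Pa_even hn ht0]; rw [Pa_odd hn ht0, Pa_odd hn ht0]] <;>
    · intro h
      rw [mkacc_eq_iff] at h
      exact hxx h.1

lemma adj_hard (hdn : d + 2 ≤ 2*n) {t : ℕ} (ht1 : t % 2 = 1) (ht : t + 1 ≤ d)
    (x y : ℤ) : Adj (Pa hn t x) (Pa hn (t+1) y) := by
  have he : (t+1) % 2 = 0 := by omega
  have hidx : accIdx (t+1) = accIdx t := by
    unfold accIdx
    rw [if_pos he, if_neg (by omega : ¬ t % 2 = 0)]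
    omega
  refine Or.inr ⟨?_, fi hn (accIdx t), acc_mem_Pa hn t x, ?_⟩
  · rw [Pa_odd hn ht1, Pa_even hn he]
    intro h
    rw [mkacc_eq_iff] at h
    have h2 := h.2.1
    rw [fi_eq_iff hn (by omega) (by omega)] at h2
    omega
  · rw [← hidx]; exact acc_mem_Pa hn (t+1) y

lemma adj_cross (hdn : d + 2 ≤ 2*n) {t : ℕ} (ht0 : t % 2 = 0) (ht : t + 1 ≤ d)
    {x y : ℤ} (hyx : y < x) : Adj (Pa hn t x) (Pa hn (t+1) y) := by
  left
  have ho : (t+1) % 2 = 1 := by omega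
  have hq : (t+1)/2 = t/2 := by omega
  have hin : t/2 < n := by omega
  have hin1 : t/2 + 1 < n := by omega
  rw [Pa_even hn ht0, Pa_odd hn ho, hq,
    show s(mk hn x (t/2), acc hn (t/2)) = s(acc hn (t/2), mk hn x (t/2)) from Sym2.eq_swap]
  refine crosses_of_lt ?_ (tc_mk_mono hn hyx hin) ?_
  · rw [tc_acc hn hin]; exact tc_mk_gt hn y hin
  · rw [tc_acc hn hin1]
    have := tc_mk_lt hn x hin
    push_cast
    linarith

/-! ### negative adjacency -/

lemma not_adj_PP (hdn : d + 2 ≤ 2*n) {t t' : ℕ} (ht' : t' ≤ d) (hgap : t + 2 ≤ t')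
    (x x' : ℤ) : ¬ Adj (Pa hn t x) (Pa hn t' x') := by
  have hb1 : t/2 < n := by omega
  have hb2 : t'/2 < n := by omega
  rintro (hc | ⟨-, a, h1, h2⟩)
  · rcases Nat.mod_two_eq_zero_or_one t with ht0 | ht0 <;>
      rcases Nat.mod_two_eq_zero_or_one t' with ht0' | ht0'
    · -- even, even
      have hlt : t/2 + 1 ≤ t'/2 := by omega
      rw [Pa_even hn ht0, Pa_even hn ht0',
        show s(mk hn x (t/2), acc hn (t/2)) = s(acc hn (t/2), mk hn x (t/2)) from Sym2.eq_swap,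
        show s(mk hn x' (t'/2), acc hn (t'/2)) = s(acc hn (t'/2), mk hn x' (t'/2)) from
          Sym2.eq_swap] at hc
      have e1 : ((t/2 : ℕ) : ℝ) + 1 ≤ ((t'/2 : ℕ) : ℝ) := by exact_mod_cast hlt
      refine not_crosses_expl ?_ ?_ ?_ hc
      · rw [tc_acc hn hb1]; exact (tc_mk_gt hn x hb1).le
      · rw [tc_acc hn hb2]; have := tc_mk_lt hn x hb1; linarith
      · have := tc_mk_lt hn x hb1; have h2 := tc_mk_gt hn x' hb2; linarith
    · -- even, odd
      have hlt : t/2 + 1 ≤ t'/2 := by omega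
      have hb3 : t'/2 + 1 < n := by omega
      rw [Pa_even hn ht0, Pa_odd hn ht0',
        show s(mk hn x (t/2), acc hn (t/2)) = s(acc hn (t/2), mk hn x (t/2)) from
          Sym2.eq_swap] at hc
      have e1 : ((t/2 : ℕ) : ℝ) + 1 ≤ ((t'/2 : ℕ) : ℝ) := by exact_mod_cast hlt
      refine not_crosses_expl ?_ ?_ ?_ hc
      · rw [tc_acc hn hb1]; exact (tc_mk_gt hn x hb1).le
      · have := tc_mk_lt hn x hb1; have h2 := tc_mk_gt hn x' hb2; linarith
      · rw [tc_acc hn hb3]; have := tc_mk_lt hn x hb1; push_cast; linarith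
    · -- odd, even
      have hlt : t/2 + 2 ≤ t'/2 := by omega
      have hb3 : t/2 + 1 < n := by omega
      rw [Pa_odd hn ht0, Pa_even hn ht0',
        show s(mk hn x' (t'/2), acc hn (t'/2)) = s(acc hn (t'/2), mk hn x' (t'/2)) from
          Sym2.eq_swap] at hc
      have e1 : ((t/2 : ℕ) : ℝ) + 2 ≤ ((t'/2 : ℕ) : ℝ) := by exact_mod_cast hlt
      refine not_crosses_expl ?_ ?_ ?_ hc
      · rw [tc_acc hn hb3]; have := tc_mk_lt hn x hb1; push_cast; linarith
      · rw [tc_acc hn hb3, tc_acc hn hb2]; push_cast; linarith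
      · rw [tc_acc hn hb3]; have := tc_mk_gt hn x' hb2; push_cast; linarith
    · -- odd, odd
      have hlt : t/2 + 1 ≤ t'/2 := by omega
      have hb3 : t/2 + 1 < n := by omega
      have hb4 : t'/2 + 1 < n := by omega
      rw [Pa_odd hn ht0, Pa_odd hn ht0'] at hc
      have e1 : ((t/2 : ℕ) : ℝ) + 1 ≤ ((t'/2 : ℕ) : ℝ) := by exact_mod_cast hlt
      refine not_crosses_expl ?_ ?_ ?_ hc
      · rw [tc_acc hn hb3]; have := tc_mk_lt hn x hb1; push_cast; linarith
      · rw [tc_acc hn hb3]; have := tc_mk_gt hn x' hb2; push_cast; linarith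
      · rw [tc_acc hn hb3, tc_acc hn hb4]; push_cast; linarith
  · have ha := mem_Pa_inr hn h1
    have ha' := mem_Pa_inr hn h2
    rw [ha] at ha'
    have hbound : accIdx t < n := by unfold accIdx; split <;> omega
    have hbound' : accIdx t' < n := by unfold accIdx; split <;> omega
    rw [fi_eq_iff hn hbound hbound'] at ha'
    have : accIdx t < accIdx t' := by unfold accIdx; split <;> split <;> omega
    omega

lemma not_adj_P_SL (hd2 : 2 ≤ d) (hdn : d + 2 ≤ 2*n) {t : ℕ} (ht : t ≤ d)
    (htt : t = 0 ∨ 4 ≤ t) {i' : ℕ} (hi1 : d/2 + 1 ≤ i') (hi2 : i' < n)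
    (x y : ℤ) : ¬ Adj (Pa hn t x) (SL hn i' y) := by
  have hb1 : t/2 < n := by omega
  have hn1 : (1:ℕ) < n := by omega
  have hii : 2 ≤ i' := by omega
  rintro (hc | ⟨-, a, h1, h2⟩)
  · rcases htt with rfl | ht4
    · rw [Pa_even hn (by omega), SL] at hc
      simp only [Nat.zero_div] at hc
      rw [show s(mk hn x 0, acc hn 0) = s(acc hn 0, mk hn x 0) from Sym2.eq_swap,
        show s(mk hn y i', acc hn 1) = s(acc hn 1, mk hn y i') from Sym2.eq_swap] at hc
      have hb0 : (0:ℕ) < n := hn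
      have g1 := tc_mk_gt hn x hb0
      have g2 := tc_mk_lt hn x hb0
      have g3 := tc_mk_gt hn y hi2
      have e2 : (1:ℝ) ≤ ((i' : ℕ) : ℝ) := by exact_mod_cast Nat.one_le_cast.mpr (by omega)
      refine not_crosses_expl ?_ ?_ ?_ hc
      · rw [tc_acc hn hb0]; exact g1.le
      · rw [tc_acc hn hn1]; push_cast at g2 ⊢; linarith
      · push_cast at g2 g3 e2; linarith
    · -- t ≥ 4 : nested
      rw [SL, show s(mk hn y i', acc hn 1) = s(acc hn 1, mk hn y i') from Sym2.eq_swap] at hc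
      replace hc := crosses_symm hc
      rcases Nat.mod_two_eq_zero_or_one t with ht0 | ht0
      · rw [Pa_even hn ht0] at hc
        have hlt : t/2 + 1 ≤ i' := by omega
        have e1 : ((t/2 : ℕ) : ℝ) + 1 ≤ ((i' : ℕ) : ℝ) := by exact_mod_cast hlt
        have e2 : ((1:ℕ) : ℝ) + 1 ≤ ((t/2 : ℕ) : ℝ) := by exact_mod_cast (by omega : 1 + 1 ≤ t/2)
        refine not_crosses_nested ?_ ?_ ?_ ?_ hc
        · rw [tc_acc hn hn1]; have := tc_mk_gt hn x hb1; push_cast at e2 ⊢; linarith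
        · rw [tc_acc hn hn1, tc_acc hn hb1]; push_cast at e2 ⊢; linarith
        · have := tc_mk_lt hn x hb1; have h2 := tc_mk_gt hn y hi2; linarith
        · rw [tc_acc hn hb1]; have h2 := tc_mk_gt hn y hi2; linarith
      · rw [Pa_odd hn ht0] at hc
        have hb3 : t/2 + 1 < n := by omega
        have hlt : t/2 + 1 ≤ i' := by omega
        have e1 : ((t/2 : ℕ) : ℝ) + 1 ≤ ((i' : ℕ) : ℝ) := by exact_mod_cast hlt
        have e2 : ((1:ℕ) : ℝ) + 1 ≤ ((t/2 : ℕ) : ℝ) := by exact_mod_cast (by omega : 1 + 1 ≤ t/2)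
        refine not_crosses_nested ?_ ?_ ?_ ?_ hc
        · rw [tc_acc hn hn1]; have := tc_mk_gt hn x hb1; push_cast at e2 ⊢; linarith
        · rw [tc_acc hn hn1, tc_acc hn hb3]; push_cast at e2 ⊢; linarith
        · have := tc_mk_lt hn x hb1; have h2 := tc_mk_gt hn y hi2; linarith
        · rw [tc_acc hn hb3]; have h2 := tc_mk_gt hn y hi2; push_cast; linarith
  · have ha := mem_Pa_inr hn h1
    have ha' := mem_SL_inr hn h2
    rw [ha] at ha'
    have hbound : accIdx t < n := by unfold accIdx; split <;> omega
    rw [fi_eq_iff hn hbound hn1] at ha'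
    have : accIdx t = 0 ∨ 2 ≤ accIdx t := by unfold accIdx; split <;> omega
    omega

lemma not_adj_P_LL (hd2 : 2 ≤ d) (hdn : d + 2 ≤ 2*n) {t : ℕ} (ht : t ≤ d)
    (htt : t = 0 ∨ 4 ≤ t) {j : ℕ} (hj1 : (d+1)/2 + 1 ≤ j) (hj2 : j < n)
    (x : ℤ) : ¬ Adj (Pa hn t x) (LL hn j) := by
  have hb1 : t/2 < n := by omega
  have hn1 : (1:ℕ) < n := by omega
  have hjj : 2 ≤ j := by omega
  rintro (hc | ⟨-, a, h1, h2⟩)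
  · rcases htt with rfl | ht4
    · rw [Pa_even hn (by omega), LL] at hc
      simp only [Nat.zero_div] at hc
      rw [show s(mk hn x 0, acc hn 0) = s(acc hn 0, mk hn x 0) from Sym2.eq_swap] at hc
      have hb0 : (0:ℕ) < n := hn
      have g1 := tc_mk_gt hn x hb0
      have g2 := tc_mk_lt hn x hb0
      have e2 : (1:ℝ) ≤ ((j : ℕ) : ℝ) := by exact_mod_cast Nat.one_le_cast.mpr (by omega)
      refine not_crosses_expl ?_ ?_ ?_ hc
      · rw [tc_acc hn hb0]; exact g1.le
      · rw [tc_acc hn hn1]; push_cast at g2 ⊢; linarith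
      · rw [tc_acc hn hj2]; push_cast at g2 e2 ⊢; linarith
    · rw [LL] at hc
      replace hc := crosses_symm hc
      rcases Nat.mod_two_eq_zero_or_one t with ht0 | ht0
      · rw [Pa_even hn ht0] at hc
        have hlt : t/2 + 1 ≤ j := by omega
        have e1 : ((t/2 : ℕ) : ℝ) + 1 ≤ ((j : ℕ) : ℝ) := by exact_mod_cast hlt
        have e2 : ((1:ℕ) : ℝ) + 1 ≤ ((t/2 : ℕ) : ℝ) := by exact_mod_cast (by omega : 1 + 1 ≤ t/2)
        refine not_crosses_nested ?_ ?_ ?_ ?_ hc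
        · rw [tc_acc hn hn1]; have := tc_mk_gt hn x hb1; push_cast at e2 ⊢; linarith
        · rw [tc_acc hn hn1, tc_acc hn hb1]; push_cast at e2 ⊢; linarith
        · rw [tc_acc hn hj2]; have := tc_mk_lt hn x hb1; linarith
        · rw [tc_acc hn hb1, tc_acc hn hj2]; linarith
      · rw [Pa_odd hn ht0] at hc
        have hb3 : t/2 + 1 < n := by omega
        have hlt : t/2 + 1 + 1 ≤ j := by omega
        have e1 : ((t/2 : ℕ) : ℝ) + 2 ≤ ((j : ℕ) : ℝ) := by exact_mod_cast hlt
        have e2 : ((1:ℕ) : ℝ) + 1 ≤ ((t/2 : ℕ) : ℝ) := by exact_mod_cast (by omega : 1 + 1 ≤ t/2)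
        refine not_crosses_nested ?_ ?_ ?_ ?_ hc
        · rw [tc_acc hn hn1]; have := tc_mk_gt hn x hb1; push_cast at e2 ⊢; linarith
        · rw [tc_acc hn hn1, tc_acc hn hb3]; push_cast at e2 ⊢; linarith
        · rw [tc_acc hn hj2]; have := tc_mk_lt hn x hb1; linarith
        · rw [tc_acc hn hb3, tc_acc hn hj2]; push_cast; linarith
  · have ha := mem_Pa_inr hn h1
    have ha' := mem_LL_inr hn h2
    have hbound : accIdx t < n := by unfold accIdx; split <;> omega
    have hrange : accIdx t = 0 ∨ (2 ≤ accIdx t ∧ accIdx t ≤ (d+1)/2) := by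
      unfold accIdx; split <;> omega
    rcases ha' with ha' | ha' <;> rw [ha] at ha'
    · rw [fi_eq_iff hn hbound hn1] at ha'; omega
    · rw [fi_eq_iff hn hbound hj2] at ha'; omega

/-! ### distinctness of leaf shapes -/

lemma SL_ne_Pa {t i : ℕ} (hin : i < n) (hb : t/2 < n) (hne : t/2 ≠ i) (y x : ℤ) :
    SL hn i y ≠ Pa hn t x := by
  rcases Nat.mod_two_eq_zero_or_one t with h | h <;>
    [rw [Pa_even hn h]; rw [Pa_odd hn h]] <;>
    · rw [SL]
      intro hh
      rw [mkacc_eq_iff] at hh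
      have h2 := hh.2.1
      rw [fi_eq_iff hn hin hb] at h2
      omega

lemma LL_ne_Pa (j t : ℕ) (x : ℤ) : LL hn j ≠ Pa hn t x := by
  rcases Nat.mod_two_eq_zero_or_one t with h | h <;>
    [rw [Pa_even hn h]; rw [Pa_odd hn h]] <;>
    · rw [LL]; exact fun hh => (mkacc_ne_LLshape hn _ _ _ _ _) hh.symm

/-! ### membership in the rotation closure -/

lemma Pa_mem_T {t : ℕ} (ht : t ≤ d) (x : ℤ) :
    Pa hn t x ∈ RClos (↑(Sgen hn d) : Set (Sym2 (MbarPt n))) :=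
  (mem_T hn d).mpr (Or.inl ⟨t, x, ht, rfl⟩)

lemma SL_mem_T {i : ℕ} (hi : d/2 + 1 ≤ i) (hin : i < n) (x : ℤ) :
    SL hn i x ∈ RClos (↑(Sgen hn d) : Set (Sym2 (MbarPt n))) :=
  (mem_T hn d).mpr (Or.inr (Or.inl ⟨i, x, ⟨hi, hin⟩, rfl⟩))

lemma LL_mem_T {j : ℕ} (hj : (d+1)/2 + 1 ≤ j) (hjn : j < n) :
    LL hn j ∈ RClos (↑(Sgen hn d) : Set (Sym2 (MbarPt n))) :=
  (mem_T hn d).mpr (Or.inr (Or.inr ⟨j, ⟨hj, hjn⟩, rfl⟩))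

/-! ### chains along the path -/

lemma chainF (hdn : d + 2 ≤ 2*n) :
    ∀ (k t : ℕ) (x : ℤ), t + k ≤ d →
      AdjChain (RClos (↑(Sgen hn d) : Set (Sym2 (MbarPt n)))) k
        (Pa hn t x) (Pa hn (t+k) (x - k)) := by
  intro k
  induction k with
  | zero =>
    intro t x _
    have e : x - ((0:ℕ):ℤ) = x := by push_cast; ring
    rw [Nat.add_zero, e]
    rfl
  | succ k ih =>
    intro t x h
    refine ⟨Pa hn (t+1) (x - 1), Pa_mem_T hn d (by omega) _, ?_, ?_⟩
    · rcases Nat.mod_two_eq_zero_or_one t with h0 | h0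
      · exact adj_cross hn d hdn h0 (by omega) (by omega)
      · exact adj_hard hn d hdn h0 (by omega) x (x-1)
    · have hch := ih (t+1) (x-1) (by omega)
      have e : (t+1) + k = t + (k+1) := by omega
      have e2 : (x - 1) - (k:ℤ) = x - (((k+1) : ℕ) : ℤ) := by push_cast; ring
      rw [e, e2] at hch
      exact hch

lemma chainB (hdn : d + 2 ≤ 2*n) :
    ∀ (k t : ℕ) (x : ℤ), t + k ≤ d →
      AdjChain (RClos (↑(Sgen hn d) : Set (Sym2 (MbarPt n)))) k
        (Pa hn (t+k) x) (Pa hn t (x + k)) := by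
  intro k
  induction k with
  | zero =>
    intro t x _
    have e : x + ((0:ℕ):ℤ) = x := by push_cast; ring
    rw [Nat.add_zero, e]
    rfl
  | succ k ih =>
    intro t x h
    have e0 : t + (k+1) = (t+k) + 1 := by omega
    rw [e0]
    refine ⟨Pa hn (t+k) (x + 1), Pa_mem_T hn d (by omega) _, ?_, ?_⟩
    · refine adj_symm ?_
      rcases Nat.mod_two_eq_zero_or_one (t+k) with h0 | h0
      · exact adj_cross hn d hdn h0 (by omega) (by omega)
      · exact adj_hard hn d hdn h0 (by omega) (x+1) x
    · have hch := ih t (x+1) (by omega)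
      have e2 : (x + 1) + (k:ℤ) = x + (((k+1) : ℕ) : ℤ) := by push_cast; ring
      rw [e2] at hch
      exact hch

lemma reach_lt (hd2 : 2 ≤ d) (hdn : d + 2 ≤ 2*n) {t t' : ℕ} (htt : t < t')
    (ht' : t' ≤ d) (x x' : ℤ) :
    ∃ m ≤ d, AdjChain (RClos (↑(Sgen hn d) : Set (Sym2 (MbarPt n)))) m
      (Pa hn t x) (Pa hn t' x') := by
  set T := RClos (↑(Sgen hn d) : Set (Sym2 (MbarPt n))) with hT
  rcases Nat.mod_two_eq_zero_or_one t' with he' | ho'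
  · -- case A : t' even, finish with a hard step
    refine ⟨t' - t, by omega, ?_⟩
    have h1 : t + (t' - t - 1) ≤ d := by omega
    have hch := chainF hn d hdn (t' - t - 1) t x (by omega)
    have hodd : (t + (t' - t - 1)) % 2 = 1 := by omega
    have hstep := adj_hard hn d hdn hodd (by omega) (x - ((t' - t - 1 : ℕ) : ℤ)) x'
    have := adjChain_snoc (t' - t - 1) hch hstep (Pa_mem_T hn d (by omega) x')
    have e1 : t + (t' - t - 1) + 1 = t' := by omega
    have e2 : t' - t - 1 + 1 = t' - t := by omega
    rw [e1, e2] at this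
    exact this
  · rcases Nat.mod_two_eq_zero_or_one t with he | ho
    · -- t even, t' odd
      by_cases hk : t + 1 = t'
      · by_cases hxx : x' < x
        · exact ⟨1, by omega, ⟨Pa hn t' x', Pa_mem_T hn d ht' x',
            by rw [← hk]; exact adj_cross hn d hdn he (by omega) hxx, rfl⟩⟩
        · have hx1 : x ≤ max x x' := le_max_left x x'
          have hx2 : x' ≤ max x x' := le_max_right x x'
          refine ⟨2, by omega, ⟨Pa hn t (max x x' + 1), Pa_mem_T hn d (by omega) _,
            adj_sameorbit hn d hdn (by omega) (by omega), ⟨Pa hn t' x',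
            Pa_mem_T hn d ht' x', ?_, rfl⟩⟩⟩
          rw [← hk]
          exact adj_cross hn d hdn he (by omega) (by omega)
      · -- t' - t ≥ 3
        have hk3 : t + 3 ≤ t' := by omega
        refine ⟨t' - t, by omega, ?_⟩
        have hch := chainF hn d hdn (t' - t - 2) (t+2) (x' + ((t' - t - 2 : ℕ) : ℤ))
          (by omega)
        have e1 : (t+2) + (t' - t - 2) = t' := by omega
        have e2 : (x' + ((t' - t - 2 : ℕ) : ℤ)) - ((t' - t - 2 : ℕ) : ℤ) = x' := by ring
        rw [e1, e2] at hch
        have step2 : Adj (Pa hn (t+1) (x-1)) (Pa hn (t+2) (x' + ((t' - t - 2 : ℕ) : ℤ))) := by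
          have := adj_hard hn d hdn (t := t+1) (by omega) (by omega) (x-1)
            (x' + ((t' - t - 2 : ℕ) : ℤ))
          convert this using 3 <;> omega
        have c2 : AdjChain T (t' - t - 2 + 1) (Pa hn (t+1) (x-1)) (Pa hn t' x') :=
          ⟨Pa hn (t+2) (x' + ((t' - t - 2 : ℕ) : ℤ)), Pa_mem_T hn d (by omega) _, step2, hch⟩
        have c3 : AdjChain T (t' - t - 2 + 1 + 1) (Pa hn t x) (Pa hn t' x') :=
          ⟨Pa hn (t+1) (x-1), Pa_mem_T hn d (by omega) _,
            adj_cross hn d hdn he (by omega) (by omega), c2⟩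
        have e3 : t' - t - 2 + 1 + 1 = t' - t := by omega
        rw [e3] at c3
        exact c3
    · -- t odd, t' odd : build backwards then reverse
      refine ⟨t' - t, by omega, ?_⟩
      have hch := chainB hn d hdn (t' - t - 1) (t+1) x' (by omega)
      have e1 : (t+1) + (t' - t - 1) = t' := by omega
      rw [e1] at hch
      have hstep : Adj (Pa hn (t+1) (x' + ((t' - t - 1 : ℕ) : ℤ))) (Pa hn t x) :=
        adj_symm (adj_hard hn d hdn ho (by omega) x _)
      have c2 := adjChain_snoc (t' - t - 1) hch hstep (Pa_mem_T hn d (by omega) x)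
      have e2 : t' - t - 1 + 1 = t' - t := by omega
      rw [e2] at c2
      exact adjChain_rev (t' - t) (Pa_mem_T hn d ht' x') c2

lemma reach_PP (hd2 : 2 ≤ d) (hdn : d + 2 ≤ 2*n) {t t' : ℕ} (ht : t ≤ d)
    (ht' : t' ≤ d) (x x' : ℤ) :
    ∃ m ≤ d, AdjChain (RClos (↑(Sgen hn d) : Set (Sym2 (MbarPt n)))) m
      (Pa hn t x) (Pa hn t' x') := by
  rcases lt_trichotomy t t' with h | rfl | h
  · exact reach_lt hn d hd2 hdn h ht' x x'
  · by_cases hxx : x = x'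
    · exact ⟨0, by omega, by rw [hxx]; rfl⟩
    · exact ⟨1, by omega, ⟨Pa hn t x', Pa_mem_T hn d ht x',
        adj_sameorbit hn d hdn ht hxx, rfl⟩⟩
  · obtain ⟨m, hm, hch⟩ := reach_lt hn d hd2 hdn h ht x' x
    exact ⟨m, hm, adjChain_rev m (Pa_mem_T hn d ht' x') hch⟩

lemma reach_leafP (hd2 : 2 ≤ d) (hdn : d + 2 ≤ 2*n) {ℓ : Sym2 (MbarPt n)}
    (hℓT : ℓ ∈ RClos (↑(Sgen hn d) : Set (Sym2 (MbarPt n)))) (hacc : acc hn 1 ∈ ℓ)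
    (hne1 : ∀ y, ℓ ≠ Pa hn 1 y) (hne2 : ∀ y, ℓ ≠ Pa hn 2 y) {t : ℕ} (ht : t ≤ d)
    (x : ℤ) :
    ∃ m ≤ d, AdjChain (RClos (↑(Sgen hn d) : Set (Sym2 (MbarPt n)))) m ℓ (Pa hn t x) := by
  rcases Nat.lt_or_ge t 2 with h2 | h2
  · interval_cases t
    · refine ⟨2, by omega, ⟨Pa hn 1 (x - 1), Pa_mem_T hn d (by omega) _,
        adj_of_accPt hn 1 (hne1 _) hacc (acc1_mem_Pa1 hn _), ⟨Pa hn 0 x,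
        Pa_mem_T hn d (by omega) x, adj_symm (adj_cross hn d hdn (by omega) (by omega)
          (by omega)), rfl⟩⟩⟩
    · exact ⟨1, by omega, ⟨Pa hn 1 x, Pa_mem_T hn d (by omega) x,
        adj_of_accPt hn 1 (hne1 x) hacc (acc1_mem_Pa1 hn _), rfl⟩⟩
  · refine ⟨t - 1, by omega, ?_⟩
    have hch := chainF hn d hdn (t - 2) 2 (x + ((t - 2 : ℕ) : ℤ)) (by omega)
    have e1 : 2 + (t - 2) = t := by omega
    have e2 : (x + ((t - 2 : ℕ) : ℤ)) - ((t - 2 : ℕ) : ℤ) = x := by ring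
    rw [e1, e2] at hch
    have c2 : AdjChain (RClos (↑(Sgen hn d) : Set (Sym2 (MbarPt n)))) (t - 2 + 1) ℓ
        (Pa hn t x) :=
      ⟨Pa hn 2 (x + ((t - 2 : ℕ) : ℤ)), Pa_mem_T hn d (by omega) _,
        adj_of_accPt hn 1 (hne2 _) hacc (acc1_mem_Pa2 hn _), hch⟩
    have e3 : t - 2 + 1 = t - 1 := by omega
    rw [e3] at c2
    exact c2

/-! ### the potential function -/

def fphi : MbarPt n → MbarPt n → ℕ
  | inl (_, i), inr j =>
      if (j:ℕ) = (i:ℕ) then 2*(i:ℕ) else if (j:ℕ) = (i:ℕ)+1 then 2*(i:ℕ)+1 else 2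
  | inr j, inl (_, i) =>
      if (j:ℕ) = (i:ℕ) then 2*(i:ℕ) else if (j:ℕ) = (i:ℕ)+1 then 2*(i:ℕ)+1 else 2
  | _, _ => 2

lemma fphi_symm (a b : MbarPt n) : fphi a b = fphi b a := by
  rcases a with ⟨k,i⟩|i <;> rcases b with ⟨k',i'⟩|i' <;> rfl

def phi : Sym2 (MbarPt n) → ℕ := Sym2.lift ⟨fphi, fphi_symm⟩

lemma phi_Pa (hdn : d + 2 ≤ 2*n) {t : ℕ} (ht : t ≤ d) (x : ℤ) :
    phi (Pa hn t x) = t := by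
  rcases Nat.mod_two_eq_zero_or_one t with h | h
  · have hb : t/2 < n := by omega
    rw [Pa_even hn h]
    show fphi (mk hn x (t/2)) (acc hn (t/2)) = t
    simp only [fphi, mk, acc, fi]
    rw [Nat.mod_eq_of_lt hb]
    simp only [if_true, eq_self_iff_true]
    omega
  · have hb : t/2 < n := by omega
    have hb1 : t/2 + 1 < n := by omega
    rw [Pa_odd hn h]
    show fphi (mk hn x (t/2)) (acc hn (t/2+1)) = t
    simp only [fphi, mk, acc, fi]
    rw [Nat.mod_eq_of_lt hb, Nat.mod_eq_of_lt hb1, if_neg (by omega)]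
    simp only [if_true, eq_self_iff_true]
    omega

lemma phi_SL (hd2 : 2 ≤ d) (hdn : d + 2 ≤ 2*n) {i : ℕ} (hi : d/2 + 1 ≤ i)
    (hin : i < n) (x : ℤ) : phi (SL hn i x) = 2 := by
  have hn1 : 1 < n := by omega
  rw [SL]
  show fphi (mk hn x i) (acc hn 1) = 2
  simp only [fphi, mk, acc, fi]
  rw [Nat.mod_eq_of_lt hin, Nat.mod_eq_of_lt hn1, if_neg (by omega), if_neg (by omega)]

lemma phi_LL (j : ℕ) : phi (LL hn j) = 2 := by
  rw [LL]
  show fphi (acc hn 1) (acc hn j) = 2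
  rfl

lemma lip (hd2 : 2 ≤ d) (hdn : d + 2 ≤ 2*n) {p q : Sym2 (MbarPt n)}
    (hp : p ∈ RClos (↑(Sgen hn d) : Set (Sym2 (MbarPt n))))
    (hq : q ∈ RClos (↑(Sgen hn d) : Set (Sym2 (MbarPt n)))) (h : Adj p q) :
    phi q ≤ phi p + 1 ∧ phi p ≤ phi q + 1 := by
  rw [mem_T hn d] at hp hq
  rcases hp with ⟨t, x, ht, rfl⟩ | ⟨i, x, ⟨hi1, hi2⟩, rfl⟩ | ⟨j, ⟨hj1, hj2⟩, rfl⟩ <;>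
    rcases hq with ⟨t', x', ht', rfl⟩ | ⟨i', x', ⟨hi1', hi2'⟩, rfl⟩ | ⟨j', ⟨hj1', hj2'⟩, rfl⟩
  · -- P P
    rw [phi_Pa hn d hdn ht, phi_Pa hn d hdn ht']
    rcases Nat.lt_or_ge (t+1) t' with hgt | hgt
    · exact absurd h (not_adj_PP hn d hdn ht' (by omega) x x')
    rcases Nat.lt_or_ge (t'+1) t with hgt' | hgt'
    · exact absurd (adj_symm h) (not_adj_PP hn d hdn ht (by omega) x' x)
    omega
  · -- P SL
    rw [phi_Pa hn d hdn ht, phi_SL hn d hd2 hdn hi1' hi2']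
    rcases Nat.lt_or_ge t 4 with h4 | h4
    · rcases Nat.eq_or_lt_of_le (Nat.zero_le t) with h0 | h0
      · exact absurd h (not_adj_P_SL hn d hd2 hdn ht (Or.inl h0.symm) hi1' hi2' x x')
      · omega
    · exact absurd h (not_adj_P_SL hn d hd2 hdn ht (Or.inr h4) hi1' hi2' x x')
  · -- P LL
    rw [phi_Pa hn d hdn ht, phi_LL]
    rcases Nat.lt_or_ge t 4 with h4 | h4
    · rcases Nat.eq_or_lt_of_le (Nat.zero_le t) with h0 | h0
      · exact absurd h (not_adj_P_LL hn d hd2 hdn ht (Or.inl h0.symm) hj1' hj2' x)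
      · omega
    · exact absurd h (not_adj_P_LL hn d hd2 hdn ht (Or.inr h4) hj1' hj2' x)
  · -- SL P
    rw [phi_Pa hn d hdn ht', phi_SL hn d hd2 hdn hi1 hi2]
    rcases Nat.lt_or_ge t' 4 with h4 | h4
    · rcases Nat.eq_or_lt_of_le (Nat.zero_le t') with h0 | h0
      · exact absurd (adj_symm h)
          (not_adj_P_SL hn d hd2 hdn ht' (Or.inl h0.symm) hi1 hi2 x' x)
      · omega
    · exact absurd (adj_symm h) (not_adj_P_SL hn d hd2 hdn ht' (Or.inr h4) hi1 hi2 x' x)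
  · rw [phi_SL hn d hd2 hdn hi1 hi2, phi_SL hn d hd2 hdn hi1' hi2']; omega
  · rw [phi_SL hn d hd2 hdn hi1 hi2, phi_LL]; omega
  · -- LL P
    rw [phi_Pa hn d hdn ht', phi_LL]
    rcases Nat.lt_or_ge t' 4 with h4 | h4
    · rcases Nat.eq_or_lt_of_le (Nat.zero_le t') with h0 | h0
      · exact absurd (adj_symm h)
          (not_adj_P_LL hn d hd2 hdn ht' (Or.inl h0.symm) hj1 hj2 x')
      · omega
    · exact absurd (adj_symm h) (not_adj_P_LL hn d hd2 hdn ht' (Or.inr h4) hj1 hj2 x')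
  · rw [phi_LL, phi_SL hn d hd2 hdn hi1' hi2']; omega
  · rw [phi_LL, phi_LL]; omega

lemma chain_phi (hd2 : 2 ≤ d) (hdn : d + 2 ≤ 2*n) :
    ∀ (m : ℕ) (p q : Sym2 (MbarPt n)),
      p ∈ RClos (↑(Sgen hn d) : Set (Sym2 (MbarPt n))) →
      AdjChain (RClos (↑(Sgen hn d) : Set (Sym2 (MbarPt n)))) m p q →
      phi q ≤ phi p + m := by
  intro m
  induction m with
  | zero => rintro p q _ rfl; omega
  | succ m ih =>
    rintro p q hp ⟨r, hr, hadj, hch⟩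
    have h1 := (lip hn d hd2 hdn hp hr hadj).1
    have h2 := ih r q hr hch
    omega

/-! ### assembling the case `2 ≤ d` -/

lemma fi_val (j : Fin n) : fi hn (j : ℕ) = j :=
  Fin.ext (by simp [fi, Nat.mod_eq_of_lt j.isLt])

lemma acc_coe (j : Fin n) : acc hn ((j : ℕ)) = inr j := by rw [acc, fi_val]

lemma hlenle (hd2 : 2 ≤ d) (hdn : d + 2 ≤ 2*n) :
    HLenLE (↑(Sgen hn d) : Set (Sym2 (MbarPt n))) d := by
  intro p hp q hq
  rw [mem_T hn d] at hp hq
  rcases hp with ⟨t, x, ht, rfl⟩ | ⟨i, x, ⟨hi1, hi2⟩, rfl⟩ | ⟨j, ⟨hj1, hj2⟩, rfl⟩ <;>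
    rcases hq with ⟨t', x', ht', rfl⟩ | ⟨i', x', ⟨hi1', hi2'⟩, rfl⟩ | ⟨j', ⟨hj1', hj2'⟩, rfl⟩
  · exact reach_PP hn d hd2 hdn ht ht' x x'
  · -- P → SL
    obtain ⟨m, hm, hch⟩ := reach_leafP hn d hd2 hdn (SL_mem_T hn d hi1' hi2' x')
      (acc1_mem_SL hn i' x') (fun y => SL_ne_Pa hn hi2' (by omega) (by omega) x' y)
      (fun y => SL_ne_Pa hn hi2' (by omega) (by omega) x' y) ht x
    exact ⟨m, hm, adjChain_rev m (SL_mem_T hn d hi1' hi2' x') hch⟩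
  · -- P → LL
    obtain ⟨m, hm, hch⟩ := reach_leafP hn d hd2 hdn (LL_mem_T hn d hj1' hj2')
      (acc1_mem_LL hn j') (fun y => LL_ne_Pa hn j' 1 y) (fun y => LL_ne_Pa hn j' 2 y) ht x
    exact ⟨m, hm, adjChain_rev m (LL_mem_T hn d hj1' hj2') hch⟩
  · exact reach_leafP hn d hd2 hdn (SL_mem_T hn d hi1 hi2 x) (acc1_mem_SL hn i x)
      (fun y => SL_ne_Pa hn hi2 (by omega) (by omega) x y)
      (fun y => SL_ne_Pa hn hi2 (by omega) (by omega) x y) ht' x'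
  · by_cases h : SL hn i x = SL hn i' x'
    · exact ⟨0, by omega, h⟩
    · exact ⟨1, by omega, ⟨SL hn i' x', SL_mem_T hn d hi1' hi2' x',
        adj_of_accPt hn 1 h (acc1_mem_SL hn i x) (acc1_mem_SL hn i' x'), rfl⟩⟩
  · by_cases h : SL hn i x = LL hn j'
    · exact ⟨0, by omega, h⟩
    · exact ⟨1, by omega, ⟨LL hn j', LL_mem_T hn d hj1' hj2',
        adj_of_accPt hn 1 h (acc1_mem_SL hn i x) (acc1_mem_LL hn j'), rfl⟩⟩
  · exact reach_leafP hn d hd2 hdn (LL_mem_T hn d hj1 hj2) (acc1_mem_LL hn j)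
      (fun y => LL_ne_Pa hn j 1 y) (fun y => LL_ne_Pa hn j 2 y) ht' x'
  · by_cases h : LL hn j = SL hn i' x'
    · exact ⟨0, by omega, h⟩
    · exact ⟨1, by omega, ⟨SL hn i' x', SL_mem_T hn d hi1' hi2' x',
        adj_of_accPt hn 1 h (acc1_mem_LL hn j) (acc1_mem_SL hn i' x'), rfl⟩⟩
  · by_cases h : LL hn j = LL hn j'
    · exact ⟨0, by omega, h⟩
    · exact ⟨1, by omega, ⟨LL hn j', LL_mem_T hn d hj1' hj2',
        adj_of_accPt hn 1 h (acc1_mem_LL hn j) (acc1_mem_LL hn j'), rfl⟩⟩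

theorem main2 (hd2 : 2 ≤ d) (hdn : d + 2 ≤ 2*n) :
    (∀ p ∈ Sgen hn d, IsArc p) ∧
    ConnectedArcs (↑(Sgen hn d) : Set (Sym2 (MbarPt n))) ∧
    CompleteOrbit (↑(Sgen hn d) : Set (Sym2 (MbarPt n))) ∧
    HLenEq (↑(Sgen hn d) : Set (Sym2 (MbarPt n))) d := by
  refine ⟨?_, ?_, ?_, ?_⟩
  · intro p hp
    simp only [Sgen, Finset.mem_union, Finset.mem_image, Finset.mem_range,
      Finset.mem_Ico] at hp
    rcases hp with (⟨t, ht, rfl⟩ | ⟨i, hi, rfl⟩) | ⟨j, hj, rfl⟩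
    · rcases Nat.mod_two_eq_zero_or_one t with h | h <;>
        [rw [Pa_even hn h]; rw [Pa_odd hn h]] <;> exact isArc_mkacc hn 0 _ _
    · exact isArc_mkacc hn 0 _ _
    · exact isArc_accacc hn (by omega) (by omega) (by omega)
  · intro p hp q hq
    obtain ⟨m, -, hch⟩ := hlenle hn d hd2 hdn p hp q hq
    exact ⟨m, hch⟩
  · rintro (⟨k, i⟩ | j)
    · by_cases h2 : 2*(i:ℕ) ≤ d
      · refine ⟨Pa hn (2*(i:ℕ)) k, Pa_mem_T hn d h2 k, ?_⟩
        rw [Pa_even hn (by omega), Sym2.mem_iff]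
        left
        rw [show (2*(i:ℕ))/2 = (i:ℕ) from by omega, mk, fi_val]
      · refine ⟨SL hn (i:ℕ) k, SL_mem_T hn d (by omega) i.isLt k, ?_⟩
        rw [SL, Sym2.mem_iff]
        left
        rw [mk, fi_val]
    · by_cases h0 : (j:ℕ) = 0
      · refine ⟨Pa hn 0 0, Pa_mem_T hn d (by omega) 0, ?_⟩
        have e := acc_mem_Pa hn 0 (0 : ℤ)
        have e2 : accIdx 0 = (j:ℕ) := by simp [accIdx]; omega
        rw [e2, acc_coe] at e
        exact e
      · by_cases h1 : 2*(j:ℕ) ≤ d + 1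
        · refine ⟨Pa hn (2*(j:ℕ) - 1) 0, Pa_mem_T hn d (by omega) 0, ?_⟩
          have e := acc_mem_Pa hn (2*(j:ℕ) - 1) (0 : ℤ)
          have e2 : accIdx (2*(j:ℕ) - 1) = (j:ℕ) := by unfold accIdx; split <;> omega
          rw [e2, acc_coe] at e
          exact e
        · refine ⟨LL hn (j:ℕ), LL_mem_T hn d (by omega) j.isLt, ?_⟩
          rw [LL, Sym2.mem_iff]
          right
          rw [acc_coe]
  · refine ⟨hlenle hn d hd2 hdn, Pa hn 0 0, Pa_mem_T hn d (by omega) 0,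
      Pa hn d 0, Pa_mem_T hn d le_rfl 0, ?_⟩
    intro m hm hch
    have h1 := chain_phi hn d hd2 hdn m _ _ (Pa_mem_T hn d (by omega) 0) hch
    have e1 := phi_Pa hn d hdn (show (0:ℕ) ≤ d by omega) (0:ℤ)
    have e2 := phi_Pa hn d hdn (le_refl d) (0:ℤ)
    omega

/-! ### the case `d = 1` -/

def Sone : Finset (Sym2 (MbarPt n)) :=
  ((Finset.range n).image fun i => s(mk hn 0 i, acc hn 0)) ∪
  ((Finset.Ico 1 n).image fun j => s(acc hn 0, acc hn j))

lemma rot_one (m : ℤ) (x : ℤ) (i : ℕ) :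
    rotArc m s(mk hn x i, acc hn 0) = s(mk hn (x - m) i, acc hn 0) := by
  unfold rotArc; rw [Sym2.map_pair_eq]; rfl

lemma rot_one' (m : ℤ) (j : ℕ) :
    rotArc m s(acc hn 0, acc hn j) = s(acc hn 0, acc hn j) := by
  unfold rotArc; rw [Sym2.map_pair_eq]; rfl

lemma mem_T1 {q : Sym2 (MbarPt n)} :
    q ∈ RClos (↑(Sone hn) : Set (Sym2 (MbarPt n))) ↔
      (∃ i x, i < n ∧ q = s(mk hn x i, acc hn 0)) ∨
      (∃ j, (1 ≤ j ∧ j < n) ∧ q = s(acc hn 0, acc hn j)) := by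
  constructor
  · rintro ⟨p, hp, m, rfl⟩
    simp only [Finset.coe_union, Finset.coe_image, Set.mem_union, Set.mem_image,
      Finset.mem_coe, Finset.mem_range, Finset.mem_Ico, Sone] at hp
    rcases hp with ⟨i, hi, rfl⟩ | ⟨j, hj, rfl⟩
    · exact Or.inl ⟨i, 0 - m, hi, rot_one hn m 0 i⟩
    · exact Or.inr ⟨j, hj, rot_one' hn m j⟩
  · rintro (⟨i, x, hi, rfl⟩ | ⟨j, hj, rfl⟩)
    · refine ⟨s(mk hn 0 i, acc hn 0), ?_, -x, by rw [rot_one, zero_sub, neg_neg]⟩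
      simp only [Finset.coe_union, Finset.coe_image, Set.mem_union, Set.mem_image,
        Finset.mem_coe, Finset.mem_range, Finset.mem_Ico, Sone]
      exact Or.inl ⟨i, hi, rfl⟩
    · refine ⟨s(acc hn 0, acc hn j), ?_, 0, by rw [rot_one']⟩
      simp only [Finset.coe_union, Finset.coe_image, Set.mem_union, Set.mem_image,
        Finset.mem_coe, Finset.mem_range, Finset.mem_Ico, Sone]
      exact Or.inr ⟨j, hj, rfl⟩

lemma acc0_mem_T1 {q : Sym2 (MbarPt n)}
    (hq : q ∈ RClos (↑(Sone hn) : Set (Sym2 (MbarPt n)))) : acc hn 0 ∈ q := by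
  rw [mem_T1 hn] at hq
  rcases hq with ⟨i, x, hi, rfl⟩ | ⟨j, hj, rfl⟩
  · rw [Sym2.mem_iff]; right; rfl
  · rw [Sym2.mem_iff]; left; rfl

theorem main1 (hn2 : 2 ≤ n) :
    (∀ p ∈ Sone hn, IsArc p) ∧
    ConnectedArcs (↑(Sone hn) : Set (Sym2 (MbarPt n))) ∧
    CompleteOrbit (↑(Sone hn) : Set (Sym2 (MbarPt n))) ∧
    HLenEq (↑(Sone hn) : Set (Sym2 (MbarPt n))) 1 := by
  have hle : HLenLE (↑(Sone hn) : Set (Sym2 (MbarPt n))) 1 := by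
    intro p hp q hq
    by_cases h : p = q
    · exact ⟨0, by omega, h⟩
    · exact ⟨1, le_rfl, ⟨q, hq,
        adj_of_accPt hn 0 h (acc0_mem_T1 hn hp) (acc0_mem_T1 hn hq), rfl⟩⟩
  refine ⟨?_, ?_, ?_, hle, ?_⟩
  · intro p hp
    simp only [Sone, Finset.mem_union, Finset.mem_image, Finset.mem_range,
      Finset.mem_Ico] at hp
    rcases hp with ⟨i, hi, rfl⟩ | ⟨j, hj, rfl⟩
    · exact isArc_mkacc hn 0 _ _
    · exact isArc_accacc hn (by omega) (by omega) (by omega)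
  · intro p hp q hq
    obtain ⟨m, -, hch⟩ := hle p hp q hq
    exact ⟨m, hch⟩
  · rintro (⟨k, i⟩ | j)
    · refine ⟨s(mk hn k (i:ℕ), acc hn 0), (mem_T1 hn).mpr (Or.inl ⟨(i:ℕ), k, i.isLt, rfl⟩), ?_⟩
      rw [Sym2.mem_iff]; left; rw [mk, fi_val]
    · by_cases h0 : (j:ℕ) = 0
      · refine ⟨s(mk hn 0 0, acc hn 0), (mem_T1 hn).mpr (Or.inl ⟨0, 0, by omega, rfl⟩), ?_⟩
        rw [Sym2.mem_iff]; right
        rw [show (0:ℕ) = (j:ℕ) from h0.symm, acc_coe]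
      · refine ⟨s(acc hn 0, acc hn (j:ℕ)),
          (mem_T1 hn).mpr (Or.inr ⟨(j:ℕ), ⟨by omega, j.isLt⟩, rfl⟩), ?_⟩
        rw [Sym2.mem_iff]; right; rw [acc_coe]
  · refine ⟨s(mk hn 0 0, acc hn 0), (mem_T1 hn).mpr (Or.inl ⟨0, 0, by omega, rfl⟩),
      s(mk hn 1 0, acc hn 0), (mem_T1 hn).mpr (Or.inl ⟨0, 1, by omega, rfl⟩), ?_⟩
    intro m hm
    have hm0 : m = 0 := by omega
    subst hm0
    intro hch
    have h : s(mk hn (0:ℤ) 0, acc hn 0) = s(mk hn (1:ℤ) 0, acc hn 0) := hch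
    rw [mkacc_eq_iff] at h
    exact absurd h.1 (by norm_num)

end Constr
end PYGen


/-- Proposition 5.14 of the paper: for every `n ≥ 1` and every integer
`d` with `1 ≤ d ≤ 2n - 2`, there exists a finite set `S` of arcs of `M̄ₙ` which is
connected, has complete orbit, and has homological length exactly `d`. Equivalently,
the Paquette–Yıldırım category `C̄ₙ` possesses a classical generator of homological
length `d`. -/
theorem exists_generator_of_homological_length (n : ℕ) (hn : 1 ≤ n)
    (d : ℕ) (hd1 : 1 ≤ d) (hd2 : d ≤ 2 * n - 2) :
    ∃ S : Finset (Sym2 (MbarPt n)),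
      (∀ p ∈ S, IsArc p) ∧
      ConnectedArcs (↑S : Set (Sym2 (MbarPt n))) ∧
      CompleteOrbit (↑S : Set (Sym2 (MbarPt n))) ∧
      HLenEq (↑S : Set (Sym2 (MbarPt n))) d := by
  have hn2 : 2 ≤ n := by omega
  have hn0 : 0 < n := by omega
  rcases Nat.lt_or_ge d 2 with h1 | h2
  · have hd : d = 1 := by omega
    subst hd
    obtain ⟨g1, g2, g3, g4⟩ := PYGen.main1 hn0 hn2
    exact ⟨PYGen.Sone hn0, g1, g2, g3, g4⟩
  · have hdn : d + 2 ≤ 2*n := by omega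
    obtain ⟨g1, g2, g3, g4⟩ := PYGen.main2 hn0 d h2 hdn
    exact ⟨PYGen.Sgen hn0 d, g1, g2, g3, g4⟩
end

section
/- For every n ≥ 1 and every arc ℓ of M̄_n, the set {ℓ} is connected; that is, the graph with vertex set R({ℓ}) = {ℓ⟦m⟧ : m ∈ ℤ} and edge relation ~ is connected. (Equivalently: every indecomposable object of the Paquette–Yıldırım category C̄_n is homologically connected.) -/
section aux

lemma ratio_lt_ratio {a b : ℝ} (h : a < b) : a / (|a| + 1) < b / (|b| + 1) := by
  rcases abs_cases a with ⟨ha, ha'⟩ | ⟨ha, ha'⟩ <;>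
  rcases abs_cases b with ⟨hb, hb'⟩ | ⟨hb, hb'⟩ <;>
  rw [ha, hb, div_lt_div_iff₀ (by linarith) (by linarith)] <;> nlinarith

lemma half_ratio (t : ℝ) : t / (2 * (|t| + 1)) = t / (|t| + 1) / 2 := by
  rw [mul_comm, ← div_div]

lemma tc_mono {n : ℕ} (i : Fin n) {k k' : ℤ} (h : k < k') :
    toCircle (Sum.inl (k, i) : MbarPt n) < toCircle (Sum.inl (k', i)) := by
  simp only [toCircle, half_ratio]
  have hk : (k : ℝ) < (k' : ℝ) := by exact_mod_cast h
  have := ratio_lt_ratio hk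
  linarith

lemma ratio_bounds (a : ℝ) : -1 < a / (|a| + 1) ∧ a / (|a| + 1) < 1 := by
  have hpos : (0:ℝ) < |a| + 1 := by positivity
  constructor
  · rw [lt_div_iff₀ hpos]; nlinarith [neg_abs_le a]
  · rw [div_lt_iff₀ hpos]; nlinarith [le_abs_self a]

lemma tc_bounds {n : ℕ} (i : Fin n) (k : ℤ) :
    ((i : ℕ) : ℝ) < toCircle (Sum.inl (k, i) : MbarPt n) ∧
      toCircle (Sum.inl (k, i) : MbarPt n) < ((i : ℕ) : ℝ) + 1 := by
  simp only [toCircle, half_ratio]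
  obtain ⟨h1, h2⟩ := ratio_bounds ((k : ℤ) : ℝ)
  constructor <;> linarith

lemma crosses_of_order {n : ℕ} {x y z w : MbarPt n}
    (h1 : toCircle w < toCircle x) (h2 : toCircle x < toCircle z)
    (h3 : toCircle z < toCircle y) :
    Crosses s(x, y) s(z, w) ∧ Crosses s(z, w) s(x, y) := by
  refine ⟨⟨x, y, z, w, rfl, rfl, Or.inl ⟨h2, h3⟩, Or.inr (Or.inl ⟨h1, h2.trans h3⟩)⟩,
    ⟨z, w, y, x, rfl, Sym2.eq_swap, Or.inr (Or.inr ⟨h1.trans h2, h3⟩), Or.inl ⟨h1, h2⟩⟩⟩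

lemma mem_rclos {n : ℕ} (ℓ : Sym2 (MbarPt n)) (m : ℤ) : rotArc m ℓ ∈ RClos {ℓ} :=
  ⟨ℓ, rfl, m, rfl⟩

lemma rotArc_pair {n : ℕ} (m : ℤ) (x y : MbarPt n) :
    rotArc m s(x, y) = s(rotPt m x, rotPt m y) := Sym2.map_pair_eq _ _ _

lemma conn_of_acc {n : ℕ} (ℓ : Sym2 (MbarPt n)) (i : Fin n)
    (hmem : (Sum.inr i : MbarPt n) ∈ ℓ) : ConnectedArcs ({ℓ} : Set (Sym2 (MbarPt n))) := by
  intro p hp q hq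
  simp only [RClos, Set.mem_singleton_iff, Set.mem_setOf_eq] at hp hq
  obtain ⟨p', rfl, m, rfl⟩ := hp
  obtain ⟨q', rfl, m', rfl⟩ := hq
  have hmemrot : ∀ m : ℤ, (Sum.inr i : MbarPt n) ∈ rotArc m q' := fun m =>
    (Sym2.mem_map).2 ⟨Sum.inr i, hmem, rfl⟩
  by_cases h : rotArc m q' = rotArc m' q'
  · exact ⟨0, h⟩
  · exact ⟨1, rotArc m' q', mem_rclos q' m', Or.inr ⟨h, i, hmemrot m, hmemrot m'⟩, rfl⟩

lemma adj_step {n : ℕ} (ℓ : Sym2 (MbarPt n)) (k k' : ℤ) (i j : Fin n)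
    (hE : ℓ = s(Sum.inl (k, i), Sum.inl (k', j)))
    (hgap : ∀ m : ℤ, toCircle (Sum.inl (k - m, i) : MbarPt n) <
      toCircle (Sum.inl (k' - (m + 1), j) : MbarPt n)) (a : ℤ) :
    Adj (rotArc a ℓ) (rotArc (a + 1) ℓ) ∧ Adj (rotArc (a + 1) ℓ) (rotArc a ℓ) := by
  have e1 : rotArc a ℓ = s(Sum.inl (k - a, i), Sum.inl (k' - a, j)) := by
    rw [hE, rotArc_pair]; rfl
  have e2 : rotArc (a + 1) ℓ = s(Sum.inl (k' - (a + 1), j), Sum.inl (k - (a + 1), i)) := by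
    rw [hE, rotArc_pair, Sym2.eq_swap]; rfl
  have h1 : toCircle (Sum.inl (k - (a + 1), i) : MbarPt n) < toCircle (Sum.inl (k - a, i)) :=
    tc_mono i (by omega)
  have h3 : toCircle (Sum.inl (k' - (a + 1), j) : MbarPt n) < toCircle (Sum.inl (k' - a, j)) :=
    tc_mono j (by omega)
  obtain ⟨c1, c2⟩ := crosses_of_order h1 (hgap a) h3
  rw [e1, e2]
  exact ⟨Or.inl c1, Or.inl c2⟩

lemma chain_fwd {n : ℕ} (ℓ : Sym2 (MbarPt n)) (k k' : ℤ) (i j : Fin n)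
    (hE : ℓ = s(Sum.inl (k, i), Sum.inl (k', j)))
    (hgap : ∀ m : ℤ, toCircle (Sum.inl (k - m, i) : MbarPt n) <
      toCircle (Sum.inl (k' - (m + 1), j) : MbarPt n)) :
    ∀ (d : ℕ) (a : ℤ),
      AdjChain (RClos {ℓ}) d (rotArc a ℓ) (rotArc (a + d) ℓ) ∧
      AdjChain (RClos {ℓ}) d (rotArc (a + d) ℓ) (rotArc a ℓ) := by
  intro d
  induction d with
  | zero => intro a; simp [AdjChain]
  | succ d ih =>
    intro a
    have hcast : a + 1 + (d : ℤ) = a + ((d : ℕ) + 1 : ℕ) := by push_cast; ring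
    have hcast2 : a + (d : ℤ) + 1 = a + ((d : ℕ) + 1 : ℕ) := by push_cast; ring
    have f := (ih (a + 1)).1
    rw [hcast] at f
    have badj := (adj_step ℓ k k' i j hE hgap (a + d)).2
    rw [hcast2] at badj
    constructor
    · exact ⟨rotArc (a + 1) ℓ, mem_rclos ℓ _, (adj_step ℓ k k' i j hE hgap a).1, f⟩
    · exact ⟨rotArc (a + d) ℓ, mem_rclos ℓ _, badj, (ih a).2⟩

lemma conn_of_gap {n : ℕ} (ℓ : Sym2 (MbarPt n)) (k k' : ℤ) (i j : Fin n)
    (hE : ℓ = s(Sum.inl (k, i), Sum.inl (k', j)))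
    (hgap : ∀ m : ℤ, toCircle (Sum.inl (k - m, i) : MbarPt n) <
      toCircle (Sum.inl (k' - (m + 1), j) : MbarPt n)) :
    ConnectedArcs ({ℓ} : Set (Sym2 (MbarPt n))) := by
  intro p hp q hq
  simp only [RClos, Set.mem_singleton_iff, Set.mem_setOf_eq] at hp hq
  obtain ⟨p', rfl, m, rfl⟩ := hp
  obtain ⟨q', rfl, m', rfl⟩ := hq
  rcases le_total m m' with h | h
  · have hm : m + (((m' - m).toNat : ℕ) : ℤ) = m' := by omega
    have c := (chain_fwd q' k k' i j hE hgap (m' - m).toNat m).1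
    rw [hm] at c
    exact ⟨_, c⟩
  · have hm : m' + (((m - m').toNat : ℕ) : ℤ) = m := by omega
    have c := (chain_fwd q' k k' i j hE hgap (m - m').toNat m').2
    rw [hm] at c
    exact ⟨_, c⟩

lemma tc_gap_of_lt {n : ℕ} (K K' : ℤ) (I J : Fin n) (hIJ : (I : ℕ) < (J : ℕ)) (m : ℤ) :
    toCircle (Sum.inl (K - m, I) : MbarPt n) <
      toCircle (Sum.inl (K' - (m + 1), J) : MbarPt n) := by
  have h1 := (tc_bounds I (K - m)).2
  have h2 := (tc_bounds J (K' - (m + 1))).1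
  have h3 : ((I : ℕ) : ℝ) + 1 ≤ ((J : ℕ) : ℝ) := by exact_mod_cast hIJ
  linarith

end aux

/-- Proposition 3.8 of the paper: for every `n ≥ 1` and every arc `ℓ`
of `M̄ₙ`, the set `{ℓ}` is connected, i.e. the graph with vertex set
`R({ℓ}) = {ℓ⟦m⟧ : m ∈ ℤ}` and edge relation `~` is connected. Equivalently, every
indecomposable object of the Paquette–Yıldırım category `C̄ₙ` is homologically connected. -/
theorem every_arc_is_homologically_connected (n : ℕ) (hn : 1 ≤ n)
    (ℓ : Sym2 (MbarPt n)) (hℓ : IsArc ℓ) :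
    ConnectedArcs ({ℓ} : Set (Sym2 (MbarPt n))) := by
  induction ℓ using Sym2.ind with
  | _ u v =>
  obtain ⟨hd, hcons⟩ := hℓ
  rcases u with ⟨k, i⟩ | i
  · rcases v with ⟨k', j⟩ | j
    · by_cases hij : i = j
      · subst hij
        have hkk' : k ≠ k' := by
          intro h; exact hd (by rw [h]; exact Sym2.mk_isDiag_iff.2 rfl)
        have h1 : k' ≠ k + 1 := fun h => hcons k i (by rw [h])
        have h2 : k ≠ k' + 1 := fun h => hcons k' i (by rw [h]; exact Sym2.eq_swap)
        rcases (by omega : k + 2 ≤ k' ∨ k' + 2 ≤ k) with h | h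
        · exact conn_of_gap _ k k' i i rfl (fun m => tc_mono i (by omega))
        · exact conn_of_gap _ k' k i i Sym2.eq_swap (fun m => tc_mono i (by omega))
      · have hv : (i : ℕ) ≠ (j : ℕ) := fun h => hij (Fin.ext h)
        rcases lt_or_gt_of_ne hv with h | h
        · exact conn_of_gap _ k k' i j rfl (tc_gap_of_lt k k' i j h)
        · exact conn_of_gap _ k' k j i Sym2.eq_swap (tc_gap_of_lt k' k j i h)
    · exact conn_of_acc _ j (Sym2.mem_mk_right _ _)
  · exact conn_of_acc _ i (Sym2.mem_mk_left _ _)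
end
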